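/- arXiv:1207.0244 — 6 statements merged into one kernel-verified Lean document; each statement's English description precedes it below -/
import Mathlib

section
/- Suppose the vanishing ideal I(X) of the degenerate projective torus X is a complete intersection generated by binomials h_1, …, h_{n−1}. Then the toric ideal P is a complete intersection generated by binomials g_1, …, g_{n−1} such that h_i = g_i(t_1^{d_1}, …, t_n^{d_n}) for i = 1, …, n−1 (i.e., h_i is obtained from g_i by substituting t_j^{d_j} for t_j). -/
open MvPolynomial

namespace CIAux
set_option linter.unusedSectionVars false
variable {K : Type} [Field K] {n : ℕ}

noncomputable def F (a : Fin n → ℕ) : Fin n →₀ ℕ := Finsupp.equivFunOnFinite.symm a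

@[simp] lemma F_apply (a : Fin n → ℕ) (j : Fin n) : F a j = a j := rfl

lemma mon_eq (a : Fin n → ℕ) :
    (∏ j, (X j : MvPolynomial (Fin n) K) ^ a j) = monomial (F a) 1 := by
  rw [← prod_X_pow_eq_monomial]
  rw [← Finset.prod_subset (Finset.subset_univ ((F a).support))]
  · exact Finset.prod_congr rfl fun j _ => by simp [F]
  · intro x _ hx
    simp only [Finsupp.notMem_support_iff] at hx
    rw [show (F a) x = a x from rfl] at hx
    rw [hx, pow_zero]

lemma F_degree (a : Fin n → ℕ) : (F a).degree = ∑ j, a j := by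
  rw [Finsupp.degree, ← Finset.sum_subset (Finset.subset_univ ((F a).support))]
  · exact Finset.sum_congr rfl fun j _ => rfl
  · intro x _ hx
    simpa using hx

lemma F_add (a b : Fin n → ℕ) : F (fun j => a j + b j) = F a + F b := by
  ext j; simp

lemma eval_mon (p : Fin n → K) (a : Fin n → ℕ) :
    eval p (∏ j, (X j : MvPolynomial (Fin n) K) ^ a j) = ∏ j, p j ^ a j := by
  simp

lemma mon_homog (a : Fin n → ℕ) :
    ((∏ j, (X j : MvPolynomial (Fin n) K) ^ a j)).IsHomogeneous (∑ j, a j) := by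
  rw [mon_eq]
  exact isHomogeneous_monomial _ (F_degree a)


lemma eval_mon_units (v : Fin n → ℕ) (x : Fin n → Kˣ) (a : Fin n → ℕ) :
    eval (fun i => (x i : K) ^ v i) (∏ j, (X j : MvPolynomial (Fin n) K) ^ a j)
      = ((∏ j, (x j ^ v j) ^ a j : Kˣ) : K) := by
  simp

lemma unit_pow_eq {β : Kˣ} (hβ : ∀ x : Kˣ, x ∈ Subgroup.zpowers β) (v d : Fin n → ℕ)
    (hd : ∀ i, d i = orderOf (β ^ v i)) (x : Fin n → Kˣ) (j : Fin n) {t : ℤ}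
    (ht : (d j : ℤ) ∣ t) : (x j ^ v j : Kˣ) ^ t = 1 := by
  obtain ⟨k, hk⟩ := Subgroup.mem_zpowers_iff.mp (hβ (x j))
  obtain ⟨c, hc⟩ := ht
  rw [← hk]
  rw [← zpow_natCast (β ^ k) (v j), ← zpow_mul, ← zpow_mul]
  have h1 : k * (↑(v j) * t) = ((v j * d j : ℕ) : ℤ) * (c * k) := by rw [hc]; push_cast; ring
  rw [h1, zpow_mul, zpow_natCast, pow_mul, hd j, pow_orderOf_eq_one, one_zpow]

lemma vanish_of_dvd {β : Kˣ} (hβ : ∀ x : Kˣ, x ∈ Subgroup.zpowers β) (v d : Fin n → ℕ)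
    (hd : ∀ i, d i = orderOf (β ^ v i)) (a b : Fin n → ℕ)
    (hdvd : ∀ j, (d j : ℤ) ∣ (a j : ℤ) - (b j : ℤ)) (x : Fin n → Kˣ) :
    eval (fun i => (x i : K) ^ v i)
      ((∏ j, (X j : MvPolynomial (Fin n) K) ^ a j) - ∏ j, X j ^ b j) = 0 := by
  rw [map_sub, eval_mon_units, eval_mon_units, sub_eq_zero]
  norm_cast
  apply Finset.prod_congr rfl
  intro j _
  have h1 := unit_pow_eq hβ v d hd x j (hdvd j)
  rw [zpow_sub, mul_inv_eq_one] at h1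
  rw [← zpow_natCast (x j ^ v j) (a j), ← zpow_natCast (x j ^ v j) (b j)]
  exact h1

lemma dvd_of_vanish {β : Kˣ} (v d : Fin n → ℕ)
    (hd : ∀ i, d i = orderOf (β ^ v i)) (a b : Fin n → ℕ)
    (hvan : ∀ x : Fin n → Kˣ, eval (fun i => (x i : K) ^ v i)
      ((∏ j, (X j : MvPolynomial (Fin n) K) ^ a j) - ∏ j, X j ^ b j) = 0) (j : Fin n) :
    (d j : ℤ) ∣ (a j : ℤ) - (b j : ℤ) := by
  classical
  set x : Fin n → Kˣ := fun l => if l = j then β else 1 with hx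
  have h0 := hvan x
  rw [map_sub, eval_mon_units, eval_mon_units, sub_eq_zero] at h0
  have h1 : (∏ l, (x l ^ v l) ^ a l : Kˣ) = (∏ l, (x l ^ v l) ^ b l : Kˣ) :=
    Units.ext h0
  have h2 : ∀ c : Fin n → ℕ, (∏ l, (x l ^ v l) ^ c l : Kˣ) = (β ^ v j) ^ c j := by
    intro c
    rw [Finset.prod_eq_single j]
    · simp [hx]
    · intro l _ hl; simp [hx, hl]
    · simp
  rw [h2, h2] at h1
  rw [hd j, orderOf_dvd_iff_zpow_eq_one, zpow_sub, mul_inv_eq_one, zpow_natCast, zpow_natCast]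
  exact h1


-- component of product with homogeneous polynomial
lemma comp_mul (p h' : MvPolynomial (Fin n) K) {e : ℕ} (hh : h'.IsHomogeneous e) (δ : ℕ) :
    homogeneousComponent δ (p * h') =
      if e ≤ δ then homogeneousComponent (δ - e) p * h' else 0 := by
  classical
  conv_lhs => rw [← sum_homogeneousComponent p, Finset.sum_mul, map_sum]
  have hterm : ∀ i : ℕ, homogeneousComponent δ (homogeneousComponent i p * h') =
      if δ = i + e then homogeneousComponent i p * h' else 0 := by
    intro i
    apply homogeneousComponent_of_mem
    rw [mem_homogeneousSubmodule]
    exact (homogeneousComponent_isHomogeneous i p).mul hh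
  simp_rw [hterm]
  by_cases he : e ≤ δ
  · rw [if_pos he, Finset.sum_eq_single (δ - e)]
    · rw [if_pos (by omega)]
    · intro i _ hi
      rw [if_neg (by omega)]
    · intro hmem
      rw [if_pos (by omega)]
      rw [homogeneousComponent_eq_zero _ p (by simp at hmem; omega), zero_mul]
  · rw [if_neg he, Finset.sum_eq_zero]
    intro i _
    rw [if_neg (by omega)]

-- components of ideal members, for span of homogeneous sets
lemma comp_mem {T : Set (MvPolynomial (Fin n) K)}
    (hT : ∀ s ∈ T, ∃ e, s.IsHomogeneous e) {f : MvPolynomial (Fin n) K}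
    (hf : f ∈ Ideal.span T) (δ : ℕ) : homogeneousComponent δ f ∈ Ideal.span T := by
  classical
  obtain ⟨c, hsupp, hsum⟩ := Submodule.mem_span_set.mp hf
  rw [← hsum, Finsupp.sum, map_sum]
  apply Ideal.sum_mem
  intro s hs
  obtain ⟨e, he⟩ := hT s (hsupp hs)
  rw [smul_eq_mul, comp_mul _ _ he]
  split
  · exact Ideal.mul_mem_left _ _ (Ideal.subset_span (hsupp hs))
  · exact Ideal.zero_mem _

variable [Fintype K]

lemma prod_T {ι : Type*} (s : Finset ι) (t : ι → ℤ) :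
    (∏ i ∈ s, LaurentPolynomial.T (t i) : LaurentPolynomial K) =
      LaurentPolynomial.T (∑ i ∈ s, t i) := by
  classical
  induction s using Finset.induction_on with
  | empty => simp
  | insert _ _ hx ih =>
      rw [Finset.prod_insert hx, Finset.sum_insert hx, ih, LaurentPolynomial.T_add]

lemma aeval_mon_T (e : Fin n → ℤ) (a : Fin n → ℕ) :
    aeval (fun l => LaurentPolynomial.T (e l) : Fin n → LaurentPolynomial K)
        (∏ j, (X j : MvPolynomial (Fin n) K) ^ a j) =
      LaurentPolynomial.T (∑ l, (a l : ℤ) * e l) := by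
  rw [map_prod, ← prod_T]
  apply Finset.prod_congr rfl
  intro l _
  rw [map_pow, aeval_X, LaurentPolynomial.T_pow]

lemma lemA (hn : 2 ≤ n) (v : Fin n → ℕ)
    (IX : Ideal (MvPolynomial (Fin n) K))
    (hIX : IX = Ideal.span {f : MvPolynomial (Fin n) K |
      (∃ e, f.IsHomogeneous e) ∧
      ∀ x : Fin n → Kˣ, eval (fun i => (x i : K) ^ v i) f = 0})
    (h : Fin (n - 1) → MvPolynomial (Fin n) K)
    (A B : Fin (n - 1) → Fin n → ℕ)
    (hAB : ∀ k, h k = (∏ j, X j ^ A k j) - ∏ j, X j ^ B k j)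
    (i0 : Fin (n - 1)) :
    ¬ IX ≤ Ideal.span (h '' {k | k ≠ i0}) := by
  classical
  intro hle
  -- rational difference vectors
  set mv : Fin (n - 1) → (Fin n → ℚ) := fun k l => (A k l : ℚ) - B k l with hmv
  set V : Submodule ℚ (Fin n → ℚ) := Submodule.span ℚ (mv '' {k | k ≠ i0}) with hV
  -- index embeddings
  have hn1 : n - 1 < n := by omega
  set lst : Fin n := ⟨n - 1, hn1⟩ with hlst
  set J : Fin (n - 1) → Fin n := fun j => ⟨j.1, by omega⟩ with hJ
  have hJne : ∀ j, J j ≠ lst := by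
    intro j hj
    have := congrArg Fin.val hj
    simp only [hJ, hlst] at this
    omega
  set μ : Fin (n - 1) → (Fin n → ℚ) := fun j => Pi.single (J j) 1 - Pi.single lst 1 with hμ
  -- linear independence of μ
  have hμind : LinearIndependent ℚ μ := by
    apply LinearIndependent.of_comp (LinearMap.funLeft ℚ ℚ J)
    have hcomp : (LinearMap.funLeft ℚ ℚ J) ∘ μ = fun j => Pi.single j (1 : ℚ) := by
      funext j l
      simp only [Function.comp_apply, LinearMap.funLeft_apply, hμ, Pi.sub_apply]
      rw [Pi.single_apply, Pi.single_apply, Pi.single_apply]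
      have h1 : J l = J j ↔ l = j := by
        constructor
        · intro hh; exact Fin.ext (show l.1 = j.1 by simpa [hJ] using congrArg Fin.val hh)
        · intro hh; rw [hh]
      have h2 : J l ≠ lst := hJne l
      rw [if_neg h2, sub_zero]
      simp [h1]
    rw [hcomp]
    have := (Pi.basisFun ℚ (Fin (n - 1))).linearIndependent
    convert this using 1
    funext j
    simp [Pi.basisFun_apply]
  -- some μ j is not in V
  have hex : ∃ j, μ j ∉ V := by
    by_contra hall
    push_neg at hall
    have h1 : Submodule.span ℚ (Set.range μ) ≤ V :=
      Submodule.span_le.mpr (by rintro _ ⟨j, rfl⟩; exact hall j)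
    have h2 : Module.finrank ℚ (Submodule.span ℚ (Set.range μ)) = n - 1 := by
      rw [finrank_span_eq_card hμind]; simp
    have himg : mv '' {k | k ≠ i0} = ↑((Finset.univ.erase i0).image mv) := by
      ext y
      simp only [Set.mem_image, Finset.coe_image, Finset.mem_coe, Finset.mem_image,
        Finset.mem_erase, Set.mem_setOf_eq, Finset.mem_univ, and_true]
    have h3 : Module.finrank ℚ V ≤ n - 2 := by
      rw [hV, himg]
      refine le_trans (finrank_span_finset_le_card _) ?_
      refine le_trans (Finset.card_image_le) ?_
      rw [Finset.card_erase_of_mem (Finset.mem_univ _)]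
      simp only [Finset.card_univ, Fintype.card_fin]
      omega
    have h4 := Submodule.finrank_mono h1
    omega
  obtain ⟨j, hj⟩ := hex
  -- dual functional
  obtain ⟨f, hf0, hfV⟩ := Submodule.exists_dual_map_eq_bot_of_notMem hj inferInstance
  have hfzero : ∀ y ∈ V, f y = 0 := by
    intro y hy
    have : f y ∈ V.map f := ⟨y, hy, rfl⟩
    rw [hfV] at this
    exact (Submodule.mem_bot ℚ).mp this
  set c : Fin n → ℚ := fun l => f (Pi.single l 1) with hc
  have hflin : ∀ u : Fin n → ℚ, f u = ∑ l, u l * c l := by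
    intro u
    conv_lhs => rw [pi_eq_sum_univ u, map_sum]
    apply Finset.sum_congr rfl
    intro l _
    rw [map_smul, smul_eq_mul]
    congr 1
    congr 1
    funext j'
    rw [Pi.single_apply]
    exact if_congr eq_comm rfl rfl
  set N : ℕ := ∏ l, (c l).den with hNdef
  have hN0 : (N : ℚ) ≠ 0 := by
    rw [hNdef]
    push_cast
    exact Finset.prod_ne_zero_iff.mpr fun l _ => by exact_mod_cast (c l).den_nz
  set e : Fin n → ℤ := fun l => (c l).num * ((N : ℤ) / ((c l).den : ℤ)) with he
  have heq : ∀ l, ((e l : ℚ)) = N * c l := by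
    intro l
    obtain ⟨t, ht⟩ : ((c l).den : ℤ) ∣ (N : ℤ) :=
      Int.natCast_dvd_natCast.mpr (Finset.dvd_prod_of_mem _ (Finset.mem_univ l))
    have hden : ((c l).den : ℤ) ≠ 0 := by exact_mod_cast (c l).den_nz
    rw [he]
    simp only
    rw [ht, Int.mul_ediv_cancel_left _ hden]
    have hnum : ((c l).num : ℚ) = c l * ((c l).den : ℚ) := by
      have hden' : (((c l).den : ℚ)) ≠ 0 := by exact_mod_cast (c l).den_nz
      have h' := Rat.num_div_den (c l)
      rw [div_eq_iff hden'] at h'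
      exact h'
    push_cast
    rw [hnum]
    have htq : ((N : ℚ)) = ((c l).den : ℚ) * (t : ℚ) := by exact_mod_cast ht
    rw [htq]
    ring
  have key : ∀ u : Fin n → ℤ, ((∑ l, u l * e l : ℤ) : ℚ) = N * f (fun l => (u l : ℚ)) := by
    intro u
    rw [hflin]
    push_cast
    simp_rw [heq]
    rw [Finset.mul_sum]
    apply Finset.sum_congr rfl
    intro l _
    ring
  -- the functional kills the difference vectors
  have hker0 : ∀ k, k ≠ i0 → ∑ l, ((A k l : ℤ) - B k l) * e l = 0 := by
    intro k hk
    have hmem : mv k ∈ V := Submodule.subset_span ⟨k, hk, rfl⟩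
    have h1 := key (fun l => (A k l : ℤ) - B k l)
    have h2 : (fun l => (((A k l : ℤ) - B k l : ℤ) : ℚ)) = mv k := by
      funext l; push_cast; rfl
    rw [h2, hfzero _ hmem, mul_zero] at h1
    exact_mod_cast h1
  -- the nonzero value
  set M : ℕ := Fintype.card K - 1 with hM
  have hM1 : 1 ≤ M := by
    have := Fintype.one_lt_card (α := K)
    omega
  have hs : (M : ℤ) * (e (J j) - e lst) ≠ 0 := by
    have h1 : ((e (J j) : ℚ)) - e lst = N * f (μ j) := by
      rw [heq, heq, hμ]
      simp only [map_sub]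
      rw [show f (Pi.single (J j) 1) = c (J j) from rfl, show f (Pi.single lst 1) = c lst from rfl]
      ring
    intro hcon
    apply hf0
    have h2 : ((M : ℚ)) * ((e (J j) : ℚ) - e lst) = 0 := by exact_mod_cast hcon
    rw [h1] at h2
    have hMq : (M : ℚ) ≠ 0 := by positivity
    have := mul_eq_zero.mp h2
    rcases this with h | h
    · exact absurd h hMq
    · rcases mul_eq_zero.mp h with h' | h'
      · exact absurd h' hN0
      · exact h'
  -- Laurent evaluation
  set z : Fin n → LaurentPolynomial K := fun l => LaurentPolynomial.T (e l) with hz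
  have hkerz : ∀ k, k ≠ i0 → aeval z (h k) = 0 := by
    intro k hk
    rw [hAB k, map_sub, hz, aeval_mon_T, aeval_mon_T, sub_eq_zero]
    congr 1
    rw [← sub_eq_zero, ← Finset.sum_sub_distrib]
    simp_rw [← sub_mul]
    exact hker0 k hk
  have hspanker : Ideal.span (h '' {k | k ≠ i0}) ≤
      RingHom.ker (aeval z : MvPolynomial (Fin n) K →ₐ[K] LaurentPolynomial K) := by
    rw [Ideal.span_le]
    rintro _ ⟨k, hk, rfl⟩
    exact hkerz k hk
  -- the witness binomial
  set wpoly : MvPolynomial (Fin n) K := X (J j) ^ M - X lst ^ M with hw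
  have hwIX : wpoly ∈ IX := by
    rw [hIX]
    apply Ideal.subset_span
    refine ⟨⟨M, ?_⟩, ?_⟩
    · exact (isHomogeneous_X_pow (J j) M).sub (isHomogeneous_X_pow lst M)
    · intro x
      rw [hw, map_sub, map_pow, map_pow, eval_X, eval_X]
      have hone : ∀ i : Fin n, ((x i : K) ^ v i) ^ M = 1 := by
        intro i
        rw [pow_right_comm, hM, FiniteField.pow_card_sub_one_eq_one _ (Units.ne_zero (x i)),
          one_pow]
      rw [hone, hone, sub_self]
  have hzero := hspanker (hle hwIX)
  rw [RingHom.mem_ker] at hzero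
  rw [hw, map_sub, map_pow, map_pow, aeval_X, aeval_X, hz] at hzero
  simp only [LaurentPolynomial.T_pow] at hzero
  rw [sub_eq_zero] at hzero
  have hzero' : Finsupp.single ((M : ℤ) * e (J j)) (1 : K) =
      Finsupp.single ((M : ℤ) * e lst) 1 := congrArg AddMonoidAlgebra.coeff hzero
  rcases (Finsupp.single_eq_single_iff _ _ _ _).mp hzero' with ⟨h1, -⟩ | ⟨h1, -⟩
  · exact hs (by rw [mul_sub, h1, sub_self])
  · exact one_ne_zero h1


-- ### Part 5 : the retraction rho and the substitution psi

noncomputable def psi (d : Fin n → ℕ) : MvPolynomial (Fin n) K →ₐ[K] MvPolynomial (Fin n) K :=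
  aeval (fun j => X j ^ d j)

open Classical in
noncomputable def rho (d : Fin n → ℕ) :
    MvPolynomial (Fin n) K →ₗ[K] MvPolynomial (Fin n) K :=
  (Finsupp.lsum K fun (A : Fin n →₀ ℕ) =>
    if ∀ j, d j ∣ A j then
      (monomial (F (fun j => A j / d j)) : K →ₗ[K] MvPolynomial (Fin n) K) else 0) ∘ₗ
    (AddMonoidAlgebra.coeffLinearEquiv K).toLinearMap

open Classical in
lemma rho_monomial (d : Fin n → ℕ) (A : Fin n →₀ ℕ) (r : K) :
    rho d (monomial A r) =
      if ∀ j, d j ∣ A j then monomial (F (fun j => A j / d j)) r else 0 := by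
  rw [← single_eq_monomial]
  rw [show (rho d) (AddMonoidAlgebra.single A r) = _ from Finsupp.lsum_single K _ _ _]
  split <;> rfl

lemma psi_monomial (d : Fin n → ℕ) (B : Fin n →₀ ℕ) (r : K) :
    psi d (monomial B r) = monomial (F (fun j => d j * B j)) r := by
  rw [psi, aeval_monomial, Finsupp.prod]
  have h1 : (∏ j ∈ B.support, ((X j : MvPolynomial (Fin n) K) ^ d j) ^ B j)
      = ∏ j, ((X j : MvPolynomial (Fin n) K) ^ d j) ^ B j := by
    apply Finset.prod_subset (Finset.subset_univ _)
    intro x _ hx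
    rw [Finsupp.notMem_support_iff] at hx
    rw [hx, pow_zero]
  rw [h1]
  simp_rw [← pow_mul]
  rw [mon_eq (fun j => d j * B j), algebraMap_eq, C_mul_monomial, mul_one]

lemma rho_psi_mul (d : Fin n → ℕ) (hd : ∀ j, 0 < d j) (u w : MvPolynomial (Fin n) K) :
    rho d (psi d u * w) = u * rho d w := by
  classical
  induction u using MvPolynomial.induction_on' with
  | add p q hp hq => rw [map_add, add_mul, map_add, hp, hq, add_mul]
  | monomial B r =>
    induction w using MvPolynomial.induction_on' with
    | add p q hp hq => rw [mul_add, map_add, hp, hq, map_add, mul_add]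
    | monomial A s =>
      rw [psi_monomial, monomial_mul, rho_monomial, rho_monomial]
      have hadd : ∀ l, (F (fun j' => d j' * B j') + A) l = d l * B l + A l := by
        intro l
        rw [Finsupp.add_apply, F_apply]
      have hcond : (∀ l, d l ∣ (F (fun j' => d j' * B j') + A) l) ↔ (∀ l, d l ∣ A l) := by
        apply forall_congr'
        intro l
        rw [hadd l]
        exact Nat.dvd_add_right (Dvd.intro _ rfl)
      by_cases hA : ∀ l, d l ∣ A l
      · rw [if_pos (hcond.mpr hA), if_pos hA, monomial_mul]
        have harg : (F fun j => ((F fun j' => d j' * B j') + A) j / d j)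
            = B + F fun j => A j / d j := by
          apply Finsupp.ext
          intro l
          rw [F_apply, hadd l, Nat.mul_add_div (hd l), Finsupp.add_apply, F_apply]
        rw [harg]
      · rw [if_neg (fun hc => hA (hcond.mp hc)), if_neg hA, mul_zero]

lemma rho_one (d : Fin n → ℕ) : rho d (1 : MvPolynomial (Fin n) K) = 1 := by
  have h1 : (1 : MvPolynomial (Fin n) K) = monomial 0 1 := by
    rw [monomial_zero']; exact (C_1).symm
  rw [h1, rho_monomial]
  have hc : ∀ j, d j ∣ (0 : Fin n →₀ ℕ) j := fun j => by
    rw [Finsupp.coe_zero, Pi.zero_apply]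
    exact dvd_zero _
  have h2 : F (fun j => (0 : Fin n →₀ ℕ) j / d j) = 0 := by
    apply Finsupp.ext
    intro l
    rw [F_apply]
    simp
  rw [if_pos hc, h2]

lemma rho_psi (d : Fin n → ℕ) (hd : ∀ j, 0 < d j) (u : MvPolynomial (Fin n) K) :
    rho d (psi d u) = u := by
  calc rho d (psi d u) = rho d (psi d u * 1) := by rw [mul_one]
  _ = u * rho d 1 := rho_psi_mul d hd u 1
  _ = u := by rw [rho_one, mul_one]

-- ### Part 6 : weighted homogeneous components and the toric substitution

-- weight of a monomial as a sum over all variables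
lemma weight_eq (d : Fin n → ℕ) (A : Fin n →₀ ℕ) :
    Finsupp.weight d A = ∑ j, A j * d j := by
  rw [Finsupp.weight_apply, Finsupp.sum_fintype _ _ (fun i => zero_smul ℕ (d i))]
  exact Finset.sum_congr rfl fun j _ => smul_eq_mul _ _

lemma aeval_Xd_monomial (d : Fin n → ℕ) (A : Fin n →₀ ℕ) (r : K) :
    aeval (fun i => (Polynomial.X : Polynomial K) ^ d i) (monomial A r) =
      Polynomial.C r * Polynomial.X ^ (Finsupp.weight d A : ℕ) := by
  rw [aeval_monomial, Finsupp.prod]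
  have h1 : (∏ j ∈ A.support, ((Polynomial.X : Polynomial K) ^ d j) ^ A j)
      = ∏ j, ((Polynomial.X : Polynomial K) ^ d j) ^ A j := by
    apply Finset.prod_subset (Finset.subset_univ _)
    intro x _ hx
    rw [Finsupp.notMem_support_iff] at hx
    rw [hx, pow_zero]
  rw [h1]
  simp_rw [← pow_mul]
  rw [Finset.prod_pow_eq_pow_sum, Polynomial.algebraMap_eq, weight_eq]
  congr 2
  exact Finset.sum_congr rfl fun j _ => mul_comm _ _

-- weighted components of elements of the toric kernel stay in the kernel
lemma wcomp_ker (d : Fin n → ℕ) (f : MvPolynomial (Fin n) K)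
    (hf : aeval (fun i => (Polynomial.X : Polynomial K) ^ d i) f = 0) (e : ℕ) :
    aeval (fun i => (Polynomial.X : Polynomial K) ^ d i)
      (weightedHomogeneousComponent d e f) = 0 := by
  classical
  have hco : ∀ p : MvPolynomial (Fin n) K,
      aeval (fun i => (Polynomial.X : Polynomial K) ^ d i) p
        = ∑ A ∈ p.support, Polynomial.C (coeff A p) * Polynomial.X ^ (Finsupp.weight d A : ℕ) := by
    intro p
    conv_lhs => rw [as_sum p, map_sum]
    exact Finset.sum_congr rfl fun A _ => aeval_Xd_monomial d A _
  have h1 : (∑ A ∈ f.support with (Finsupp.weight d A : ℕ) = e, coeff A f) = 0 := by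
    have h2 : (∑ A ∈ f.support with (Finsupp.weight d A : ℕ) = e, coeff A f)
        = Polynomial.coeff (aeval (fun i => (Polynomial.X : Polynomial K) ^ d i) f) e := by
      rw [hco f, Polynomial.finset_sum_coeff]
      rw [Finset.sum_filter]
      apply Finset.sum_congr rfl
      intro A _
      rw [Polynomial.coeff_C_mul, Polynomial.coeff_X_pow]
      by_cases hwe : (Finsupp.weight d A : ℕ) = e
      · rw [if_pos hwe, if_pos hwe.symm, mul_one]
      · rw [if_neg hwe, if_neg (fun hh => hwe hh.symm), mul_zero]
    rw [h2, hf, Polynomial.coeff_zero]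
  rw [weightedHomogeneousComponent_apply, map_sum]
  have h3 : ∀ A ∈ f.support.filter (fun A => Finsupp.weight d A = e),
      aeval (fun i => (Polynomial.X : Polynomial K) ^ d i) (monomial A (coeff A f))
        = Polynomial.C (coeff A f) * Polynomial.X ^ e := by
    intro A hA
    rw [aeval_Xd_monomial, (Finset.mem_filter.mp hA).2]
  rw [Finset.sum_congr rfl h3, ← Finset.sum_mul, ← map_sum]
  have h4 : (∑ A ∈ f.support with Finsupp.weight d A = e, coeff A f) = 0 := h1
  rw [h4, map_zero, zero_mul]

-- psi of a weighted homogeneous polynomial is homogeneous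
lemma psi_wcomp_homog (d : Fin n → ℕ) (f : MvPolynomial (Fin n) K) (e : ℕ)
    (hf : f.IsWeightedHomogeneous d e) : (psi d f).IsHomogeneous e := by
  have hsum : psi d f = ∑ A ∈ f.support, monomial (F fun j => d j * A j) (coeff A f) := by
    conv_lhs => rw [as_sum f]
    rw [map_sum]
    exact Finset.sum_congr rfl fun A _ => psi_monomial d A _
  rw [← mem_homogeneousSubmodule, hsum]
  apply Submodule.sum_mem
  intro A hA
  rw [mem_homogeneousSubmodule]
  apply isHomogeneous_monomial
  rw [F_degree]
  have hw := hf (mem_support_iff.mp hA)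
  rw [weight_eq] at hw
  rw [← hw]
  exact Finset.sum_congr rfl fun j _ => mul_comm _ _

-- evaluation of psi at a point
lemma eval_psi (d : Fin n → ℕ) (p : Fin n → K) (f : MvPolynomial (Fin n) K) :
    eval p (psi d f) = eval (fun j => p j ^ d j) f := by
  rw [psi]
  have h2 := congrFun (congrArg (DFunLike.coe)
    (comp_aeval (f := fun j => (X j : MvPolynomial (Fin n) K) ^ d j)
      (φ := (aeval p : MvPolynomial (Fin n) K →ₐ[K] K)))) f
  simp only [AlgHom.comp_apply] at h2
  have h3 : (fun i => (aeval p) ((X i : MvPolynomial (Fin n) K) ^ d i))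
      = fun j => p j ^ d j := by
    funext i
    rw [map_pow, aeval_X]
  rw [h3] at h2
  simpa only [← coe_aeval_eq_eval, RingHom.coe_coe] using h2

-- evaluation at the all-ones point through the toric kernel
lemma eval_one_of_ker (d : Fin n → ℕ) (f : MvPolynomial (Fin n) K)
    (hf : aeval (fun i => (Polynomial.X : Polynomial K) ^ d i) f = 0) :
    eval (fun _ => (1 : K)) f = 0 := by
  have h2 := congrFun (congrArg (DFunLike.coe)
    (comp_aeval (f := fun i => (Polynomial.X : Polynomial K) ^ d i)
      (φ := (Polynomial.aeval (1 : K) : Polynomial K →ₐ[K] K)))) f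
  simp only [AlgHom.comp_apply] at h2
  rw [hf, map_zero] at h2
  have h3 : (fun i => (Polynomial.aeval (1 : K)) ((Polynomial.X : Polynomial K) ^ d i))
      = fun _ => (1 : K) := by
    funext i
    rw [map_pow, Polynomial.aeval_X, one_pow]
  rw [h3] at h2
  simpa only [← coe_aeval_eq_eval, RingHom.coe_coe] using h2.symm

end CIAux

open CIAux in
/-- **Theorem (a).** Let `K = 𝔽_q` be a finite field, `β` a generator of `Kˣ`,
`v : Fin n → ℕ` positive integers, `d i = orderOf (β ^ v i)`.  Let `IX` be the vanishing
ideal of the degenerate projective torus parameterized by `x_i ^ v_i` (the ideal generated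
by the homogeneous polynomials vanishing at all points of the torus), and let `P` be the
toric ideal, i.e. the kernel of `t_i ↦ y ^ d i`.  If `IX` is a complete intersection
generated by binomials `h 0, …, h (n-2)`, then `P` is a complete intersection generated by
binomials `g 0, …, g (n-2)` with `h i = g i (t_1 ^ d 1, …, t_n ^ d n)` for all `i`. -/
theorem vanishing_ideal_ci_implies_toric_ci
    (K : Type) [Field K] [Fintype K] (n : ℕ) (hn : 2 ≤ n)
    (v : Fin n → ℕ) (hv : ∀ i, 0 < v i)
    (β : Kˣ) (hβ : ∀ x : Kˣ, x ∈ Subgroup.zpowers β)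
    (d : Fin n → ℕ) (hd : ∀ i, d i = orderOf (β ^ v i))
    (IX : Ideal (MvPolynomial (Fin n) K))
    (hIX : IX = Ideal.span {f : MvPolynomial (Fin n) K |
      (∃ e, f.IsHomogeneous e) ∧
      ∀ x : Fin n → Kˣ, eval (fun i => (x i : K) ^ v i) f = 0})
    (P : Ideal (MvPolynomial (Fin n) K))
    (hP : P = RingHom.ker (aeval (fun i : Fin n => (Polynomial.X : Polynomial K) ^ d i) :
      MvPolynomial (Fin n) K →ₐ[K] Polynomial K))
    (h : Fin (n - 1) → MvPolynomial (Fin n) K)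
    (hbin : ∀ i, ∃ a b : Fin n → ℕ,
      h i = (∏ j, X j ^ a j) - ∏ j, X j ^ b j)
    (hgen : IX = Ideal.span (Set.range h)) :
    ∃ g : Fin (n - 1) → MvPolynomial (Fin n) K,
      (∀ i, ∃ a b : Fin n → ℕ,
        g i = (∏ j, X j ^ a j) - ∏ j, X j ^ b j) ∧
      P = Ideal.span (Set.range g) ∧
      ∀ i, h i = aeval (fun j : Fin n => (X j : MvPolynomial (Fin n) K) ^ d j) (g i) := by
  classical
  set T : Set (MvPolynomial (Fin n) K) := {f : MvPolynomial (Fin n) K |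
      (∃ e, f.IsHomogeneous e) ∧
      ∀ x : Fin n → Kˣ, eval (fun i => (x i : K) ^ v i) f = 0} with hTdef
  have hd1 : ∀ j, 0 < d j := fun j => by rw [hd]; exact orderOf_pos _
  -- everything in IX vanishes on the torus
  have hvan : ∀ f ∈ IX, ∀ x : Fin n → Kˣ, eval (fun i => (x i : K) ^ v i) f = 0 := by
    intro f hf x
    rw [hIX] at hf
    have hle : Ideal.span T ≤ RingHom.ker (eval (fun i => ((x i : K)) ^ v i)) :=
      Ideal.span_le.mpr (fun s hs => hs.2 x)
    exact RingHom.mem_ker.mp (hle hf)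
  have hhIX : ∀ k, h k ∈ IX := fun k => by rw [hgen]; exact Ideal.subset_span ⟨k, rfl⟩
  -- the key obstruction from lemA
  have hlemA : ∀ i0, ¬ IX ≤ Ideal.span (h '' {k | k ≠ i0}) := by
    intro i0
    choose A B hAB using hbin
    exact lemA hn v IX hIX h A B hAB i0
  -- Phase 1: representations with equal degrees
  have hrep1 : ∀ i, ∃ a b : Fin n → ℕ,
      h i = (∏ j, X j ^ a j) - ∏ j, X j ^ b j ∧ a ≠ b ∧
      (∑ j, a j = ∑ j, b j) ∧ (∀ j, (d j : ℤ) ∣ (a j : ℤ) - b j) := by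
    intro i
    obtain ⟨a, b, hab0⟩ := hbin i
    have habne : a ≠ b := by
      intro habeq
      apply hlemA i
      rw [hgen]
      apply Ideal.span_le.mpr
      rintro _ ⟨k, rfl⟩
      by_cases hki : k = i
      · rw [hki, hab0, habeq, sub_self]
        exact Ideal.zero_mem _
      · exact Ideal.subset_span ⟨k, hki, rfl⟩
    have hdvdiff : ∀ j, (d j : ℤ) ∣ (a j : ℤ) - b j := by
      apply dvd_of_vanish v d hd a b
      intro x
      rw [← hab0]
      exact hvan (h i) (hhIX i) x
    have hdeg : ∑ j, a j = ∑ j, b j := by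
      by_contra hne
      have hcomp : homogeneousComponent (∑ j, a j) (h i) = ∏ j, X j ^ a j := by
        rw [hab0, map_sub, mon_eq a, mon_eq b]
        rw [homogeneousComponent_of_mem
          ((mem_homogeneousSubmodule _ _).mpr (isHomogeneous_monomial 1 (F_degree a)))]
        rw [homogeneousComponent_of_mem
          ((mem_homogeneousSubmodule _ _).mpr (isHomogeneous_monomial 1 (F_degree b)))]
        rw [if_pos rfl, if_neg hne, sub_zero]
      have hmem : homogeneousComponent (∑ j, a j) (h i) ∈ Ideal.span T :=
        comp_mem (fun s hs => hs.1) (hIX ▸ hhIX i) _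
      rw [hcomp] at hmem
      have hv1 := hvan _ (hIX ▸ hmem : (∏ j, X j ^ a j) ∈ IX) (fun _ => 1)
      rw [eval_mon] at hv1
      simp at hv1
    exact ⟨a, b, hab0, habne, hdeg, hdvdiff⟩
  choose a b hab habne hdeg hdvdiff using hrep1
  -- h k is homogeneous
  have hhom : ∀ k, (h k).IsHomogeneous (∑ j, a k j) := by
    intro k
    rw [hab k]
    have hb := mon_homog (K := K) (b k)
    rw [← hdeg k] at hb
    exact (mon_homog (a k)).sub hb
  -- Phase 2: divisibility of the exponents
  have hdvd : ∀ i j, d j ∣ a i j ∧ d j ∣ b i j := by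
    intro i
    set c : Fin n → ℕ := fun j => min (a i j) (b i j) with hc
    set a' : Fin n → ℕ := fun j => a i j - c j with ha'
    set b' : Fin n → ℕ := fun j => b i j - c j with hb'
    have hsplit : ∀ j, (a' j = 0 ∨ b' j = 0) ∧ a' j + c j = a i j ∧ b' j + c j = b i j := by
      intro j
      simp only [ha', hb', hc]
      omega
    have hdvd' : ∀ j, (d j : ℤ) ∣ (a' j : ℤ) - b' j := by
      intro j
      obtain ⟨-, h1, h2⟩ := hsplit j
      have heqz : (a' j : ℤ) - b' j = (a i j : ℤ) - b i j := by omega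
      rw [heqz]
      exact hdvdiff i j
    have hdv : ∀ j, d j ∣ a' j ∧ d j ∣ b' j := by
      intro j
      obtain ⟨hz, h1, h2⟩ := hsplit j
      have hd' := hdvd' j
      rcases hz with hz | hz
      · constructor
        · rw [hz]; exact dvd_zero _
        · rw [hz] at hd'
          simp only [Nat.cast_zero, zero_sub, dvd_neg] at hd'
          exact_mod_cast hd'
      · constructor
        · rw [hz] at hd'
          simp only [Nat.cast_zero, sub_zero] at hd'
          exact_mod_cast hd'
        · rw [hz]; exact dvd_zero _
    by_cases hc0 : ∀ j, c j = 0
    · intro j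
      have h1 := (hsplit j).2.1
      have h2 := (hsplit j).2.2
      have h3 := hc0 j
      constructor
      · have : a' j = a i j := by omega
        exact this ▸ (hdv j).1
      · have : b' j = b i j := by omega
        exact this ▸ (hdv j).2
    · exfalso
      push_neg at hc0
      obtain ⟨j0, hj0⟩ := hc0
      have hcsum : 0 < ∑ j, c j := by
        have h1 : c j0 ≤ ∑ j, c j :=
          Finset.single_le_sum (fun j _ => Nat.zero_le (c j)) (Finset.mem_univ j0)
        omega
      set u : MvPolynomial (Fin n) K := (∏ j, X j ^ a' j) - ∏ j, X j ^ b' j with hu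
      have hsuma : (∑ j, a' j) + (∑ j, c j) = ∑ j, a i j := by
        rw [← Finset.sum_add_distrib]
        exact Finset.sum_congr rfl fun j _ => (hsplit j).2.1
      have hsumb : (∑ j, b' j) + (∑ j, c j) = ∑ j, b i j := by
        rw [← Finset.sum_add_distrib]
        exact Finset.sum_congr rfl fun j _ => (hsplit j).2.2
      have hδb : (∑ j, a' j) = ∑ j, b' j := by
        have := hdeg i
        omega
      have hδlt : (∑ j, a' j) < ∑ j, a i j := by omega
      have huhom : u.IsHomogeneous (∑ j, a' j) := by
        have hub := mon_homog (K := K) b'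
        rw [← hδb] at hub
        exact (mon_homog a').sub hub
      have huIX : u ∈ IX := by
        rw [hIX]
        apply Ideal.subset_span
        exact ⟨⟨_, huhom⟩, fun x => vanish_of_dvd hβ v d hd a' b' hdvd' x⟩
      -- u lies in the span of the other generators
      have humem : u ∈ Ideal.span (h '' {k | k ≠ i}) := by
        have huIX' := huIX
        rw [hgen] at huIX'
        obtain ⟨cc, hccsupp, hccsum⟩ := Submodule.mem_span_set.mp huIX'
        have hucomp : homogeneousComponent (∑ j, a' j) u = u := by
          rw [homogeneousComponent_of_mem ((mem_homogeneousSubmodule _ _).mpr huhom)]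
          rw [if_pos rfl]
        rw [← hucomp, ← hccsum, Finsupp.sum, map_sum]
        apply Ideal.sum_mem
        intro s hs
        obtain ⟨k, hk⟩ := hccsupp hs
        rw [smul_eq_mul]
        by_cases hsi : s = h i
        · rw [hsi, comp_mul _ _ (hhom i), if_neg (not_le.mpr hδlt)]
          exact Ideal.zero_mem _
        · have hki : k ≠ i := fun hcon => hsi (by rw [← hk, hcon])
          rw [comp_mul _ _ (hk ▸ hhom k)]
          split
          · exact Ideal.mul_mem_left _ _ (Ideal.subset_span ⟨k, hki, hk⟩)
          · exact Ideal.zero_mem _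
      -- hence h i is also in that span, contradiction
      apply hlemA i
      rw [hgen]
      apply Ideal.span_le.mpr
      rintro _ ⟨k, rfl⟩
      by_cases hki : k = i
      · rw [hki, hab i]
        have hfact : (∏ j, (X j : MvPolynomial (Fin n) K) ^ a i j) - ∏ j, X j ^ b i j
            = (∏ j, X j ^ c j) * u := by
          rw [hu, mul_sub, mon_eq c, mon_eq a', mon_eq b', monomial_mul, monomial_mul,
            mon_eq (a i), mon_eq (b i), one_mul]
          have hFa : F c + F a' = F (a i) := by
            apply Finsupp.ext
            intro l
            rw [Finsupp.add_apply, F_apply, F_apply, F_apply]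
            have := (hsplit l).2.1
            omega
          have hFb : F c + F b' = F (b i) := by
            apply Finsupp.ext
            intro l
            rw [Finsupp.add_apply, F_apply, F_apply, F_apply]
            have := (hsplit l).2.2
            omega
          rw [hFa, hFb]
        rw [hfact]
        exact Ideal.mul_mem_left _ _ humem
      · exact Ideal.subset_span ⟨k, hki, rfl⟩
  -- define the toric generators
  set g : Fin (n - 1) → MvPolynomial (Fin n) K :=
    fun i => (∏ j, X j ^ (a i j / d j)) - ∏ j, X j ^ (b i j / d j) with hg
  have hpsig : ∀ i, h i = psi d (g i) := by
    intro i
    rw [hab i, hg]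
    simp only [map_sub]
    congr 1
    · rw [mon_eq (fun j => a i j / d j), psi_monomial, mon_eq (a i)]
      have harg : (F fun j => d j * (F fun j' => a i j' / d j') j) = F (a i) := by
        apply Finsupp.ext
        intro l
        rw [F_apply, F_apply, F_apply]
        exact Nat.mul_div_cancel' (hdvd i l).1
      rw [harg]
    · rw [mon_eq (fun j => b i j / d j), psi_monomial, mon_eq (b i)]
      have harg : (F fun j => d j * (F fun j' => b i j' / d j') j) = F (b i) := by
        apply Finsupp.ext
        intro l
        rw [F_apply, F_apply, F_apply]
        exact Nat.mul_div_cancel' (hdvd i l).2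
      rw [harg]
  refine ⟨g, fun i => ⟨_, _, rfl⟩, ?_, fun i => hpsig i⟩
  -- it remains to show P = span g
  apply le_antisymm
  · -- P ≤ span g
    intro f hf
    rw [hP, RingHom.mem_ker] at hf
    have hpsiIX : psi d f ∈ IX := by
      rw [hIX]
      have hdecomp := sum_weightedHomogeneousComponent d f
      have hpsieq : psi d f = ∑ m ∈ (weightedHomogeneousComponent_finsupp (w := d) f).toFinset,
          psi d (weightedHomogeneousComponent d m f) := by
        conv_lhs => rw [← hdecomp, finsum_eq_sum _ (weightedHomogeneousComponent_finsupp (w := d) f)]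
        rw [map_sum]
      rw [hpsieq]
      apply Ideal.sum_mem
      intro m hm
      apply Ideal.subset_span
      refine ⟨⟨m, psi_wcomp_homog d _ m (weightedHomogeneousComponent_isWeightedHomogeneous m f)⟩, ?_⟩
      intro x
      rw [eval_psi]
      have hcoord : (fun j => ((x j : K) ^ v j) ^ d j) = fun _ => (1 : K) := by
        funext j
        have h1 := unit_pow_eq hβ v d hd x j (dvd_refl (d j : ℤ))
        rw [zpow_natCast] at h1
        have h2 := congrArg (Units.val) h1
        push_cast at h2
        exact h2
      rw [hcoord]
      exact eval_one_of_ker d _ (wcomp_ker d f hf m)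
    rw [hgen] at hpsiIX
    obtain ⟨cc, hcc⟩ := Ideal.mem_span_range_iff_exists_fun.mp hpsiIX
    have hfeq : f = ∑ k, g k * rho d (cc k) := by
      calc f = rho d (psi d f) := (rho_psi d hd1 f).symm
      _ = rho d (∑ k, cc k * h k) := by rw [hcc]
      _ = ∑ k, g k * rho d (cc k) := by
          rw [map_sum]
          apply Finset.sum_congr rfl
          intro k _
          rw [hpsig k, mul_comm (cc k), rho_psi_mul d hd1]
    rw [hfeq]
    apply Ideal.sum_mem
    intro k _
    exact Ideal.mul_mem_right _ _ (Ideal.subset_span ⟨k, rfl⟩)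
  · -- span g ≤ P
    apply Ideal.span_le.mpr
    rintro _ ⟨i, rfl⟩
    rw [hP]
    show _ ∈ RingHom.ker (aeval (fun i : Fin n => (Polynomial.X : Polynomial K) ^ d i) :
      MvPolynomial (Fin n) K →ₐ[K] Polynomial K)
    rw [RingHom.mem_ker, hg]
    simp only [map_sub]
    rw [mon_eq (fun j => a i j / d j), mon_eq (fun j => b i j / d j),
      aeval_Xd_monomial, aeval_Xd_monomial]
    have hwa : (Finsupp.weight d (F fun j => a i j / d j) : ℕ) = ∑ j, a i j := by
      rw [weight_eq]
      apply Finset.sum_congr rfl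
      intro j _
      rw [F_apply]
      exact Nat.div_mul_cancel (hdvd i j).1
    have hwb : (Finsupp.weight d (F fun j => b i j / d j) : ℕ) = ∑ j, b i j := by
      rw [weight_eq]
      apply Finset.sum_congr rfl
      intro j _
      rw [F_apply]
      exact Nat.div_mul_cancel (hdvd i j).2
    rw [hwa, hwb, hdeg i, sub_self]
end

section
/- Suppose the toric ideal P is a complete intersection generated by binomials g_1, …, g_{n−1}. Then the vanishing ideal I(X) of the degenerate projective torus X is a complete intersection generated by the binomials h_1, …, h_{n−1}, where h_i = g_i(t_1^{d_1}, …, t_n^{d_n}) for i = 1, …, n−1. -/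
open MvPolynomial Finset

lemma aux_geom {K : Type} [Field K] {u : K} {D : ℕ} (hord : orderOf u = D)
    (s : ℕ) : (∑ j ∈ Finset.range D, (u ^ s) ^ j) = if D ∣ s then (D : K) else 0 := by
  by_cases hdvd : D ∣ s
  · rw [if_pos hdvd]
    have h1 : u ^ s = 1 := orderOf_dvd_iff_pow_eq_one.mp (hord ▸ hdvd)
    simp [h1]
  · rw [if_neg hdvd]
    have h1 : u ^ s ≠ 1 := fun hc => hdvd (hord ▸ orderOf_dvd_iff_pow_eq_one.mpr hc)
    rw [geom_sum_eq h1]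
    have h2 : (u ^ s) ^ D = 1 := by
      rw [← pow_mul, mul_comm, pow_mul, ← hord, pow_orderOf_eq_one, one_pow]
    rw [h2, sub_self, zero_div]

lemma aux_dvd_shift {D m c : ℕ} (hD : 0 < D) : D ∣ m + (D - 1) * c ↔ m % D = c % D := by
  rw [← ZMod.natCast_eq_zero_iff, ← ZMod.natCast_eq_natCast_iff']
  have h1 : ((D - 1 : ℕ) : ZMod D) = -1 := by
    rw [Nat.cast_sub hD, ZMod.natCast_self, Nat.cast_one, zero_sub]
  push_cast [h1]
  constructor <;> intro hyp <;> linear_combination hyp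

lemma aux_prod_ite_zero {K : Type} [CommMonoidWithZero K] {n : ℕ} (p : Fin n → Prop)
    [DecidablePred p] (a : Fin n → K) :
    (∏ i, if p i then a i else 0) = if ∀ i, p i then ∏ i, a i else 0 := by
  by_cases hp : ∀ i, p i
  · simp [hp]
  · rw [if_neg hp]
    push_neg at hp; obtain ⟨i, hi⟩ := hp
    exact Finset.prod_eq_zero (Finset.mem_univ i) (by simp [hi])

lemma aux_fourier {K : Type} [Field K] {n : ℕ}
    (γ : Fin n → K) (d : Fin n → ℕ) (hd0 : ∀ i, 0 < d i)
    (hord : ∀ i, orderOf (γ i) = d i) (hchar : ((∏ i, d i : ℕ) : K) ≠ 0)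
    (f : MvPolynomial (Fin n) K)
    (hvan : ∀ k : Fin n → ℕ, eval (fun i => γ i ^ k i) f = 0)
    (c : Fin n → ℕ) :
    ∑ m ∈ f.support.filter (fun m => ∀ i, (m i) % d i = c i % d i), coeff m f = 0 := by
  classical
  set w : Fin n → ℕ := fun i => (d i - 1) * c i with hw
  set N := Fintype.piFinset (fun i => Finset.range (d i)) with hN
  have key : (∑ k ∈ N, (eval (fun i => γ i ^ k i) f) * ∏ i, (γ i) ^ (k i * w i)) = 0 :=
    Finset.sum_eq_zero fun k _ => by rw [hvan k, zero_mul]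
  have calc1 : (∑ k ∈ N, (eval (fun i => γ i ^ k i) f) * ∏ i, (γ i) ^ (k i * w i))
      = (∑ m ∈ f.support.filter (fun m => ∀ i, (m i) % d i = c i % d i), coeff m f)
        * ((∏ i, d i : ℕ) : K) := by
    calc ∑ k ∈ N, (eval (fun i => γ i ^ k i) f) * ∏ i, (γ i) ^ (k i * w i)
        = ∑ k ∈ N, ∑ m ∈ f.support, coeff m f * ∏ i, (γ i ^ (m i + w i)) ^ (k i) := by
          refine Finset.sum_congr rfl fun k _ => ?_
          rw [eval_eq', Finset.sum_mul]
          refine Finset.sum_congr rfl fun m _ => ?_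
          rw [mul_assoc, ← Finset.prod_mul_distrib]
          congr 1
          refine Finset.prod_congr rfl fun i _ => ?_
          rw [← pow_mul, ← pow_add, ← pow_mul]
          congr 1
          ring
      _ = ∑ m ∈ f.support, coeff m f * ∏ i, ∑ j ∈ Finset.range (d i), (γ i ^ (m i + w i)) ^ j := by
          rw [Finset.sum_comm]
          refine Finset.sum_congr rfl fun m _ => ?_
          rw [← Finset.mul_sum, ← Finset.prod_univ_sum]
      _ = ∑ m ∈ f.support, coeff m f *
            (if ∀ i, (m i) % d i = c i % d i then ((∏ i, d i : ℕ) : K) else 0) := by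
          refine Finset.sum_congr rfl fun m _ => ?_
          congr 1
          have : ∀ i : Fin n, (∑ j ∈ Finset.range (d i), (γ i ^ (m i + w i)) ^ j)
              = if (m i) % d i = c i % d i then ((d i : ℕ) : K) else 0 := fun i => by
            rw [aux_geom (hord i), hw]
            simp only [aux_dvd_shift (hd0 i)]
          rw [Finset.prod_congr rfl fun i _ => this i, aux_prod_ite_zero]
          push_cast
          rfl
      _ = _ := by
          rw [Finset.sum_mul, Finset.sum_filter]
          refine Finset.sum_congr rfl fun m _ => ?_
          split <;> simp
  rw [calc1] at key
  exact (mul_eq_zero.mp key).resolve_right hchar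

lemma aux_unit_pow {K : Type} [Field K] {β x : Kˣ} (hx : x ∈ Subgroup.zpowers β)
    (v : ℕ) : (x ^ v) ^ orderOf (β ^ v) = 1 := by
  obtain ⟨m, hm⟩ := hx
  subst hm
  have h1 : (β ^ m) ^ v = (β ^ v) ^ m := by
    rw [← zpow_natCast ((β ^ m)), ← zpow_mul, ← zpow_natCast β v, ← zpow_mul, mul_comm]
  rw [h1, ← zpow_natCast ((β ^ v) ^ m), ← zpow_mul, mul_comm, zpow_mul, zpow_natCast,
    pow_orderOf_eq_one, one_zpow]

lemma aux_char {K : Type} [Field K] [Fintype K] [DecidableEq K] (D : ℕ)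
    (hD : D ∣ Fintype.card Kˣ) : ((D : ℕ) : K) ≠ 0 := by
  intro h0
  have hp : (ringChar K) ∣ D := (CharP.cast_eq_zero_iff K (ringChar K) D).mp h0
  have h1 : (ringChar K) ∣ Fintype.card K - 1 := by
    rw [← Fintype.card_units]; exact hp.trans hD
  have h2 : (ringChar K) ∣ Fintype.card K :=
    (CharP.cast_eq_zero_iff K (ringChar K) _).mp (FiniteField.cast_card_eq_zero K)
  have h3 : (ringChar K) ∣ 1 := by
    have : Fintype.card K - (Fintype.card K - 1) = 1 := by
      have := Fintype.one_lt_card (α := K); omega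
    exact this ▸ Nat.dvd_sub h2 h1
  exact CharP.char_ne_one K (ringChar K) (Nat.dvd_one.mp h3)

lemma aux_deg {K : Type} [CommSemiring K] {n e : ℕ} {f : MvPolynomial (Fin n) K}
    (hfe : f.IsHomogeneous e) {m : Fin n →₀ ℕ} (hm : m ∈ f.support) : (∑ i, m i) = e := by
  have h5 := hfe (mem_support_iff.mp hm)
  rw [← h5, Finsupp.weight_apply, Finsupp.sum]
  simp only [Pi.one_apply, smul_eq_mul, mul_one]
  exact (Finset.sum_subset (Finset.subset_univ m.support)
    (fun i _ hni => Finsupp.notMem_support_iff.mp hni)).symm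

lemma aux_mono {K : Type} [CommSemiring K] {n : ℕ} (d : Fin n → ℕ) (m : Fin n →₀ ℕ) (a : K) :
    aeval (fun j : Fin n => (X j : MvPolynomial (Fin n) K) ^ d j)
        (monomial (Finsupp.equivFunOnFinite.symm fun i => m i / d i) a)
      * monomial (Finsupp.equivFunOnFinite.symm fun i => m i % d i) 1 = monomial m a := by
  rw [aeval_monomial, monomial_eq, monomial_eq]
  rw [Finsupp.prod_fintype _ _ (fun i => by rw [pow_zero]),
    Finsupp.prod_fintype _ _ (fun i => by rw [pow_zero]),
    Finsupp.prod_fintype _ _ (fun i => by rw [pow_zero])]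
  simp only [Finsupp.coe_equivFunOnFinite_symm, map_one, one_mul]
  rw [mul_assoc, ← Finset.prod_mul_distrib]
  congr 1
  refine Finset.prod_congr rfl fun i _ => ?_
  rw [← pow_mul, ← pow_add, Nat.div_add_mod]
/-- **Theorem (b).** Let `K = 𝔽_q` be a finite field, `β` a generator of `Kˣ`,
`v : Fin n → ℕ` positive integers, `d i = orderOf (β ^ v i)`.  Let `IX` be the vanishing
ideal of the degenerate projective torus parameterized by `x_i ^ v_i`, and let `P` be the
toric ideal, i.e. the kernel of `t_i ↦ y ^ d i`.  If `P` is a complete intersection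
generated by binomials `g 0, …, g (n-2)`, then `IX` is a complete intersection generated
by the binomials `h i = g i (t_1 ^ d 1, …, t_n ^ d n)`. -/
theorem toric_ci_implies_vanishing_ideal_ci
    (K : Type) [Field K] [Fintype K] (n : ℕ) (hn : 2 ≤ n)
    (v : Fin n → ℕ) (hv : ∀ i, 0 < v i)
    (β : Kˣ) (hβ : ∀ x : Kˣ, x ∈ Subgroup.zpowers β)
    (d : Fin n → ℕ) (hd : ∀ i, d i = orderOf (β ^ v i))
    (IX : Ideal (MvPolynomial (Fin n) K))
    (hIX : IX = Ideal.span {f : MvPolynomial (Fin n) K |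
      (∃ e, f.IsHomogeneous e) ∧
      ∀ x : Fin n → Kˣ, eval (fun i => (x i : K) ^ v i) f = 0})
    (P : Ideal (MvPolynomial (Fin n) K))
    (hP : P = RingHom.ker (aeval (fun i : Fin n => (Polynomial.X : Polynomial K) ^ d i) :
      MvPolynomial (Fin n) K →ₐ[K] Polynomial K))
    (g : Fin (n - 1) → MvPolynomial (Fin n) K)
    (hbin : ∀ i, ∃ a b : Fin n → ℕ,
      g i = (∏ j, X j ^ a j) - ∏ j, X j ^ b j)
    (hgen : P = Ideal.span (Set.range g))
    (h : Fin (n - 1) → MvPolynomial (Fin n) K)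
    (hh : ∀ i, h i = aeval (fun j : Fin n => (X j : MvPolynomial (Fin n) K) ^ d j) (g i)) :
    (∀ i, ∃ a b : Fin n → ℕ,
      h i = (∏ j, X j ^ a j) - ∏ j, X j ^ b j) ∧
    IX = Ideal.span (Set.range h) := by
  classical
  set θ : MvPolynomial (Fin n) K →ₐ[K] MvPolynomial (Fin n) K :=
    aeval (fun j : Fin n => (X j : MvPolynomial (Fin n) K) ^ d j) with hθ
  have hd0 : ∀ i, 0 < d i := fun i => (hd i) ▸ orderOf_pos _
  have hHom : ∀ (a : Fin n → ℕ), θ (∏ j, X j ^ a j)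
      = ∏ j, (X j : MvPolynomial (Fin n) K) ^ (d j * a j) := by
    intro a
    rw [map_prod]
    exact Finset.prod_congr rfl fun j _ => by rw [map_pow, aeval_X, ← pow_mul]
  have part1 : ∀ i, ∃ a b : Fin n → ℕ,
      h i = (∏ j, X j ^ a j) - ∏ j, X j ^ b j := by
    intro i
    obtain ⟨a, b, hab⟩ := hbin i
    refine ⟨fun j => d j * a j, fun j => d j * b j, ?_⟩
    show h i = (∏ j, X j ^ (d j * a j)) - ∏ j, X j ^ (d j * b j)
    rw [hh i, hab, map_sub, hHom, hHom]
  have hgP : ∀ i, g i ∈ P := fun i => hgen ▸ Ideal.subset_span ⟨i, rfl⟩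
  have hdeg : ∀ (i : Fin (n-1)) (a b : Fin n → ℕ),
      g i = (∏ j, X j ^ a j) - ∏ j, X j ^ b j →
      ∑ j, d j * a j = ∑ j, d j * b j := by
    intro i a b hab
    have h0 : aeval (fun i : Fin n => (Polynomial.X : Polynomial K) ^ d i) (g i) = 0 := by
      have h1 := hgP i
      rw [hP] at h1
      exact h1
    rw [hab, map_sub, map_prod, map_prod] at h0
    simp only [map_pow, aeval_X, ← pow_mul] at h0
    rw [Finset.prod_pow_eq_pow_sum, Finset.prod_pow_eq_pow_sum, sub_eq_zero] at h0
    have h2 := congrArg Polynomial.natDegree h0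
    simpa using h2
  -- forward: each h i lies in the defining set of IX
  have hxpow : ∀ (x : Kˣ) (j : Fin n), ((x : K) ^ v j) ^ d j = 1 := by
    intro x j
    have h1 := aux_unit_pow (hβ x) (v j)
    rw [← hd j] at h1
    calc ((x : K) ^ v j) ^ d j = (((x ^ v j) ^ d j : Kˣ) : K) := by push_cast; ring
    _ = 1 := by rw [h1, Units.val_one]
  have hrange : ∀ i, (∃ e, (h i).IsHomogeneous e) ∧
      ∀ x : Fin n → Kˣ, eval (fun j => (x j : K) ^ v j) (h i) = 0 := by
    intro i
    obtain ⟨a, b, hab⟩ := hbin i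
    have hih : h i = (∏ j, X j ^ (d j * a j)) - ∏ j, X j ^ (d j * b j) := by
      rw [hh i, hab, map_sub, hHom, hHom]
    constructor
    · refine ⟨∑ j, d j * a j, ?_⟩
      rw [hih]
      refine IsHomogeneous.sub ?_ ?_
      · exact IsHomogeneous.prod _ _ _ fun j _ => isHomogeneous_X_pow _ _
      · rw [hdeg i a b hab]
        exact IsHomogeneous.prod _ _ _ fun j _ => isHomogeneous_X_pow _ _
    · intro x
      rw [hih, map_sub, map_prod, map_prod]
      have h1 : ∀ (cf : Fin n → ℕ),
          (∏ j, eval (fun j' => ((x j' : K)) ^ v j') (X j ^ (d j * cf j))) = 1 := by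
        intro cf
        refine Finset.prod_eq_one fun j _ => ?_
        rw [map_pow, eval_X, pow_mul, hxpow (x j) j, one_pow]
      rw [h1 a, h1 b, sub_self]
  -- J and the map lemma
  set J := Ideal.span (Set.range h) with hJ
  have hmapθ : ∀ p ∈ P, θ p ∈ J := by
    intro p hp
    have h1 : Ideal.map (θ : MvPolynomial (Fin n) K →+* MvPolynomial (Fin n) K) P ≤ J := by
      rw [hgen, Ideal.map_span]
      refine Ideal.span_le.mpr ?_
      rintro _ ⟨_, ⟨i, rfl⟩, rfl⟩
      exact Ideal.subset_span ⟨i, by simp [hh i]⟩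
    exact h1 (Ideal.mem_map_of_mem _ hp)
  -- reverse inclusion
  have hS₀ : ∀ f : MvPolynomial (Fin n) K, (∃ e, f.IsHomogeneous e) →
      (∀ x : Fin n → Kˣ, eval (fun i => (x i : K) ^ v i) f = 0) → f ∈ J := by
    rintro f ⟨e, hfe⟩ hfv
    set γ : Fin n → K := fun i => ((β ^ v i : Kˣ) : K) with hγ
    have hordγ : ∀ i, orderOf (γ i) = d i := fun i => by rw [hγ, orderOf_units, hd i]
    have hcard : ∀ i, d i ∣ Fintype.card Kˣ := fun i => (hd i) ▸ orderOf_dvd_card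
    have hvan : ∀ k : Fin n → ℕ, eval (fun i => γ i ^ k i) f = 0 := by
      intro k
      have h1 := hfv (fun i => β ^ k i)
      have hpt : (fun i => γ i ^ k i) = (fun i : Fin n => ((β ^ k i : Kˣ) : K) ^ v i) := by
        funext i
        show ((β ^ v i : Kˣ) : K) ^ k i = ((β ^ k i : Kˣ) : K) ^ v i
        push_cast
        rw [← pow_mul, ← pow_mul, mul_comm]
      rw [hpt]
      exact h1
    have hfour : ∀ c : Fin n → ℕ,
        ∑ m ∈ f.support.filter (fun m => ∀ i, (m i) % d i = c i % d i), coeff m f = 0 := by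
      intro c
      refine aux_fourier γ d hd0 hordγ ?_ f hvan c
      rw [Nat.cast_prod]
      exact Finset.prod_ne_zero_iff.mpr fun i _ => aux_char (d i) (hcard i)
    have hmaps : ∀ m ∈ f.support,
        (fun i => m i % d i) ∈ Fintype.piFinset (fun i => Finset.range (d i)) := by
      intro m _
      simp only [Fintype.mem_piFinset, Finset.mem_range]
      exact fun i => Nat.mod_lt _ (hd0 i)
    have hdecomp : f = ∑ c ∈ Fintype.piFinset (fun i => Finset.range (d i)),
        ∑ m ∈ f.support.filter (fun m => (fun i => m i % d i) = c),
          monomial m (coeff m f) := by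
      rw [Finset.sum_fiberwise_of_maps_to hmaps]
      exact f.as_sum
    rw [hdecomp]
    refine Ideal.sum_mem _ fun c hc => ?_
    have hcflt : ∀ i, c i < d i := by
      simpa [Fintype.mem_piFinset] using hc
    set F : MvPolynomial (Fin n) K :=
      ∑ m ∈ f.support.filter (fun m => (fun i => m i % d i) = c),
        monomial (Finsupp.equivFunOnFinite.symm fun i => m i / d i) (coeff m f) with hF
    have hFP : F ∈ P := by
      rw [hP]
      show (aeval fun i : Fin n => (Polynomial.X : Polynomial K) ^ d i) F = 0
      rw [hF, map_sum]
      have hterm : ∀ m ∈ f.support.filter (fun m => (fun i => m i % d i) = c),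
          (aeval fun i : Fin n => (Polynomial.X : Polynomial K) ^ d i)
            (monomial (Finsupp.equivFunOnFinite.symm fun i => m i / d i) (coeff m f))
          = Polynomial.C (coeff m f) * Polynomial.X ^ (e - ∑ i, c i) := by
        intro m hm
        obtain ⟨hms, hmc⟩ := Finset.mem_filter.mp hm
        rw [aeval_monomial, Finsupp.prod_fintype _ _ (fun i => by rw [pow_zero])]
        simp only [Finsupp.coe_equivFunOnFinite_symm, ← pow_mul]
        rw [Finset.prod_pow_eq_pow_sum]
        have hexp : (∑ i, d i * (m i / d i)) = e - ∑ i, c i := by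
          have h2 : (∑ i, d i * (m i / d i)) + ∑ i, m i % d i = ∑ i, m i := by
            rw [← Finset.sum_add_distrib]
            exact Finset.sum_congr rfl fun i _ => Nat.div_add_mod _ _
          have h3 : (∑ i, m i % d i) = ∑ i, c i :=
            Finset.sum_congr rfl fun i _ => congrFun hmc i
          have h4 : (∑ i, m i) = e := aux_deg hfe hms
          omega
        rw [hexp]
        rfl
      rw [Finset.sum_congr rfl hterm, ← Finset.sum_mul, ← map_sum]
      have hfilter : f.support.filter (fun m => (fun i => m i % d i) = c)
          = f.support.filter (fun m => ∀ i, (m i) % d i = c i % d i) := by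
        refine Finset.filter_congr fun m _ => ?_
        constructor
        · intro hmc i
          rw [congrFun hmc i, Nat.mod_eq_of_lt (hcflt i)]
        · intro hall
          funext i
          rw [hall i, Nat.mod_eq_of_lt (hcflt i)]
      rw [hfilter, hfour c, map_zero, zero_mul]
    have hAc : (∑ m ∈ f.support.filter (fun m => (fun i => m i % d i) = c),
          monomial m (coeff m f))
        = θ F * monomial (Finsupp.equivFunOnFinite.symm c) 1 := by
      rw [hF, map_sum, Finset.sum_mul]
      refine Finset.sum_congr rfl fun m hm => ?_
      obtain ⟨hms, hmc⟩ := Finset.mem_filter.mp hm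
      rw [← hmc]
      exact (aux_mono d m (coeff m f)).symm
    rw [hAc]
    exact Ideal.mul_mem_right _ _ (hmapθ F hFP)
  refine ⟨part1, ?_⟩
  rw [hIX, hJ]
  refine le_antisymm ?_ ?_
  · rw [Ideal.span_le]
    rintro f ⟨⟨e, hfe⟩, hfv⟩
    exact hS₀ f ⟨e, hfe⟩ hfv
  · exact Ideal.span_mono (by rintro _ ⟨i, rfl⟩; exact hrange i)
end

section
/- The vanishing ideal I(X) of the degenerate projective torus X is a complete intersection if and only if the toric ideal P is a complete intersection. -/
set_option maxHeartbeats 1000000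

open MvPolynomial

set_option linter.unusedSectionVars false
namespace CIq

variable {K : Type} [Field K] [Fintype K] {n : ℕ}

section D
variable (d : Fin n → ℕ)

/-- pointwise multiplication of an exponent vector by `d` -/
noncomputable def DD (m : Fin n →₀ ℕ) : Fin n →₀ ℕ := Finsupp.equivFunOnFinite.symm fun i => d i * m i

@[simp] lemma DD_apply (m : Fin n →₀ ℕ) (i : Fin n) : DD d m i = d i * m i := rfl

variable (K)

noncomputable def rho : MvPolynomial (Fin n) K →ₐ[K] MvPolynomial (Fin n) K :=
  aeval fun i => X i ^ d i

noncomputable def tor : MvPolynomial (Fin n) K →ₐ[K] Polynomial K :=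
  aeval fun i : Fin n => (Polynomial.X : Polynomial K) ^ d i

variable {K}

lemma rho_monomial (m : Fin n →₀ ℕ) (a : K) :
    rho K d (monomial m a) = monomial (DD d m) a := by
  rw [rho, aeval_monomial, monomial_eq]
  congr 1
  rw [Finsupp.prod_fintype _ _ (fun i => by simp), Finsupp.prod_fintype _ _ (fun i => by simp)]
  exact Finset.prod_congr rfl fun i _ => by rw [DD_apply, ← pow_mul]

lemma tor_monomial (m : Fin n →₀ ℕ) (a : K) :
    tor K d (monomial m a) = Polynomial.monomial (Finsupp.weight d m) a := by
  rw [tor, aeval_monomial]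
  rw [Finsupp.prod_fintype _ _ (fun i => by simp)]
  simp_rw [← pow_mul]
  rw [Finset.prod_pow_eq_pow_sum]
  rw [← Polynomial.C_mul_X_pow_eq_monomial, Finsupp.weight_apply,
    Finsupp.sum_fintype _ _ (fun i => by simp)]
  simp [smul_eq_mul, mul_comm, Polynomial.algebraMap_eq]

lemma coeff_tor (g : MvPolynomial (Fin n) K) (s : ℕ) :
    (tor K d g).coeff s = ∑ m ∈ g.support.filter (fun m => Finsupp.weight d m = s), coeff m g := by
  conv_lhs => rw [g.as_sum]
  rw [map_sum, Polynomial.finset_sum_coeff, Finset.sum_filter]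
  simp_rw [tor_monomial, Polynomial.coeff_monomial]

lemma mem_P_iff (g : MvPolynomial (Fin n) K) :
    g ∈ RingHom.ker (tor K d) ↔
      ∀ s : ℕ, ∑ m ∈ g.support.filter (fun m => Finsupp.weight d m = s), coeff m g = 0 := by
  rw [RingHom.mem_ker, Polynomial.ext_iff]
  exact forall_congr' fun s => by rw [coeff_tor, Polynomial.coeff_zero]

end D

section chars
variable (d v : Fin n → ℕ)

/-- the residue class of an exponent vector -/
def cls (m : Fin n →₀ ℕ) : (i : Fin n) → ZMod (d i) := fun i => (m i : ZMod (d i))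

variable (K) in
/-- the character of `(Kˣ)ⁿ` attached to a residue class -/
noncomputable def chi (c : (i : Fin n) → ZMod (d i)) : (Fin n → Kˣ) →* K where
  toFun x := ∏ i, ((x i : K) ^ (v i * (c i).val))
  map_one' := by simp
  map_mul' x y := by
    simp only [Pi.mul_apply, Units.val_mul, mul_pow, Finset.prod_mul_distrib]

variable {d v}
variable {β : Kˣ} (hβ : ∀ x : Kˣ, x ∈ Subgroup.zpowers β) (hd : ∀ i, d i = orderOf (β ^ v i))

include hβ hd

lemma units_pow_vd (x : Kˣ) (i : Fin n) : (x ^ v i) ^ d i = 1 := by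
  obtain ⟨k, hk⟩ := hβ x
  have h1 : β ^ (v i * d i) = 1 := by rw [pow_mul, hd i]; exact pow_orderOf_eq_one _
  have hk' : β ^ k = x := hk
  calc (x ^ v i) ^ d i = x ^ (v i * d i) := by rw [pow_mul]
    _ = (β ^ k) ^ (v i * d i) := by rw [hk']
    _ = (β ^ ((v i * d i : ℕ) : ℤ)) ^ k := by
        rw [← zpow_natCast (β ^ k), ← zpow_mul, mul_comm k, zpow_mul]
    _ = 1 := by rw [zpow_natCast, h1, one_zpow]

lemma hdpos (i : Fin n) : 0 < d i := by rw [hd i]; exact orderOf_pos _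

/-- each monomial evaluates like the character of its class -/
lemma monomial_eval_eq_chi (m : Fin n →₀ ℕ) (x : Fin n → Kˣ) :
    (∏ i, ((x i : K) ^ v i) ^ m i) = chi K d v (cls d m) x := by
  rw [chi]
  simp only [MonoidHom.coe_mk, OneHom.coe_mk]
  refine Finset.prod_congr rfl fun i _ => ?_
  haveI : NeZero (d i) := ⟨(hdpos hβ hd i).ne'⟩
  have h1 : ((x i) ^ v i) ^ d i = 1 := units_pow_vd hβ hd (x i) i
  have : (x i ^ v i) ^ m i = (x i ^ v i) ^ (m i % d i) := pow_eq_pow_mod _ h1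
  have hval : (cls d m i).val = m i % d i := by
    rw [cls, ZMod.val_natCast]
  calc ((x i : K) ^ v i) ^ m i = (((x i ^ v i : Kˣ) : K)) ^ m i := by push_cast; ring
    _ = (((x i ^ v i : Kˣ) ^ m i : Kˣ) : K) := by push_cast; ring
    _ = (((x i ^ v i : Kˣ) ^ (m i % d i) : Kˣ) : K) := by rw [← this]
    _ = ((x i : K)) ^ (v i * (cls d m i).val) := by rw [hval]; push_cast; rw [← pow_mul]

lemma chi_inj : Function.Injective (chi K d v (n := n)) := by
  intro c c' hcc
  funext i
  haveI : NeZero (d i) := ⟨(hdpos hβ hd i).ne'⟩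
  have := congrArg (fun f : (Fin n → Kˣ) →* K => f (Function.update (fun _ => 1) i β)) hcc
  simp only [chi, MonoidHom.coe_mk, OneHom.coe_mk] at this
  have hprod : ∀ c₀ : (j : Fin n) → ZMod (d j),
      (∏ j, (((Function.update (fun _ => (1:Kˣ)) i β j : Kˣ) : K) ^ (v j * (c₀ j).val)))
        = ((β : K)) ^ (v i * (c₀ i).val) := by
    intro c₀
    rw [Finset.prod_eq_single i]
    · simp
    · intro j _ hji
      rw [Function.update_of_ne hji]
      simp
    · simp
  rw [hprod c, hprod c'] at this
  have hu : (β ^ (v i * (c i).val) : Kˣ) = β ^ (v i * (c' i).val) := by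
    ext; push_cast; simpa using this
  rw [pow_mul, pow_mul] at hu
  have := pow_eq_pow_iff_modEq.mp hu
  rw [← hd i] at this
  have := (Nat.ModEq.eq_of_lt_of_lt this (ZMod.val_lt _) (ZMod.val_lt _))
  exact ZMod.val_injective _ this

/-- main character lemma : the sum of the coefficients in each residue class vanishes -/
lemma class_sum (f : MvPolynomial (Fin n) K)
    (hvan : ∀ x : Fin n → Kˣ, eval (fun i => (x i : K) ^ v i) f = 0)
    (c : (i : Fin n) → ZMod (d i)) :
    ∑ m ∈ f.support.filter (fun m => cls d m = c), coeff m f = 0 := by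
  haveI : ∀ i, NeZero (d i) := fun i => ⟨(hdpos hβ hd i).ne'⟩
  classical
  set s : ((i : Fin n) → ZMod (d i)) → K :=
    fun c => ∑ m ∈ f.support.filter (fun m => cls d m = c), coeff m f with hs
  suffices h : s c = 0 by exact h
  have hsum : ∀ x : Fin n → Kˣ, ∑ c₀ : (i : Fin n) → ZMod (d i), s c₀ * chi K d v c₀ x = 0 := by
    intro x
    have he : eval (fun i => (x i : K) ^ v i) f
        = ∑ m ∈ f.support, coeff m f * chi K d v (cls d m) x := by
      rw [eval_eq']
      refine Finset.sum_congr rfl fun m _ => ?_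
      rw [← monomial_eval_eq_chi hβ hd m x]
    rw [← hvan x, he, ← Finset.sum_fiberwise_of_maps_to (g := cls d)
      (fun m _ => Finset.mem_univ (cls d m))]
    refine Finset.sum_congr rfl fun c₀ _ => ?_
    rw [hs, Finset.sum_mul]
    refine Finset.sum_congr rfl fun m hm => ?_
    rw [Finset.mem_filter] at hm
    rw [hm.2]
  have li := (linearIndependent_monoidHom (Fin n → Kˣ) K).comp _ (chi_inj hβ hd)
  have hz : (∑ c₀, s c₀ • (((fun f : (Fin n → Kˣ) →* K => (f : (Fin n → Kˣ) → K)) ∘ chi K d v) c₀))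
      = 0 := by
    funext x
    simpa [Finset.sum_apply] using hsum x
  exact Fintype.linearIndependent_iff.mp li s hz c

end chars

section pieces
variable (d : Fin n → ℕ)

noncomputable def crep (c : (i : Fin n) → ZMod (d i)) : Fin n →₀ ℕ :=
  Finsupp.equivFunOnFinite.symm fun i => (c i).val

noncomputable def qexp (c : (i : Fin n) → ZMod (d i)) (m : Fin n →₀ ℕ) : Fin n →₀ ℕ :=
  Finsupp.equivFunOnFinite.symm fun i => (m i - (c i).val) / d i

noncomputable def gpart (f : MvPolynomial (Fin n) K) (c : (i : Fin n) → ZMod (d i)) :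
    MvPolynomial (Fin n) K :=
  ∑ m ∈ f.support.filter (fun m => cls d m = c), monomial (qexp d c m) (coeff m f)

variable {d}
variable (hdpos : ∀ i, 0 < d i)
include hdpos

lemma cval {c : (i : Fin n) → ZMod (d i)} {m : Fin n →₀ ℕ} (h : cls d m = c)
    (i : Fin n) : (c i).val = m i % d i := by
  haveI : NeZero (d i) := ⟨(hdpos i).ne'⟩
  have : c i = ((m i : ℕ) : ZMod (d i)) := by rw [← h]; rfl
  rw [this, ZMod.val_natCast]

lemma crep_add_DD_qexp {c : (i : Fin n) → ZMod (d i)} {m : Fin n →₀ ℕ} (h : cls d m = c) :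
    crep d c + DD d (qexp d c m) = m := by
  ext i
  have hc := cval hdpos h i
  have hle : m i % d i ≤ m i := Nat.mod_le _ _
  have hdvd : d i ∣ m i - m i % d i := Nat.dvd_sub_mod _
  simp only [Finsupp.add_apply, DD_apply, crep, qexp,
    Finsupp.coe_equivFunOnFinite_symm, hc]
  rw [Nat.mul_div_cancel' hdvd]
  omega

lemma piece_eq (f : MvPolynomial (Fin n) K) (c : (i : Fin n) → ZMod (d i)) :
    monomial (crep d c) 1 * rho K d (gpart d f c)
      = ∑ m ∈ f.support.filter (fun m => cls d m = c), monomial m (coeff m f) := by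
  rw [gpart, map_sum, Finset.mul_sum]
  refine Finset.sum_congr rfl fun m hm => ?_
  rw [Finset.mem_filter] at hm
  rw [rho_monomial, monomial_mul, one_mul, crep_add_DD_qexp hdpos hm.2]

lemma weight_qexp {c : (i : Fin n) → ZMod (d i)} {m : Fin n →₀ ℕ} (h : cls d m = c) :
    Finsupp.weight d (qexp d c m) + Finsupp.weight 1 (crep d c) = Finsupp.weight 1 m := by
  rw [Finsupp.weight_apply, Finsupp.weight_apply, Finsupp.weight_apply,
    Finsupp.sum_fintype _ _ (fun i => by simp), Finsupp.sum_fintype _ _ (fun i => by simp),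
    Finsupp.sum_fintype _ _ (fun i => by simp), ← Finset.sum_add_distrib]
  refine Finset.sum_congr rfl fun i _ => ?_
  have hc := cval hdpos h i
  have hle : m i % d i ≤ m i := Nat.mod_le _ _
  have hdvd : d i ∣ m i - m i % d i := Nat.dvd_sub_mod _
  simp only [crep, qexp, Finsupp.coe_equivFunOnFinite_symm, hc, smul_eq_mul,
    Pi.one_apply, mul_one]
  rw [Nat.div_mul_cancel hdvd]
  omega

lemma gpart_mem_P (f : MvPolynomial (Fin n) K) (c : (i : Fin n) → ZMod (d i)) (e : ℕ)
    (hdeg : ∀ m ∈ f.support.filter (fun m => cls d m = c), Finsupp.weight 1 m = e)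
    (hsum : ∑ m ∈ f.support.filter (fun m => cls d m = c), coeff m f = 0) :
    gpart d f c ∈ RingHom.ker (tor K d) := by
  rw [RingHom.mem_ker, gpart, map_sum]
  have : ∀ m ∈ f.support.filter (fun m => cls d m = c),
      tor K d (monomial (qexp d c m) (coeff m f))
        = Polynomial.monomial (e - Finsupp.weight 1 (crep d c)) (coeff m f) := by
    intro m hm
    rw [Finset.mem_filter] at hm
    rw [tor_monomial]
    have h1 := weight_qexp hdpos hm.2
    have h2 := hdeg m (Finset.mem_filter.mpr hm)
    have h3 : (Finsupp.weight d) (qexp d c m) = e - (Finsupp.weight 1) (crep d c) := by omega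
    rw [h3]
  rw [Finset.sum_congr rfl this, ← map_sum, hsum, map_zero]

lemma decomp (f : MvPolynomial (Fin n) K) :
    f = ∑ c ∈ f.support.image (cls d), monomial (crep d c) 1 * rho K d (gpart d f c) := by
  have := Finset.sum_fiberwise_of_maps_to (g := cls d) (t := f.support.image (cls d))
    (fun m hm => Finset.mem_image_of_mem _ hm) (fun m => monomial m (coeff m f))
  calc f = ∑ m ∈ f.support, monomial m (coeff m f) := f.support_sum_monomial_coeff.symm
    _ = _ := by
        rw [← this]
        exact Finset.sum_congr rfl fun c _ => (piece_eq hdpos f c).symm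

end pieces

section van
variable {v d : Fin n → ℕ} {β : Kˣ}

def Vanp (v : Fin n → ℕ) (f : MvPolynomial (Fin n) K) : Prop :=
  ∀ x : Fin n → Kˣ, eval (fun i => (x i : K) ^ v i) f = 0

lemma vanp_of_mem_span {s : Set (MvPolynomial (Fin n) K)} (hs : ∀ g ∈ s, Vanp v g)
    {f : MvPolynomial (Fin n) K} (hf : f ∈ Ideal.span s) : Vanp v f := by
  intro x
  refine Submodule.span_induction (p := fun f _ => eval (fun i => (x i : K) ^ v i) f = 0)
    (fun g hg => hs g hg x) (map_zero _) (fun a b _ _ ha hb => ?_) (fun a b _ hb => ?_) hf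
  · show eval (fun i => (x i : K) ^ v i) (a + b) = 0
    rw [map_add, show eval (fun i => (x i : K) ^ v i) a = 0 from ha,
      show eval (fun i => (x i : K) ^ v i) b = 0 from hb, add_zero]
  · show eval (fun i => (x i : K) ^ v i) (a • b) = 0
    rw [smul_eq_mul, map_mul, show eval (fun i => (x i : K) ^ v i) b = 0 from hb, mul_zero]

lemma eval_rho (d : Fin n → ℕ) (y : Fin n → K) (g : MvPolynomial (Fin n) K) :
    eval y (rho K d g) = eval (fun i => y i ^ d i) g := by
  have h : rho K d g = eval₂ C (fun i => X i ^ d i) g := by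
    rw [rho, aeval_def, algebraMap_eq]
  have h2 : (⇑(eval y) ∘ fun i => X i ^ d i) = fun i => y i ^ d i := by
    funext i; simp
  rw [h, ← eval_assoc, h2]

lemma eval_one_of_mem_P {g : MvPolynomial (Fin n) K}
    (hg : g ∈ RingHom.ker (tor K d)) : eval (fun _ : Fin n => (1 : K)) g = 0 := by
  have h1 : tor K d g = eval₂ Polynomial.C (fun i => (Polynomial.X : Polynomial K) ^ d i) g := by
    rw [tor, aeval_def, Polynomial.algebraMap_eq]
  have h2 := MvPolynomial.eval₂_comp_left (Polynomial.evalRingHom (1 : K)) Polynomial.C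
    (fun i => (Polynomial.X : Polynomial K) ^ d i) g
  have h3 : (Polynomial.evalRingHom (1 : K)).comp Polynomial.C = RingHom.id K :=
    RingHom.ext fun a => by simp
  have h4 : ((Polynomial.evalRingHom (1 : K)) ∘ fun i => (Polynomial.X : Polynomial K) ^ d i)
      = fun _ : Fin n => (1 : K) := by funext i; simp
  rw [h3, h4] at h2
  rw [← eval₂_id, ← h2, ← h1, RingHom.mem_ker.mp hg, map_zero]

lemma vanp_rho_of_P (hβ : ∀ x : Kˣ, x ∈ Subgroup.zpowers β)
    (hd : ∀ i, d i = orderOf (β ^ v i)) {g : MvPolynomial (Fin n) K}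
    (hg : g ∈ RingHom.ker (tor K d)) : Vanp v (rho K d g) := by
  intro x
  rw [eval_rho]
  have h : (fun i => ((x i : K) ^ v i) ^ d i) = fun _ : Fin n => (1 : K) := by
    funext i
    have hu := units_pow_vd hβ hd (x i) i
    calc ((x i : K) ^ v i) ^ d i = (((x i ^ v i) ^ d i : Kˣ) : K) := by push_cast; ring
      _ = 1 := by rw [hu]; simp
  rw [h]
  exact eval_one_of_mem_P hg

lemma wcomp_mem_P {g : MvPolynomial (Fin n) K} (hg : g ∈ RingHom.ker (tor K d)) (s : ℕ) :
    weightedHomogeneousComponent d s g ∈ RingHom.ker (tor K d) := by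
  classical
  rw [mem_P_iff] at hg ⊢
  intro s'
  have hsub : (weightedHomogeneousComponent d s g).support.filter
        (fun m => Finsupp.weight d m = s')
      ⊆ g.support.filter (fun m => Finsupp.weight d m = s') := by
    intro m hm
    rw [Finset.mem_filter] at hm ⊢
    refine ⟨?_, hm.2⟩
    have := hm.1
    rw [mem_support_iff, coeff_weightedHomogeneousComponent] at this
    rw [mem_support_iff]
    intro h0
    apply this
    split_ifs <;> simp [h0]
  rw [Finset.sum_subset hsub (fun m hm hnm => by
    rw [Finset.mem_filter] at hm
    by_contra hne
    exact hnm (Finset.mem_filter.mpr ⟨mem_support_iff.mpr (fun h0 => hne (by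
      rw [coeff_weightedHomogeneousComponent] at h0 ⊢
      exact h0)), hm.2⟩))]
  by_cases hss : s' = s
  · subst hss
    rw [← hg s']
    refine Finset.sum_congr rfl fun m hm => ?_
    rw [Finset.mem_filter] at hm
    rw [coeff_weightedHomogeneousComponent, if_pos hm.2]
  · refine Finset.sum_eq_zero fun m hm => ?_
    rw [Finset.mem_filter] at hm
    rw [coeff_weightedHomogeneousComponent, if_neg (by rw [hm.2]; exact fun h => hss h)]

lemma weight_one_eq (m : Fin n →₀ ℕ) :
    Finsupp.weight (1 : Fin n → ℕ) m = ∑ i, m i := by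
  rw [Finsupp.weight_apply, Finsupp.sum_fintype _ _ (fun i => by simp)]
  exact Finset.sum_congr rfl fun i _ => by simp

lemma weight_one_DD (m : Fin n →₀ ℕ) :
    Finsupp.weight (1 : Fin n → ℕ) (DD d m) = Finsupp.weight d m := by
  rw [weight_one_eq, Finsupp.weight_apply, Finsupp.sum_fintype _ _ (fun i => by simp)]
  refine Finset.sum_congr rfl fun i _ => ?_
  simp [mul_comm]

lemma isHomogeneous_rho_wh {g : MvPolynomial (Fin n) K} {s : ℕ}
    (hwh : IsWeightedHomogeneous d g s) : (rho K d g).IsHomogeneous s := by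
  intro m' hm'
  rw [show rho K d g = ∑ m ∈ g.support, monomial (DD d m) (coeff m g) from by
      conv_lhs => rw [g.as_sum]
      rw [map_sum]
      exact Finset.sum_congr rfl fun m _ => rho_monomial d m _] at hm'
  rw [MvPolynomial.coeff_sum] at hm'
  obtain ⟨m, hmmem, hmne⟩ := Finset.exists_ne_zero_of_sum_ne_zero hm'
  rw [coeff_monomial] at hmne
  by_cases he : DD d m = m'
  · subst he
    rw [weight_one_DD]
    exact hwh (mem_support_iff.mp hmmem)
  · exact absurd (if_neg he) hmne

def genSet (v : Fin n → ℕ) : Set (MvPolynomial (Fin n) K) :=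
  {f | (∃ e, f.IsHomogeneous e) ∧ Vanp v f}

lemma rho_wh_mem_genSet (hβ : ∀ x : Kˣ, x ∈ Subgroup.zpowers β)
    (hd : ∀ i, d i = orderOf (β ^ v i)) {g : MvPolynomial (Fin n) K} {s : ℕ}
    (hg : g ∈ RingHom.ker (tor K d)) (hwh : IsWeightedHomogeneous d g s) :
    rho K d g ∈ genSet (K := K) v :=
  ⟨⟨s, isHomogeneous_rho_wh hwh⟩, vanp_rho_of_P hβ hd hg⟩

lemma g_eq_sum_wcomp {M : Type} [AddCommMonoid M] [DecidableEq M] (w : Fin n → M)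
    (g : MvPolynomial (Fin n) K) :
    g = ∑ s ∈ g.support.image (Finsupp.weight w), weightedHomogeneousComponent w s g := by
  conv_lhs => rw [← sum_weightedHomogeneousComponent w g]
  refine finsum_eq_sum_of_support_subset _ ?_
  intro s hs
  simp only [Function.mem_support] at hs
  rw [Finset.coe_image]
  by_contra hmem
  exact hs (weightedHomogeneousComponent_eq_zero_of_notMem w g s (by
    simpa using hmem))

lemma genset_sub_map (hβ : ∀ x : Kˣ, x ∈ Subgroup.zpowers β)
    (hd : ∀ i, d i = orderOf (β ^ v i)) {f : MvPolynomial (Fin n) K}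
    (hf : f ∈ genSet (K := K) v) :
    f ∈ Ideal.map (rho K d) (RingHom.ker (tor K d)) := by
  obtain ⟨⟨e, he⟩, hvan⟩ := hf
  have hdp : ∀ i, 0 < d i := hdpos hβ hd
  rw [decomp hdp f]
  refine Ideal.sum_mem _ fun c _ => ?_
  refine Ideal.mul_mem_left _ _ (Ideal.mem_map_of_mem _ ?_)
  refine gpart_mem_P hdp f c e (fun m hm => ?_) ?_
  · rw [Finset.mem_filter] at hm
    exact he (mem_support_iff.mp hm.1)
  · exact class_sum hβ hd f hvan c

lemma IX_eq_map (hβ : ∀ x : Kˣ, x ∈ Subgroup.zpowers β)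
    (hd : ∀ i, d i = orderOf (β ^ v i)) :
    Ideal.span (genSet (K := K) v) = Ideal.map (rho K d) (RingHom.ker (tor K d)) := by
  apply le_antisymm
  · rw [Ideal.span_le]
    exact fun f hf => genset_sub_map hβ hd hf
  · rw [Ideal.map, Ideal.span_le]
    rintro - ⟨g, hg, rfl⟩
    rw [g_eq_sum_wcomp d g, map_sum]
    refine Ideal.sum_mem _ fun s _ => ?_
    exact Ideal.subset_span (rho_wh_mem_genSet hβ hd (wcomp_mem_P hg s)
      (weightedHomogeneousComponent_isWeightedHomogeneous s g))

end van

section grading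
variable (d : Fin n → ℕ)

abbrev Mw : Type := ((i : Fin n) → ZMod (d i)) × ℕ

noncomputable def ww : Fin n → Mw d := fun i => (Pi.single i 1, 1)

variable {d}

lemma weight_ww (m : Fin n →₀ ℕ) :
    Finsupp.weight (ww d) m = (cls d m, Finsupp.weight 1 m) := by
  rw [Finsupp.weight_apply, Finsupp.sum_fintype _ _ (fun i => by simp)]
  refine Prod.ext ?_ ?_
  · rw [Prod.fst_sum]
    funext j
    rw [Finset.sum_apply]
    rw [Finset.sum_eq_single j (fun i _ hij => by
        simp only [ww, Prod.smul_fst, Pi.smul_apply, Pi.single_eq_of_ne (Ne.symm hij), smul_zero])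
      (fun h => absurd (Finset.mem_univ j) h)]
    simp only [ww, Prod.smul_fst, Pi.smul_apply, Pi.single_eq_same]
    rw [nsmul_eq_mul, mul_one]
    rfl
  · rw [Prod.snd_sum, weight_one_eq]
    exact Finset.sum_congr rfl fun i _ => by simp [ww]

noncomputable local instance wwGraded (d : Fin n → ℕ) :
    GradedAlgebra (weightedHomogeneousSubmodule K (ww d)) :=
  weightedGradedAlgebra _ _

lemma decompose_coe (f : MvPolynomial (Fin n) K) (γ : Mw d) :
    ((DirectSum.decompose (weightedHomogeneousSubmodule K (ww d)) f γ :
        weightedHomogeneousSubmodule K (ww d) γ) : MvPolynomial (Fin n) K)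
      = weightedHomogeneousComponent (ww d) γ f :=
  MvPolynomial.decompose'_apply K (ww d) f γ

variable (K n) in
noncomputable def mpr : Ideal (MvPolynomial (Fin n) K) := Ideal.span (Set.range X)

lemma mem_mpr_of {f : MvPolynomial (Fin n) K} (h : coeff 0 f = 0) : f ∈ mpr K n := by
  rw [mpr, ← Set.image_univ, mem_ideal_span_X_image]
  intro m hm
  by_contra hc
  push_neg at hc
  have hm0 : m = 0 := Finsupp.ext fun i => by simpa using hc i (Set.mem_univ i)
  rw [mem_support_iff, hm0] at hm
  exact hm h

lemma sub_const_mem_mpr (a : MvPolynomial (Fin n) K) : a - C (coeff 0 a) ∈ mpr K n :=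
  mem_mpr_of (by rw [coeff_sub, coeff_C, if_pos rfl, sub_self])

lemma mpr_homog : (mpr K n).IsHomogeneous (weightedHomogeneousSubmodule K (ww d)) := by
  refine Ideal.homogeneous_span _ _ ?_
  rintro - ⟨i, rfl⟩
  exact ⟨ww d i, isWeightedHomogeneous_X K _ i⟩

lemma deg_ge_one {p : MvPolynomial (Fin n) K} {γ1 : Mw d} (hp : p ∈ mpr K n)
    (hwh : IsWeightedHomogeneous (ww d) p γ1) (hne : p ≠ 0) : 1 ≤ γ1.2 := by
  obtain ⟨m, hm⟩ := MvPolynomial.ne_zero_iff.mp hne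
  have hm' : m ∈ p.support := mem_support_iff.mpr hm
  have hwm := hwh hm
  rw [mpr, ← Set.image_univ, mem_ideal_span_X_image] at hp
  obtain ⟨i, -, hi⟩ := hp m hm'
  have h2 : γ1.2 = ∑ j, m j := by
    rw [← hwm, weight_ww, weight_one_eq]
  have h3 : m i ≤ ∑ j, m j :=
    Finset.single_le_sum (f := fun j => m j) (fun _ _ => Nat.zero_le _) (Finset.mem_univ i)
  omega

lemma descent (I J : Ideal (MvPolynomial (Fin n) K))
    (hIh : I.IsHomogeneous (weightedHomogeneousSubmodule K (ww d)))
    (hJh : J.IsHomogeneous (weightedHomogeneousSubmodule K (ww d)))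
    (hstep : I ≤ J ⊔ mpr K n * I) : I ≤ J := by
  classical
  have key : ∀ N : ℕ, ∀ γ : Mw d, ∀ x, x ∈ I → IsWeightedHomogeneous (ww d) x γ →
      γ.2 ≤ N → x ∈ J := by
    intro N
    induction N using Nat.strong_induction_on with
    | _ N IH =>
    intro γ x hxI hxwh hdeg
    obtain ⟨y, hyJ, z, hzmI, hyz⟩ := Submodule.mem_sup.mp (hstep hxI)
    have hy' : weightedHomogeneousComponent (ww d) γ y ∈ J := by
      have := hJh γ hyJ
      rwa [decompose_coe] at this
    have hz' : weightedHomogeneousComponent (ww d) γ z ∈ J := by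
      refine Submodule.mul_induction_on hzmI (fun p hp q hq => ?_) (fun a b ha hb => ?_)
      · have hpd := g_eq_sum_wcomp (ww d) p
        have hqd := g_eq_sum_wcomp (ww d) q
        have expand : weightedHomogeneousComponent (ww d) γ (p * q)
            = ∑ γ1 ∈ p.support.image (Finsupp.weight (ww d)),
              ∑ γ2 ∈ q.support.image (Finsupp.weight (ww d)),
                weightedHomogeneousComponent (ww d) γ
                  (weightedHomogeneousComponent (ww d) γ1 p
                    * weightedHomogeneousComponent (ww d) γ2 q) := by
          conv_lhs => rw [hpd, hqd, Finset.sum_mul_sum]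
          rw [map_sum]
          exact Finset.sum_congr rfl fun γ1 _ => by rw [map_sum]
        rw [expand]
        refine Ideal.sum_mem _ fun γ1 _ => Ideal.sum_mem _ fun γ2 _ => ?_
        have hp1 : IsWeightedHomogeneous (ww d) (weightedHomogeneousComponent (ww d) γ1 p) γ1 :=
          weightedHomogeneousComponent_isWeightedHomogeneous γ1 p
        have hq2 : IsWeightedHomogeneous (ww d) (weightedHomogeneousComponent (ww d) γ2 q) γ2 :=
          weightedHomogeneousComponent_isWeightedHomogeneous γ2 q
        have hmul := hp1.mul hq2
        by_cases hγ : γ1 + γ2 = γ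
        · rw [(hγ ▸ hmul : IsWeightedHomogeneous (ww d) _ γ).weightedHomogeneousComponent_same]
          by_cases hzero : weightedHomogeneousComponent (ww d) γ1 p = 0
          · rw [hzero, zero_mul]
            exact J.zero_mem
          · have hpmpr : weightedHomogeneousComponent (ww d) γ1 p ∈ mpr K n := by
              have := mpr_homog γ1 hp
              rwa [decompose_coe] at this
            have h1 : 1 ≤ γ1.2 := deg_ge_one hpmpr hp1 hzero
            have hqI : weightedHomogeneousComponent (ww d) γ2 q ∈ I := by
              have := hIh γ2 hq
              rwa [decompose_coe] at this
            have hsum2 : γ1.2 + γ2.2 = γ.2 := by rw [← hγ]; rfl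
            have hlt : γ2.2 < N := by omega
            exact Ideal.mul_mem_left _ _ (IH γ2.2 hlt γ2 _ hqI hq2 le_rfl)
        · rw [hmul.weightedHomogeneousComponent_ne γ
            (fun hh => hγ hh.symm)]
          exact J.zero_mem
      · rw [map_add]
        exact J.add_mem ha hb
    have hx : x = weightedHomogeneousComponent (ww d) γ y
        + weightedHomogeneousComponent (ww d) γ z := by
      have hxc : weightedHomogeneousComponent (ww d) γ x = x :=
        hxwh.weightedHomogeneousComponent_same
      rw [← hxc, ← hyz, map_add]
    rw [hx]
    exact J.add_mem hy' hz'
  intro x hxI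
  rw [← DirectSum.sum_support_decompose (weightedHomogeneousSubmodule K (ww d)) x]
  refine Ideal.sum_mem _ fun γ _ => ?_
  have hmem : ((DirectSum.decompose (weightedHomogeneousSubmodule K (ww d)) x γ :
      weightedHomogeneousSubmodule K (ww d) γ) : MvPolynomial (Fin n) K) ∈ I := hIh γ hxI
  have hwh : IsWeightedHomogeneous (ww d)
      ((DirectSum.decompose (weightedHomogeneousSubmodule K (ww d)) x γ :
        weightedHomogeneousSubmodule K (ww d) γ) : MvPolynomial (Fin n) K) γ := by
    rw [decompose_coe]
    exact weightedHomogeneousComponent_isWeightedHomogeneous γ x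
  exact key γ.2 γ _ hmem hwh le_rfl

variable {v : Fin n → ℕ} {β : Kˣ}

lemma coeff_sum_monomials (s : Finset (Fin n →₀ ℕ)) (F : (Fin n →₀ ℕ) → K) (m' : Fin n →₀ ℕ) :
    coeff m' (∑ m ∈ s, monomial m (F m)) = if m' ∈ s then F m' else 0 := by
  classical
  rw [MvPolynomial.coeff_sum]
  simp_rw [coeff_monomial]
  exact Finset.sum_ite_eq' s m' F

lemma piece_genSet_wh (hβ : ∀ x : Kˣ, x ∈ Subgroup.zpowers β)
    (hd : ∀ i, d i = orderOf (β ^ v i)) (f : MvPolynomial (Fin n) K) (e : ℕ)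
    (hhom : f.IsHomogeneous e) (hvan : Vanp v f) (c : (i : Fin n) → ZMod (d i)) :
    monomial (crep d c) 1 * rho K d (gpart d f c) ∈ genSet (K := K) v ∧
    IsWeightedHomogeneous (ww d) (monomial (crep d c) 1 * rho K d (gpart d f c)) (c, e) := by
  have hdp := hdpos hβ hd
  have heq := piece_eq hdp f c
  have hgp : gpart d f c ∈ RingHom.ker (tor K d) :=
    gpart_mem_P hdp f c e (fun m hm => by
      rw [Finset.mem_filter] at hm
      exact hhom (mem_support_iff.mp hm.1)) (class_sum hβ hd f hvan c)
  have hco : ∀ m', coeff m' (monomial (crep d c) 1 * rho K d (gpart d f c)) ≠ 0 →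
      m' ∈ f.support.filter (fun m => cls d m = c) := by
    intro m' h
    rw [heq, coeff_sum_monomials] at h
    by_cases hmem : m' ∈ f.support.filter (fun m => cls d m = c)
    · exact hmem
    · rw [if_neg hmem] at h
      exact absurd rfl h
  refine ⟨⟨⟨e, fun m' h => ?_⟩, fun x => ?_⟩, fun m' h => ?_⟩
  · have hm' := hco m' h
    rw [Finset.mem_filter] at hm'
    exact hhom (mem_support_iff.mp hm'.1)
  · rw [map_mul, vanp_rho_of_P hβ hd hgp x, mul_zero]
  · have hm' := hco m' h
    rw [Finset.mem_filter] at hm'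
    rw [weight_ww, hm'.2, hhom (mem_support_iff.mp hm'.1)]

def TSet (v d : Fin n → ℕ) : Set (MvPolynomial (Fin n) K) :=
  {x | x ∈ genSet v ∧ ∃ γ : Mw d, IsWeightedHomogeneous (ww d) x γ}

lemma span_genSet_eq_span_TSet (hβ : ∀ x : Kˣ, x ∈ Subgroup.zpowers β)
    (hd : ∀ i, d i = orderOf (β ^ v i)) :
    Ideal.span (genSet (K := K) v) = Ideal.span (TSet (K := K) v d) := by
  apply le_antisymm
  · rw [Ideal.span_le]
    intro f hf
    obtain ⟨⟨e, he⟩, hvan⟩ := hf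
    rw [decomp (hdpos hβ hd) f]
    refine Ideal.sum_mem _ fun c _ => Ideal.subset_span ?_
    obtain ⟨h1, h2⟩ := piece_genSet_wh hβ hd f e he hvan c
    exact ⟨h1, ⟨(c, e), h2⟩⟩
  · exact Ideal.span_mono fun x hx => hx.1

lemma IX_homog (hβ : ∀ x : Kˣ, x ∈ Subgroup.zpowers β)
    (hd : ∀ i, d i = orderOf (β ^ v i)) :
    (Ideal.span (genSet (K := K) v)).IsHomogeneous (weightedHomogeneousSubmodule K (ww d)) := by
  rw [span_genSet_eq_span_TSet hβ hd]
  exact Ideal.homogeneous_span _ _ fun x hx => by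
    obtain ⟨-, γ, hγ⟩ := hx
    exact ⟨γ, hγ⟩

lemma wh_form (hβ : ∀ x : Kˣ, x ∈ Subgroup.zpowers β)
    (hd : ∀ i, d i = orderOf (β ^ v i)) {x : MvPolynomial (Fin n) K} {γ : Mw d}
    (hvan : Vanp v x) (hwh : IsWeightedHomogeneous (ww d) x γ) :
    ∃ g ∈ RingHom.ker (tor K d), x = monomial (crep d γ.1) 1 * rho K d g := by
  have hdp := hdpos hβ hd
  refine ⟨gpart d x γ.1, ?_, ?_⟩
  · refine gpart_mem_P hdp x γ.1 γ.2 (fun m hm => ?_) (class_sum hβ hd x hvan γ.1)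
    rw [Finset.mem_filter] at hm
    have h := hwh (mem_support_iff.mp hm.1)
    rw [weight_ww] at h
    exact congrArg Prod.snd h
  · rw [piece_eq hdp x γ.1, Finset.filter_true_of_mem (fun m hm => ?_),
      support_sum_monomial_coeff]
    have h := hwh (mem_support_iff.mp hm)
    rw [weight_ww] at h
    exact congrArg Prod.fst h

end grading

section pidiv
variable (d : Fin n → ℕ)

noncomputable def qdiv (m : Fin n →₀ ℕ) : Fin n →₀ ℕ :=
  Finsupp.equivFunOnFinite.symm fun i => m i / d i

open Classical in
noncomputable def pidiv (f : MvPolynomial (Fin n) K) : MvPolynomial (Fin n) K :=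
  ∑ m ∈ f.support, if (∀ i, d i ∣ m i) then monomial (qdiv d m) (coeff m f) else 0

variable {d}

open Classical in
lemma pidiv_eq_sum_of_subset (h : MvPolynomial (Fin n) K) (s : Finset (Fin n →₀ ℕ))
    (hs : h.support ⊆ s) :
    pidiv d h = ∑ m ∈ s, if (∀ i, d i ∣ m i) then monomial (qdiv d m) (coeff m h) else 0 := by
  rw [pidiv]
  refine Finset.sum_subset hs fun m hm hnm => ?_
  rw [notMem_support_iff.mp hnm]
  split_ifs <;> simp

lemma pidiv_add (f g : MvPolynomial (Fin n) K) :
    pidiv d (f + g) = pidiv d f + pidiv d g := by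
  classical
  rw [pidiv_eq_sum_of_subset f (f.support ∪ g.support) Finset.subset_union_left,
    pidiv_eq_sum_of_subset g (f.support ∪ g.support) Finset.subset_union_right,
    pidiv_eq_sum_of_subset (f + g) (f.support ∪ g.support) (MvPolynomial.support_add),
    ← Finset.sum_add_distrib]
  refine Finset.sum_congr rfl fun m _ => ?_
  rw [coeff_add]
  split_ifs
  · rw [map_add]
  · rw [add_zero]

lemma pidiv_zero : pidiv d (0 : MvPolynomial (Fin n) K) = 0 := by
  rw [pidiv, support_zero, Finset.sum_empty]

open Classical in
lemma pidiv_monomial (m : Fin n →₀ ℕ) (a : K) :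
    pidiv d (monomial m a)
      = if (∀ i, d i ∣ m i) then monomial (qdiv d m) a else 0 := by
  by_cases ha : a = 0
  · subst ha
    rw [map_zero, pidiv_zero]
    split_ifs <;> simp
  · rw [pidiv, support_monomial, if_neg ha, Finset.sum_singleton, coeff_monomial, if_pos rfl]

variable (hdp : ∀ i, 0 < d i)
include hdp

open Classical in
lemma pidiv_monomial_mul_rho (u : Fin n →₀ ℕ) (a : K) (g : MvPolynomial (Fin n) K) :
    pidiv d (monomial u a * rho K d g)
      = if (∀ i, d i ∣ u i) then monomial (qdiv d u) a * g else 0 := by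
  induction g using MvPolynomial.induction_on' with
  | monomial m b =>
    rw [rho_monomial, monomial_mul, pidiv_monomial]
    have hcond : (∀ i, d i ∣ (u + DD d m) i) ↔ (∀ i, d i ∣ u i) := by
      refine forall_congr' fun i => ?_
      rw [Finsupp.add_apply, DD_apply, Nat.add_comm (u i)]
      exact Nat.dvd_add_right (dvd_mul_right _ _)
    rw [if_congr hcond rfl rfl]
    split_ifs with hcnd
    · have hexp : qdiv d (u + DD d m) = qdiv d u + m := by
        ext i
        simp only [qdiv, Finsupp.coe_equivFunOnFinite_symm, Finsupp.add_apply, DD_apply]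
        rw [Nat.add_mul_div_left _ _ (hdp i)]
      rw [monomial_mul, hexp]
    · rfl
  | add p q hp hq =>
    rw [map_add, mul_add, pidiv_add, hp, hq]
    split_ifs
    · rw [mul_add]
    · rw [add_zero]

lemma pidiv_rho (g : MvPolynomial (Fin n) K) : pidiv d (rho K d g) = g := by
  classical
  have h := pidiv_monomial_mul_rho hdp 0 1 g
  have hcond : (∀ i : Fin n, d i ∣ (0 : Fin n →₀ ℕ) i) := fun i => by simp
  rw [if_pos hcond] at h
  have h0 : (monomial (0 : Fin n →₀ ℕ) (1 : K)) = 1 := by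
    rw [monomial_zero', C_1]
  have h1 : qdiv d (0 : Fin n →₀ ℕ) = 0 := by
    ext i
    simp [qdiv]
  rw [h0, h1, one_mul, h0, one_mul] at h
  exact h

end pidiv

lemma span_range_of_card_le {N r : ℕ} (hr : r ≤ N) (G : Fin r → MvPolynomial (Fin n) K) :
    ∃ G' : Fin N → MvPolynomial (Fin n) K,
      Ideal.span (Set.range G') = Ideal.span (Set.range G) := by
  refine ⟨fun k => if hk : (k : ℕ) < r then G ⟨k, hk⟩ else 0, le_antisymm ?_ ?_⟩
  · rw [Ideal.span_le]
    rintro - ⟨k, rfl⟩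
    dsimp only
    by_cases hk : (k : ℕ) < r
    · rw [dif_pos hk]
      exact Ideal.subset_span ⟨⟨k, hk⟩, rfl⟩
    · rw [dif_neg hk]
      exact Ideal.zero_mem _
  · rw [Ideal.span_le]
    rintro - ⟨j, rfl⟩
    have hj : (j : ℕ) < N := lt_of_lt_of_le j.2 hr
    refine Ideal.subset_span ⟨⟨j, hj⟩, ?_⟩
    dsimp only
    rw [dif_pos j.2]

end CIq

attribute [local instance] CIq.wwGraded

open CIq in
/-- **Corollary.** With `K = 𝔽_q`, `β` a generator of `Kˣ`, `d i = orderOf (β ^ v i)`,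
`IX` the vanishing ideal of the degenerate projective torus parameterized by `x_i ^ v_i`
and `P` the toric ideal (kernel of `t_i ↦ y ^ d i`), the ideal `IX` is a complete
intersection (generated by `n - 1 = ht IX` elements) if and only if `P` is a complete
intersection (generated by `n - 1 = ht P` elements). -/
theorem vanishing_ideal_ci_iff_toric_ci
    (K : Type) [Field K] [Fintype K] (n : ℕ) (hn : 2 ≤ n)
    (v : Fin n → ℕ) (hv : ∀ i, 0 < v i)
    (β : Kˣ) (hβ : ∀ x : Kˣ, x ∈ Subgroup.zpowers β)
    (d : Fin n → ℕ) (hd : ∀ i, d i = orderOf (β ^ v i))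
    (IX : Ideal (MvPolynomial (Fin n) K))
    (hIX : IX = Ideal.span {f : MvPolynomial (Fin n) K |
      (∃ e, f.IsHomogeneous e) ∧
      ∀ x : Fin n → Kˣ, eval (fun i => (x i : K) ^ v i) f = 0})
    (P : Ideal (MvPolynomial (Fin n) K))
    (hP : P = RingHom.ker (aeval (fun i : Fin n => (Polynomial.X : Polynomial K) ^ d i) :
      MvPolynomial (Fin n) K →ₐ[K] Polynomial K)) :
    (∃ h : Fin (n - 1) → MvPolynomial (Fin n) K, IX = Ideal.span (Set.range h)) ↔
    (∃ g : Fin (n - 1) → MvPolynomial (Fin n) K, P = Ideal.span (Set.range g)) := by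
  classical
  have hdp : ∀ i, 0 < d i := CIq.hdpos hβ hd
  have hIX' : IX = Ideal.span (genSet (K := K) v) := hIX
  have hP' : P = RingHom.ker (tor K d) := hP
  clear hIX hP
  subst hIX' hP'
  constructor
  · rintro ⟨h, hIXh⟩
    set I : Ideal (MvPolynomial (Fin n) K) := Ideal.span (genSet (K := K) v) with hIdef
    have hIhom : I.IsHomogeneous (weightedHomogeneousSubmodule K (ww d)) := IX_homog hβ hd
    set mI : Ideal (MvPolynomial (Fin n) K) := mpr K n * I with hmIdef
    set qm : MvPolynomial (Fin n) K →ₐ[K] (MvPolynomial (Fin n) K ⧸ mI) :=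
      Ideal.Quotient.mkₐ K mI with hqmdef
    have hhkI : ∀ k, h k ∈ I := fun k => by
      rw [hIXh]
      exact Ideal.subset_span ⟨k, rfl⟩
    set comps : Finset (MvPolynomial (Fin n) K) :=
      Finset.univ.biUnion (fun k => ((h k).support.image (Finsupp.weight (ww d))).image
        (fun γ => weightedHomogeneousComponent (ww d) γ (h k))) with hcompsdef
    have hcomp_mem : ∀ x ∈ comps, x ∈ I ∧ ∃ γ, IsWeightedHomogeneous (ww d) x γ := by
      intro x hx
      rw [hcompsdef, Finset.mem_biUnion] at hx
      obtain ⟨k, -, hx⟩ := hx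
      rw [Finset.mem_image] at hx
      obtain ⟨γ, -, rfl⟩ := hx
      refine ⟨?_, γ, weightedHomogeneousComponent_isWeightedHomogeneous γ (h k)⟩
      have := hIhom γ (hhkI k)
      rwa [decompose_coe] at this
    have hqU : ∀ x ∈ I, qm x ∈ Submodule.span K (Set.range (fun k => qm (h k))) := by
      intro x hx
      rw [hIXh] at hx
      obtain ⟨a, ha⟩ := (Submodule.mem_span_range_iff_exists_fun _).mp hx
      have hxa : x = ∑ k, a k * h k := by
        rw [← ha]
        simp_rw [smul_eq_mul]
      rw [hxa, map_sum]
      refine Submodule.sum_mem _ fun k _ => ?_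
      have hsplit : a k * h k
          = (a k - C (coeff 0 (a k))) * h k + (coeff 0 (a k)) • h k := by
        rw [smul_eq_C_mul]
        ring
      rw [hsplit, map_add]
      have hz : qm ((a k - C (coeff 0 (a k))) * h k) = 0 := by
        rw [hqmdef, Ideal.Quotient.mkₐ_eq_mk, Ideal.Quotient.eq_zero_iff_mem, hmIdef]
        exact Ideal.mul_mem_mul (sub_const_mem_mpr _) (hhkI k)
      rw [hz, zero_add, map_smul]
      exact Submodule.smul_mem _ _ (Submodule.subset_span ⟨k, rfl⟩)
    have hWU : Submodule.span K (⇑qm '' ↑comps)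
        = Submodule.span K (Set.range (fun k => qm (h k))) := by
      apply le_antisymm
      · rw [Submodule.span_le]
        rintro - ⟨x, hx, rfl⟩
        exact hqU x (hcomp_mem x (Finset.mem_coe.mp hx)).1
      · rw [Submodule.span_le]
        rintro - ⟨k, rfl⟩
        dsimp only
        have hdc := g_eq_sum_wcomp (ww d) (h k)
        rw [show qm (h k) = ∑ γ ∈ (h k).support.image (Finsupp.weight (ww d)),
            qm (weightedHomogeneousComponent (ww d) γ (h k)) from by
          conv_lhs => rw [hdc]
          rw [map_sum]]
        refine Submodule.sum_mem _ fun γ hγ => Submodule.subset_span ⟨_, ?_, rfl⟩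
        refine Finset.mem_coe.mpr (Finset.mem_biUnion.mpr ⟨k, Finset.mem_univ k, ?_⟩)
        exact Finset.mem_image_of_mem _ hγ
    obtain ⟨b, hbsub, hbspan, hbli⟩ := exists_linearIndependent K (⇑qm '' ↑comps)
    have hbfin : b.Finite := ((comps.finite_toSet).image _).subset hbsub
    haveI := hbfin.fintype
    have hfin1 : Module.finrank K (Submodule.span K b) = b.toFinset.card :=
      finrank_span_set_eq_card hbli
    have hfin2 : Module.finrank K
        (Submodule.span K (Set.range (fun k => qm (h k)))) ≤ n - 1 := by
      have h3 := finrank_range_le_card (R := K) (fun k => qm (h k))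
      simpa [Set.finrank] using h3
    have hcard : b.toFinset.card ≤ n - 1 := by
      calc b.toFinset.card = Module.finrank K (Submodule.span K b) := hfin1.symm
        _ ≤ n - 1 := by rw [hbspan, hWU]; exact hfin2
    set bl := b.toFinset.toList with hbl
    have hblen : bl.length ≤ n - 1 := by
      rw [hbl, Finset.length_toList]
      exact hcard
    have hget : ∀ j : Fin bl.length, bl.get j ∈ b := fun j => by
      have h1 : bl.get j ∈ bl := List.get_mem bl j
      exact Set.mem_toFinset.mp (Finset.mem_toList.mp h1)
    have hpre : ∀ j : Fin bl.length, ∃ x, (x ∈ I ∧ ∃ γ, IsWeightedHomogeneous (ww d) x γ)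
        ∧ qm x = bl.get j := by
      intro j
      obtain ⟨x, hx, hqx⟩ := hbsub (hget j)
      exact ⟨x, hcomp_mem x hx, hqx⟩
    choose FF hFF1 hFF2 using hpre
    set J : Ideal (MvPolynomial (Fin n) K) := Ideal.span (Set.range FF) with hJdef
    have hJI : J ≤ I := by
      rw [hJdef, Ideal.span_le]
      rintro - ⟨j, rfl⟩
      exact (hFF1 j).1
    have hJhom : J.IsHomogeneous (weightedHomogeneousSubmodule K (ww d)) := by
      refine Ideal.homogeneous_span _ _ ?_
      rintro - ⟨j, rfl⟩
      obtain ⟨γ, hγ⟩ := (hFF1 j).2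
      exact ⟨γ, hγ⟩
    have hbsub2 : b ⊆ ⇑qm '' Set.range FF := by
      intro y hy
      have h1 : y ∈ b.toFinset := Set.mem_toFinset.mpr hy
      obtain ⟨j, hj⟩ := List.mem_iff_get.mp (Finset.mem_toList.mpr h1)
      exact ⟨FF j, ⟨j, rfl⟩, by rw [hFF2 j, hj]⟩
    have hstep : I ≤ J ⊔ mpr K n * I := by
      intro x hx
      have h2 : qm x ∈ Submodule.span K b := by
        rw [hbspan, hWU]
        exact hqU x hx
      have h1 : qm x ∈ Submodule.span K (⇑qm '' Set.range FF) :=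
        Submodule.span_mono hbsub2 h2
      have himg : Submodule.span K (⇑qm '' Set.range FF)
          = Submodule.map qm.toLinearMap (Submodule.span K (Set.range FF)) :=
        Submodule.span_image qm.toLinearMap
      rw [himg] at h1
      obtain ⟨y, hy, hqy⟩ := Submodule.mem_map.mp h1
      have hqy' : qm y = qm x := hqy
      have hxy : x - y ∈ mpr K n * I := by
        have h4 : qm (x - y) = 0 := by
          rw [map_sub, hqy', sub_self]
        rw [hqmdef, Ideal.Quotient.mkₐ_eq_mk, Ideal.Quotient.eq_zero_iff_mem, hmIdef] at h4
        exact h4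
      have hyJ : y ∈ J :=
        Submodule.span_le_restrictScalars K (MvPolynomial (Fin n) K) (Set.range FF) hy
      rw [show x = y + (x - y) from by ring]
      exact Submodule.add_mem_sup hyJ hxy
    have hIJ : I = J := le_antisymm (descent I J hIhom hJhom hstep) hJI
    have hform : ∀ j, ∃ g ∈ RingHom.ker (tor K d), ∃ c, FF j = monomial c 1 * rho K d g := by
      intro j
      obtain ⟨γ, hγ⟩ := (hFF1 j).2
      obtain ⟨g, hg, hgeq⟩ := wh_form hβ hd
        (vanp_of_mem_span (fun t ht => ht.2) (hFF1 j).1) hγ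
      exact ⟨g, hg, _, hgeq⟩
    choose GG hGG1 cc hGG2 using hform
    have hPspan : RingHom.ker (tor K d) = Ideal.span (Set.range GG) := by
      apply le_antisymm
      · intro p hp
        have hrp : rho K d p ∈ J := by
          rw [← hIJ, hIdef, IX_eq_map hβ hd]
          exact Ideal.mem_map_of_mem _ hp
        have hkey : ∀ x, x ∈ J →
            ∀ u a, pidiv d (monomial u a * x) ∈ Ideal.span (Set.range GG) := by
          intro x hx
          rw [hJdef] at hx
          refine Submodule.span_induction
            (p := fun x _ => ∀ u a, pidiv d (monomial u a * x) ∈ Ideal.span (Set.range GG))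
            ?_ ?_ ?_ ?_ hx
          · rintro - ⟨j, rfl⟩ u a
            rw [hGG2 j, ← mul_assoc, monomial_mul, pidiv_monomial_mul_rho hdp]
            split_ifs
            · exact Ideal.mul_mem_left _ _ (Ideal.subset_span ⟨j, rfl⟩)
            · exact Ideal.zero_mem _
          · intro u a
            rw [mul_zero, pidiv_zero]
            exact Ideal.zero_mem _
          · intro x1 x2 _ _ hx1 hx2 u a
            rw [mul_add, pidiv_add]
            exact Ideal.add_mem _ (hx1 u a) (hx2 u a)
          · intro r x1 _ hx1
            induction r using MvPolynomial.induction_on' with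
            | monomial m b1 =>
              intro u a
              rw [smul_eq_mul, ← mul_assoc, monomial_mul]
              exact hx1 _ _
            | add r1 r2 hr1 hr2 =>
              intro u a
              have hp' := hr1 u a
              have hq' := hr2 u a
              rw [smul_eq_mul] at hp' hq'
              rw [smul_eq_mul, add_mul, mul_add, pidiv_add]
              exact Ideal.add_mem _ hp' hq'
        have h5 := hkey _ hrp 0 1
        rwa [show (monomial (0 : Fin n →₀ ℕ) (1 : K)) = 1 from by rw [monomial_zero', C_1],
          one_mul, pidiv_rho hdp] at h5
      · rw [Ideal.span_le]
        rintro - ⟨j, rfl⟩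
        exact hGG1 j
    obtain ⟨G', hG'⟩ := span_range_of_card_le hblen GG
    refine ⟨G', ?_⟩
    show RingHom.ker (tor K d) = _
    rw [hG']
    exact hPspan
  · rintro ⟨g, hPg⟩
    refine ⟨fun k => rho K d (g k), ?_⟩
    show Ideal.span (genSet (K := K) v) = _
    calc Ideal.span (genSet (K := K) v)
        = Ideal.map (rho K d) (RingHom.ker (tor K d)) := IX_eq_map hβ hd
      _ = Ideal.map (rho K d) (Ideal.span (Set.range g)) := by rw [← hPg]
      _ = Ideal.span (⇑(rho K d) '' Set.range g) := Ideal.map_span _ _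
      _ = Ideal.span (Set.range fun k => rho K d (g k)) := by rw [← Set.range_comp]; rfl
end

section
/- Set r = gcd(d_1, …, d_n), d_i′ = o(β^{r v_i}) for i = 1, …, n, and let 𝒮′ = ℕd_1′ + ⋯ + ℕd_n′ (a numerical semigroup, since gcd(d_1′, …, d_n′) = 1). If the vanishing ideal I(X) is a complete intersection, then the index of regularity satisfies reg(S/I(X)) = r · g(𝒮′) + (d_1 + ⋯ + d_n) − (n − 1), where g(𝒮′) is the Frobenius number of 𝒮′. -/
open MvPolynomial


open Finset in
lemma card_image_eq_card_image {α β γ : Type*} [DecidableEq β] [DecidableEq γ]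
    (A : Finset α) (f : α → β) (g : α → γ)
    (h : ∀ a ∈ A, ∀ a' ∈ A, f a = f a' ↔ g a = g a') :
    (A.image f).card = (A.image g).card := by
  classical
  have h1 : (A.image fun a => (f a, g a)).image Prod.fst = A.image f := by
    rw [Finset.image_image]; rfl
  have h2 : (A.image fun a => (f a, g a)).image Prod.snd = A.image g := by
    rw [Finset.image_image]; rfl
  have c1 : ((A.image fun a => (f a, g a)).image Prod.fst).card
      = (A.image fun a => (f a, g a)).card := by
    apply Finset.card_image_of_injOn
    rintro x hx y hy hxy
    simp only [Finset.coe_image, Set.mem_image, Finset.mem_coe] at hx hy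
    obtain ⟨a, ha, rfl⟩ := hx
    obtain ⟨a', ha', rfl⟩ := hy
    simp only at hxy ⊢
    exact Prod.ext hxy ((h a ha a' ha').1 hxy)
  have c2 : ((A.image fun a => (f a, g a)).image Prod.snd).card
      = (A.image fun a => (f a, g a)).card := by
    apply Finset.card_image_of_injOn
    rintro x hx y hy hxy
    simp only [Finset.coe_image, Set.mem_image, Finset.mem_coe] at hx hy
    obtain ⟨a, ha, rfl⟩ := hx
    obtain ⟨a', ha', rfl⟩ := hy
    simp only at hxy ⊢
    exact Prod.ext ((h a ha a' ha').2 hxy) hxy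
  rw [← h1, ← h2, c1, c2]


lemma mod_cycle1 {D b : ℕ} (hD : 0 < D) (hb : b < D) :
    ((b + 1) % D + (D - 1)) % D = b := by
  rcases Nat.lt_or_ge (b+1) D with h | h
  · rw [Nat.mod_eq_of_lt h]
    have e : b + 1 + (D - 1) = b + D := by omega
    rw [e, Nat.add_mod_right, Nat.mod_eq_of_lt hb]
  · have hbD : b + 1 = D := by omega
    have e1 : D - 1 < D := by omega
    rw [hbD, Nat.mod_self, Nat.zero_add, Nat.mod_eq_of_lt e1]
    omega
lemma mod_cycle2 {D b : ℕ} (hD : 0 < D) (hb : b < D) :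
    ((b + (D - 1)) % D + 1) % D = b := by
  rcases Nat.eq_zero_or_pos b with rfl | h
  · have e1 : D - 1 < D := by omega
    rw [Nat.zero_add, Nat.mod_eq_of_lt e1]
    have e : D - 1 + 1 = D := by omega
    rw [e, Nat.mod_self]
  · have e : b + (D - 1) = (b - 1) + D := by omega
    have e1 : b - 1 < D := by omega
    rw [e, Nat.add_mod_right, Nat.mod_eq_of_lt e1]
    have e2 : b - 1 + 1 = b := by omega
    rw [e2, Nat.mod_eq_of_lt hb]
lemma sum_update_int {n : ℕ} (b : Fin n → ℕ) (i0 : Fin n) (t : ℕ) :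
    (∑ i, ((Function.update b i0 t i : ℕ) : ℤ)) = (∑ i, (b i : ℤ)) - (b i0 : ℤ) + t := by
  classical
  have h1 : (fun i => ((Function.update b i0 t i : ℕ) : ℤ))
      = Function.update (fun i => (b i : ℤ)) i0 (t : ℤ) := by
    funext j
    by_cases hj : j = i0
    · subst hj; simp
    · simp [Function.update_of_ne hj]
  calc (∑ i, ((Function.update b i0 t i : ℕ) : ℤ))
      = ∑ i, Function.update (fun i => (b i : ℤ)) i0 (t : ℤ) i := by rw [h1]
    _ = (t : ℤ) + ∑ i ∈ Finset.univ \ {i0}, (b i : ℤ) :=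
        Finset.sum_update_of_mem (Finset.mem_univ i0) _ _
    _ = (∑ i, (b i : ℤ)) - (b i0 : ℤ) + t := by
        rw [Finset.sdiff_singleton_eq_erase]
        have := Finset.add_sum_erase Finset.univ (fun i => (b i : ℤ)) (Finset.mem_univ i0)
        linarith

noncomputable def chi (K : Type) [Field K] (n : ℕ) (v : Fin n → ℕ) (a : Fin n → ℕ) :
    (Fin n → Kˣ) →* K where
  toFun x := ∏ i, ((x i : K) ^ (v i * a i))
  map_one' := by simp
  map_mul' x y := by
    simp only [Pi.mul_apply, Units.val_mul, mul_pow]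
    rw [Finset.prod_mul_distrib]

lemma chi_apply (K : Type) [Field K] (n : ℕ) (v : Fin n → ℕ) (a : Fin n → ℕ)
    (x : Fin n → Kˣ) : chi K n v a x = ∏ i, ((x i : K) ^ (v i * a i)) := rfl

lemma chi_eq_iff (K : Type) [Field K] (n : ℕ) (v : Fin n → ℕ)
    (β : Kˣ) (hβ : ∀ x : Kˣ, x ∈ Subgroup.zpowers β)
    (d : Fin n → ℕ) (hd : ∀ i, d i = orderOf (β ^ v i))
    (a a' : Fin n → ℕ) :
    chi K n v a = chi K n v a' ↔ ∀ i, a i % d i = a' i % d i := by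
  constructor
  · intro h i
    have hx := congrFun (congrArg (fun f : (Fin n → Kˣ) →* K => (f : (Fin n → Kˣ) → K)) h)
      (Function.update (1 : Fin n → Kˣ) i β)
    simp only [chi_apply] at hx
    have key : ∀ b : Fin n → ℕ,
        (∏ j, ((Function.update (1 : Fin n → Kˣ) i β j : K) ^ (v j * b j)))
          = ((β ^ (v i * b i) : Kˣ) : K) := by
      intro b
      rw [Finset.prod_eq_single i]
      · rw [Function.update_self, Units.val_pow_eq_pow_val]
      · intro j _ hj
        rw [Function.update_of_ne hj]
        simp
      · simp
    rw [key a, key a'] at hx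
    have hu : (β ^ (v i * a i) : Kˣ) = β ^ (v i * a' i) := Units.ext hx
    rw [pow_mul, pow_mul] at hu
    have := (pow_eq_pow_iff_modEq).mp hu
    rw [← hd i] at this
    exact this
  · intro h
    refine MonoidHom.ext fun x => ?_
    rw [chi_apply, chi_apply]
    refine Finset.prod_congr rfl fun i _ => ?_
    obtain ⟨k, hk⟩ := Subgroup.mem_zpowers_iff.mp (hβ (x i))
    have hone : (x i) ^ (v i * d i) = 1 := by
      have hβ1 : β ^ (v i * d i) = 1 := by
        rw [pow_mul, hd i, pow_orderOf_eq_one]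
      rw [← hk, ← zpow_natCast, ← zpow_mul, mul_comm k _, zpow_mul, zpow_natCast, hβ1,
        one_zpow]
    have hdvd : orderOf (x i) ∣ v i * d i := orderOf_dvd_of_pow_eq_one hone
    have hmod : v i * a i ≡ v i * a' i [MOD orderOf (x i)] := by
      refine Nat.ModEq.of_dvd hdvd ?_
      exact Nat.ModEq.mul_left' (c := v i) (h i)
    have hu : (x i) ^ (v i * a i) = (x i) ^ (v i * a' i) :=
      (pow_eq_pow_iff_modEq).mpr hmod
    calc ((x i : K)) ^ (v i * a i) = (((x i) ^ (v i * a i) : Kˣ) : K) := by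
          rw [Units.val_pow_eq_pow_val]
      _ = (((x i) ^ (v i * a' i) : Kˣ) : K) := by rw [hu]
      _ = ((x i : K)) ^ (v i * a' i) := by rw [Units.val_pow_eq_pow_val]
lemma degree_symm_eq {n : ℕ} (a : Fin n → ℕ) :
    (Finsupp.equivFunOnFinite.symm a).degree = ∑ i, a i := by
  rw [Finsupp.degree]
  refine Finset.sum_subset (Finset.subset_univ _) fun i _ hi => ?_
  simpa [Finsupp.equivFunOnFinite] using Finsupp.notMem_support_iff.mp hi

lemma homogeneousSubmodule_eq_span (K : Type) [Field K] (n m : ℕ) :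
    homogeneousSubmodule (Fin n) K m = Submodule.span K
      ((fun a : Fin n → ℕ => (monomial (Finsupp.equivFunOnFinite.symm a) (1 : K)))
        '' {a | ∑ i, a i = m}) := by
  apply le_antisymm
  · intro f hf
    rw [mem_homogeneousSubmodule] at hf
    rw [← support_sum_monomial_coeff f]
    refine Submodule.sum_mem _ fun a ha => ?_
    have hcoeff : coeff a f ≠ 0 := mem_support_iff.mp ha
    have hdeg : a.degree = m := by rw [Finsupp.degree_eq_weight_one]; exact hf hcoeff
    have hmem : (monomial a (1 : K)) ∈
        ((fun a : Fin n → ℕ => (monomial (Finsupp.equivFunOnFinite.symm a) (1 : K)))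
          '' {a | ∑ i, a i = m}) := by
      refine ⟨Finsupp.equivFunOnFinite a, ?_, ?_⟩
      · have := degree_symm_eq (Finsupp.equivFunOnFinite a)
        simp only [Equiv.symm_apply_apply] at this
        rw [Set.mem_setOf_eq, ← this, hdeg]
      · simp
    have : monomial a (coeff a f) = (coeff a f) • (monomial a (1 : K)) := by
      rw [smul_monomial, smul_eq_mul, mul_one]
    rw [this]
    exact Submodule.smul_mem _ _ (Submodule.subset_span hmem)
  · rw [Submodule.span_le]
    rintro _ ⟨a, ha, rfl⟩
    rw [SetLike.mem_coe, mem_homogeneousSubmodule]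
    exact isHomogeneous_monomial _ (by rw [degree_symm_eq]; exact ha)

lemma H_eq_card (K : Type) [Field K] [Fintype K] (n : ℕ) [DecidableEq ((Fin n → Kˣ) →* K)] (v : Fin n → ℕ)
    (IX : Ideal (MvPolynomial (Fin n) K))
    (hIX : IX = Ideal.span {f : MvPolynomial (Fin n) K |
      (∃ e, f.IsHomogeneous e) ∧
      ∀ x : Fin n → Kˣ, eval (fun i => (x i : K) ^ v i) f = 0})
    (m : ℕ) :
    Module.finrank K ((homogeneousSubmodule (Fin n) K m) ⧸
        Submodule.comap (homogeneousSubmodule (Fin n) K m).subtype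
          (Submodule.restrictScalars K IX))
      = ((Finset.Nat.antidiagonalTuple n m).image (chi K n v)).card := by
  classical
  set pt : (Fin n → Kˣ) → Fin n → K := fun x i => (x i : K) ^ v i with hpt
  set T : MvPolynomial (Fin n) K →ₗ[K] ((Fin n → Kˣ) → K) :=
    LinearMap.pi (fun x => (aeval (R := K) (pt x)).toLinearMap) with hTdef
  have hT : ∀ f x, T f x = eval (pt x) f := by
    intro f x
    have h1 : T f x = aeval (R := K) (pt x) f := rfl
    rw [h1, ← coe_aeval_eq_eval]
    rfl
  have hvanish : ∀ g ∈ IX, ∀ x, eval (pt x) g = 0 := by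
    intro g hg x
    rw [hIX] at hg
    have hle : Ideal.span {f : MvPolynomial (Fin n) K |
        (∃ e, f.IsHomogeneous e) ∧
        ∀ x : Fin n → Kˣ, eval (fun i => (x i : K) ^ v i) f = 0}
        ≤ RingHom.ker (eval (pt x)) :=
      Ideal.span_le.mpr (fun f hf => RingHom.mem_ker.mpr (hf.2 x))
    exact RingHom.mem_ker.mp (hle hg)
  have hker : Submodule.comap (homogeneousSubmodule (Fin n) K m).subtype
      (Submodule.restrictScalars K IX)
      = LinearMap.ker (T ∘ₗ (homogeneousSubmodule (Fin n) K m).subtype) := by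
    ext f
    simp only [Submodule.mem_comap, Submodule.restrictScalars_mem, LinearMap.mem_ker,
      LinearMap.comp_apply, Submodule.subtype_apply]
    constructor
    · intro hfI
      funext x
      rw [hT]
      exact hvanish _ hfI x
    · intro hfT
      rw [hIX]
      refine Ideal.subset_span ⟨⟨m, (mem_homogeneousSubmodule _ _).mp f.2⟩, fun x => ?_⟩
      have := congrFun hfT x
      rw [hT] at this
      exact this
  have e1 : ((homogeneousSubmodule (Fin n) K m) ⧸
      Submodule.comap (homogeneousSubmodule (Fin n) K m).subtype
        (Submodule.restrictScalars K IX)) ≃ₗ[K]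
      LinearMap.range (T ∘ₗ (homogeneousSubmodule (Fin n) K m).subtype) :=
    (Submodule.quotEquivOfEq _ _ hker).trans (LinearMap.quotKerEquivRange _)
  rw [LinearEquiv.finrank_eq e1]
  have e2 : LinearMap.range (T ∘ₗ (homogeneousSubmodule (Fin n) K m).subtype)
      = Submodule.map T (homogeneousSubmodule (Fin n) K m) := by
    rw [LinearMap.range_comp, Submodule.range_subtype]
  rw [e2, homogeneousSubmodule_eq_span K n m, Submodule.map_span]
  set Ξ : Finset ((Fin n → Kˣ) →* K) :=
    (Finset.Nat.antidiagonalTuple n m).image (chi K n v) with hΞ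
  have e3 : T '' ((fun a : Fin n → ℕ =>
        (monomial (Finsupp.equivFunOnFinite.symm a) (1 : K))) '' {a | ∑ i, a i = m})
      = (fun χ : (Fin n → Kˣ) →* K => (χ : (Fin n → Kˣ) → K)) '' (↑Ξ : Set _) := by
    have hcoe : (↑Ξ : Set ((Fin n → Kˣ) →* K)) = chi K n v '' {a | ∑ i, a i = m} := by
      rw [hΞ, Finset.coe_image]
      congr 1
      ext a
      simp [Finset.Nat.mem_antidiagonalTuple]
    rw [hcoe, ← Set.image_comp, ← Set.image_comp]
    refine Set.image_congr fun a _ => ?_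
    funext x
    simp only [Function.comp_apply]
    rw [hT, eval_monomial]
    rw [Finsupp.prod_fintype _ _ (fun i => pow_zero _)]
    rw [chi_apply]
    rw [one_mul]
    refine Finset.prod_congr rfl fun i _ => ?_
    rw [Finsupp.equivFunOnFinite_symm_apply_apply, ← pow_mul]
  rw [e3]
  have li : LinearIndependent K fun χ : ↑(↑Ξ : Set ((Fin n → Kˣ) →* K)) =>
      ((χ : (Fin n → Kˣ) →* K) : (Fin n → Kˣ) → K) :=
    (linearIndependent_monoidHom (Fin n → Kˣ) K).comp _ Subtype.val_injective
  have hrange : Set.range (fun χ : ↑(↑Ξ : Set ((Fin n → Kˣ) →* K)) =>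
      ((χ : (Fin n → Kˣ) →* K) : (Fin n → Kˣ) → K))
      = (fun χ : (Fin n → Kˣ) →* K => (χ : (Fin n → Kˣ) → K)) '' (↑Ξ : Set _) := by
    ext g
    constructor
    · rintro ⟨⟨χ, hχ⟩, rfl⟩; exact ⟨χ, hχ, rfl⟩
    · rintro ⟨χ, hχ, rfl⟩; exact ⟨⟨χ, hχ⟩, rfl⟩
  rw [← hrange, finrank_span_eq_card li]
  simp

/-- **Corollary (ii).** Let `K = 𝔽_q`, `β` a generator of `Kˣ`, `v i > 0`,
`d i = orderOf (β ^ v i)`, `r = gcd(d 1, …, d n)` and `d' i = orderOf (β ^ (r * v i))`.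
Let `IX` be the vanishing ideal of the degenerate projective torus parameterized by
`x_i ^ v_i`.  Let `H` be the Hilbert function of `S/IX`, `p` its Hilbert polynomial and
`ℓ = reg (S/IX)` the index of regularity (the least `ℓ` with `H m = p m` for `m ≥ ℓ`).
Let `F` be the Frobenius number of the numerical semigroup `ℕ d'_1 + ⋯ + ℕ d'_n`, i.e.
the greatest integer not of the form `∑ c i * d' i`.  If `IX` is a complete intersection,
then `reg (S/IX) = r * F + (d 1 + ⋯ + d n) - (n - 1)`. -/
theorem regularity_of_ci_vanishing_ideal
    (K : Type) [Field K] [Fintype K] (n : ℕ) (hn : 2 ≤ n)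
    (v : Fin n → ℕ) (hv : ∀ i, 0 < v i)
    (β : Kˣ) (hβ : ∀ x : Kˣ, x ∈ Subgroup.zpowers β)
    (d : Fin n → ℕ) (hd : ∀ i, d i = orderOf (β ^ v i))
    (r : ℕ) (hr : r = Finset.univ.gcd d)
    (d' : Fin n → ℕ) (hd' : ∀ i, d' i = orderOf (β ^ (r * v i)))
    (IX : Ideal (MvPolynomial (Fin n) K))
    (hIX : IX = Ideal.span {f : MvPolynomial (Fin n) K |
      (∃ e, f.IsHomogeneous e) ∧
      ∀ x : Fin n → Kˣ, eval (fun i => (x i : K) ^ v i) f = 0})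
    (hCI : ∃ g : Fin (n - 1) → MvPolynomial (Fin n) K, IX = Ideal.span (Set.range g))
    (H : ℕ → ℕ)
    (hH : ∀ m, H m = Module.finrank K
      ((homogeneousSubmodule (Fin n) K m) ⧸
        Submodule.comap (homogeneousSubmodule (Fin n) K m).subtype
          (Submodule.restrictScalars K IX)))
    (p : Polynomial ℚ)
    (hp : ∃ N : ℕ, ∀ m : ℕ, N ≤ m → (H m : ℚ) = p.eval (m : ℚ))
    (ℓ : ℕ)
    (hℓ : IsLeast {l : ℕ | ∀ m : ℕ, l ≤ m → (H m : ℚ) = p.eval (m : ℚ)} ℓ)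
    (F : ℤ)
    (hF : IsGreatest {m : ℤ | ¬ ∃ c : Fin n → ℕ, m = ∑ i, (c i : ℤ) * (d' i : ℤ)} F) :
    (ℓ : ℤ) = r * F + (∑ i, (d i : ℤ)) - ((n : ℤ) - 1) := by
  classical
  have i0 : Fin n := ⟨0, by omega⟩
  have hdpos : ∀ i, 0 < d i := fun i => by rw [hd i]; exact orderOf_pos _
  have hrdvd : ∀ i, r ∣ d i := fun i => by rw [hr]; exact Finset.gcd_dvd (Finset.mem_univ i)
  have hrpos : 0 < r := by
    rcases Nat.eq_zero_or_pos r with h0 | h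
    · exfalso
      have h1 : Finset.univ.gcd d = 0 := by rw [← hr, h0]
      have h2 := (Finset.gcd_eq_zero_iff.mp h1) i0 (Finset.mem_univ i0)
      exact absurd h2 (Nat.pos_iff_ne_zero.mp (hdpos i0))
    · exact h
  have hdd' : ∀ i, d i = r * d' i := by
    intro i
    have h1 : β ^ (r * v i) = (β ^ v i) ^ r := by rw [← pow_mul, mul_comm]
    have h2 : d' i = d i / r := by
      rw [hd' i, h1, orderOf_pow, ← hd i, Nat.gcd_eq_right (hrdvd i)]
    rw [h2, Nat.mul_div_cancel' (hrdvd i)]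
  -- Frobenius number basic facts
  have hF1 : -1 ≤ F := by
    refine hF.2 ?_
    rintro ⟨c, hc⟩
    have h0 : (0:ℤ) ≤ ∑ i, (c i : ℤ) * (d' i : ℤ) :=
      Finset.sum_nonneg fun i _ => mul_nonneg (by positivity) (by positivity)
    omega
  -- nonnegativity of the target value
  have hLnn : 0 ≤ (r:ℤ) * F + (∑ i, (d i:ℤ)) - ((n:ℤ) - 1) := by
    have hsum : (n:ℤ) * r ≤ ∑ i, (d i:ℤ) := by
      calc (n:ℤ) * r = ∑ _i : Fin n, (r:ℤ) := by
            rw [Finset.sum_const, Finset.card_univ, Fintype.card_fin]; ring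
        _ ≤ ∑ i, (d i:ℤ) := Finset.sum_le_sum fun i _ => by
            exact_mod_cast Nat.le_of_dvd (hdpos i) (hrdvd i)
    have h1 : (r:ℤ) * (-1) ≤ (r:ℤ) * F :=
      mul_le_mul_of_nonneg_left hF1 (by positivity)
    have hn' : (2:ℤ) ≤ (n:ℤ) := by exact_mod_cast hn
    have hr1 : (1:ℤ) ≤ (r:ℤ) := by exact_mod_cast hrpos
    nlinarith
  set Lz : ℤ := (r:ℤ) * F + (∑ i, (d i:ℤ)) - ((n:ℤ) - 1) with hLz
  set L : ℕ := Lz.toNat with hLdef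
  have hLcast : (L:ℤ) = Lz := Int.toNat_of_nonneg hLnn
  -- finsets of residues
  set box : Finset (Fin n → ℕ) := Fintype.piFinset fun i => Finset.range (d i) with hbox
  set Bf : ℕ → Finset (Fin n → ℕ) := fun m =>
    box.filter (fun b => ∃ c : Fin n → ℕ, m = ∑ i, (b i + c i * d i)) with hBf
  set Cf : ℕ → Finset (Fin n → ℕ) := fun m =>
    box.filter (fun b => (r:ℤ) ∣ (m:ℤ) - ∑ i, (b i:ℤ)) with hCf
  have hboxmem : ∀ b : Fin n → ℕ, b ∈ box ↔ ∀ i, b i < d i := by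
    intro b
    rw [hbox, Fintype.mem_piFinset]
    exact forall_congr' fun i => Finset.mem_range
  -- H m = (Bf m).card
  have hred : ∀ m, (Finset.Nat.antidiagonalTuple n m).image (fun a i => a i % d i) = Bf m := by
    intro m
    ext b
    rw [hBf]
    simp only [Finset.mem_image, Finset.Nat.mem_antidiagonalTuple, Finset.mem_filter]
    constructor
    · rintro ⟨a, ha, rfl⟩
      refine ⟨(hboxmem _).mpr fun i => Nat.mod_lt _ (hdpos i), fun i => a i / d i, ?_⟩
      rw [← ha]
      refine Finset.sum_congr rfl fun i _ => ?_
      rw [Nat.mod_add_div' (a i) (d i)]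
    · rintro ⟨hb, c, rfl⟩
      refine ⟨fun i => b i + c i * d i, rfl, ?_⟩
      funext i
      rw [Nat.add_mul_mod_self_right, Nat.mod_eq_of_lt ((hboxmem _).mp hb i)]
  have hHB : ∀ m, H m = (Bf m).card := by
    intro m
    rw [hH m, H_eq_card K n v IX hIX m, ← hred m]
    apply card_image_eq_card_image
    intro a _ a' _
    rw [chi_eq_iff K n v β hβ d hd]
    constructor
    · intro h; funext i; exact h i
    · intro h i; exact congrFun h i
  -- Bf m ⊆ Cf m
  have hBC : ∀ m, Bf m ⊆ Cf m := by
    intro m b hb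
    rw [hBf] at hb
    obtain ⟨hbox', c, hc⟩ := Finset.mem_filter.mp hb
    rw [hCf]
    refine Finset.mem_filter.mpr ⟨hbox', ⟨∑ i, (c i:ℤ) * (d' i:ℤ), ?_⟩⟩
    have hc' : (m:ℤ) = ∑ i, ((b i:ℤ) + (c i:ℤ) * (d i:ℤ)) := by
      rw [hc]; push_cast; rfl
    rw [Finset.sum_add_distrib] at hc'
    have : ∑ i, (c i:ℤ) * (d i:ℤ) = (r:ℤ) * ∑ i, (c i:ℤ) * (d' i:ℤ) := by
      rw [Finset.mul_sum]
      refine Finset.sum_congr rfl fun i _ => ?_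
      rw [hdd' i]; push_cast; ring
    rw [this] at hc'
    linarith
  -- Cf m ⊆ Bf m for m ≥ L
  have hCB : ∀ m : ℕ, Lz ≤ (m:ℤ) → Cf m ⊆ Bf m := by
    intro m hm b hb
    rw [hCf] at hb
    obtain ⟨hbox', s, hs⟩ := Finset.mem_filter.mp hb
    have hble : ∑ i, (b i:ℤ) ≤ (∑ i, (d i:ℤ)) - n := by
      have h1 : ∀ i, (b i:ℤ) ≤ (d i:ℤ) - 1 := fun i => by
        have := (hboxmem _).mp hbox' i
        omega
      calc ∑ i, (b i:ℤ) ≤ ∑ i, ((d i:ℤ) - 1) := Finset.sum_le_sum fun i _ => h1 i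
        _ = (∑ i, (d i:ℤ)) - n := by
            rw [Finset.sum_sub_distrib, Finset.sum_const, Finset.card_univ, Fintype.card_fin]
            ring
    have hFs : F < s := by
      have h2 : (r:ℤ) * F < (r:ℤ) * s := by rw [← hs, hLz] at *; linarith
      exact lt_of_mul_lt_mul_left h2 (by positivity)
    have hrep : ∃ c : Fin n → ℕ, s = ∑ i, (c i : ℤ) * (d' i : ℤ) := by
      by_contra hcon
      exact absurd (hF.2 hcon) (not_le.mpr hFs)
    obtain ⟨c, hcs⟩ := hrep
    rw [hBf]
    refine Finset.mem_filter.mpr ⟨hbox', c, ?_⟩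
    have hint : (m:ℤ) = ∑ i, ((b i:ℤ) + (c i:ℤ) * (d i:ℤ)) := by
      rw [Finset.sum_add_distrib]
      have : ∑ i, (c i:ℤ) * (d i:ℤ) = (r:ℤ) * ∑ i, (c i:ℤ) * (d' i:ℤ) := by
        rw [Finset.mul_sum]
        refine Finset.sum_congr rfl fun i _ => ?_
        rw [hdd' i]; push_cast; ring
      rw [this, ← hcs]
      linarith
    exact_mod_cast hint
  -- (Cf m).card is constant
  have hmodr : ∀ u : ℕ, (r:ℤ) ∣ (u:ℤ) - ((u % d i0 : ℕ):ℤ) := by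
    intro u
    have h1 : u % d i0 ≡ u [MOD d i0] := Nat.mod_modEq u (d i0)
    have h2 : u % d i0 ≡ u [MOD r] := Nat.ModEq.of_dvd (hrdvd i0) h1
    exact h2.dvd
  have hcard_succ : ∀ m : ℕ, (Cf (m+1)).card = (Cf m).card := by
    intro m
    have hCmem : ∀ (k : ℕ) (b : Fin n → ℕ),
        b ∈ Cf k ↔ (∀ i, b i < d i) ∧ (r:ℤ) ∣ (k:ℤ) - ∑ i, (b i:ℤ) := by
      intro k b
      rw [hCf, Finset.mem_filter, hboxmem]
    refine Finset.card_bij'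
      (i := fun b _ => Function.update b i0 ((b i0 + (d i0 - 1)) % d i0))
      (j := fun b _ => Function.update b i0 ((b i0 + 1) % d i0)) ?_ ?_ ?_ ?_
    · -- maps into Cf m
      intro b hb
      obtain ⟨hlt, k1, hk1⟩ := (hCmem _ b).mp hb
      refine (hCmem _ _).mpr ⟨?_, ?_⟩
      · intro i
        by_cases hi : i = i0
        · subst hi; rw [Function.update_self]; exact Nat.mod_lt _ (hdpos _)
        · rw [Function.update_of_ne hi]; exact hlt i
      · obtain ⟨k2, hk2⟩ := hmodr (b i0 + (d i0 - 1))
        obtain ⟨k3, hk3⟩ : (r:ℤ) ∣ (d i0 : ℤ) := ⟨(d' i0 : ℤ), by rw [hdd' i0]; push_cast; ring⟩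
        refine ⟨k1 + k2 - k3, ?_⟩
        rw [sum_update_int b i0 _]
        have hcast : ((b i0 + (d i0 - 1) : ℕ) : ℤ) = (b i0 : ℤ) + (d i0 : ℤ) - 1 := by
          have := hdpos i0; push_cast [this]; omega
        rw [hcast] at hk2
        push_cast at hk1 hk2 hk3 ⊢
        linarith
    · -- maps into Cf (m+1)
      intro b hb
      obtain ⟨hlt, k1, hk1⟩ := (hCmem _ b).mp hb
      refine (hCmem _ _).mpr ⟨?_, ?_⟩
      · intro i
        by_cases hi : i = i0
        · subst hi; rw [Function.update_self]; exact Nat.mod_lt _ (hdpos _)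
        · rw [Function.update_of_ne hi]; exact hlt i
      · obtain ⟨k2, hk2⟩ := hmodr (b i0 + 1)
        refine ⟨k1 + k2, ?_⟩
        rw [sum_update_int b i0 _]
        push_cast at hk1 hk2 ⊢
        linarith
    · -- left inverse
      intro b hb
      obtain ⟨hlt, _⟩ := (hCmem _ b).mp hb
      rw [Function.update_idem, Function.update_self, mod_cycle2 (hdpos i0) (hlt i0)]
      exact Function.update_eq_self i0 b
    · -- right inverse
      intro b hb
      obtain ⟨hlt, _⟩ := (hCmem _ b).mp hb
      rw [Function.update_idem, Function.update_self, mod_cycle1 (hdpos i0) (hlt i0)]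
      exact Function.update_eq_self i0 b
  set D0 : ℕ := (Cf 0).card with hD0
  have hCconst : ∀ m, (Cf m).card = D0 := by
    intro m
    induction m with
    | zero => rfl
    | succ k ih => rw [hcard_succ k, ih]
  have hHconst : ∀ m : ℕ, L ≤ m → H m = D0 := by
    intro m hm
    have hLzm : Lz ≤ (m:ℤ) := by rw [← hLcast]; exact_mod_cast hm
    rw [hHB m]
    have : Bf m = Cf m := le_antisymm (hBC m) (hCB m hLzm)
    rw [this, hCconst m]
  -- the Hilbert polynomial is the constant D0
  obtain ⟨N, hN⟩ := hp
  have hpconst : ∀ m : ℕ, p.eval (m:ℚ) = (D0:ℚ) := by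
    have heq : p = Polynomial.C (D0:ℚ) := by
      apply Polynomial.eq_of_infinite_eval_eq
      refine Set.infinite_of_injective_forall_mem
        (f := fun k : ℕ => ((max N L + k : ℕ) : ℚ)) ?_ ?_
      · intro k1 k2 hk
        simp only [Nat.cast_inj] at hk
        omega
      · intro k
        have h1 : N ≤ max N L + k := le_trans (le_max_left _ _) (Nat.le_add_right _ _)
        have h2 : L ≤ max N L + k := le_trans (le_max_right _ _) (Nat.le_add_right _ _)
        show p.eval _ = (Polynomial.C (D0:ℚ)).eval _
        rw [Polynomial.eval_C, ← hN _ h1, hHconst _ h2]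
    intro m
    rw [heq, Polynomial.eval_C]
  -- L is in the set
  have hLmem : L ∈ {l : ℕ | ∀ m : ℕ, l ≤ m → (H m : ℚ) = p.eval (m : ℚ)} := by
    intro m hm
    rw [hpconst m, hHconst m hm]
  have hℓL : ℓ ≤ L := hℓ.2 hLmem
  rcases Nat.lt_or_ge ℓ L with hlt | hge
  swap
  · have : ℓ = L := le_antisymm hℓL hge
    rw [this, hLcast]
  · exfalso
    have hL1 : 1 ≤ L := by omega
    have hstep : (H (L-1) : ℚ) = p.eval ((L-1 : ℕ):ℚ) := hℓ.1 (L-1) (by omega)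
    rw [hpconst] at hstep
    have hHL1 : H (L-1) = D0 := by exact_mod_cast hstep
    -- but H (L-1) < D0
    have hcastL1 : ((L-1:ℕ):ℤ) = Lz - 1 := by
      rw [← hLcast]; push_cast [hL1]; ring
    have hsumd1 : ∑ i, ((d i - 1 : ℕ):ℤ) = (∑ i, (d i:ℤ)) - n := by
      have : ∀ i, ((d i - 1 : ℕ):ℤ) = (d i:ℤ) - 1 := fun i => by
        have := hdpos i; push_cast [this]; omega
      rw [Finset.sum_congr rfl fun i _ => this i, Finset.sum_sub_distrib,
        Finset.sum_const, Finset.card_univ, Fintype.card_fin]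
      ring
    have hbstar_in : (fun i => d i - 1) ∈ Cf (L-1) := by
      rw [hCf]
      refine Finset.mem_filter.mpr ⟨(hboxmem _).mpr fun i => by have := hdpos i; omega, ?_⟩
      refine ⟨F, ?_⟩
      rw [hcastL1, hsumd1, hLz]
      ring
    have hbstar_out : (fun i => d i - 1) ∉ Bf (L-1) := by
      intro hmem
      rw [hBf] at hmem
      obtain ⟨_, c, hc⟩ := Finset.mem_filter.mp hmem
      have hcint : ((L-1:ℕ):ℤ) = ∑ i, (((d i - 1 : ℕ):ℤ) + (c i:ℤ) * (d i:ℤ)) := by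
        rw [hc]; push_cast; rfl
      rw [Finset.sum_add_distrib, hsumd1, hcastL1] at hcint
      have hsum2 : ∑ i, (c i:ℤ) * (d i:ℤ) = (r:ℤ) * ∑ i, (c i:ℤ) * (d' i:ℤ) := by
        rw [Finset.mul_sum]
        refine Finset.sum_congr rfl fun i _ => ?_
        rw [hdd' i]; push_cast; ring
      rw [hsum2] at hcint
      have hFc : F = ∑ i, (c i:ℤ) * (d' i:ℤ) := by
        have hrne : (r:ℤ) ≠ 0 := by positivity
        have : (r:ℤ) * F = (r:ℤ) * ∑ i, (c i:ℤ) * (d' i:ℤ) := by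
          rw [hLz] at hcint; linarith
        exact mul_left_cancel₀ hrne this
      exact hF.1 ⟨c, hFc⟩
    have hlt2 : H (L-1) < D0 := by
      rw [hHB, ← hCconst (L-1)]
      apply Finset.card_lt_card
      rw [Finset.ssubset_iff_of_subset (hBC (L-1))]
      exact ⟨_, hbstar_in, hbstar_out⟩
    omega
end

section
/- The toric ideal P equals the lattice ideal I(L₁) of the lattice L₁ = ker(ψ), and the vanishing ideal I(X) of the degenerate projective torus equals the lattice ideal I(L) of the lattice L = D(ker ψ). -/
open MvPolynomial Finset
set_option linter.unusedSectionVars false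

variable {K : Type} [Field K] {n : ℕ}

-- monomial as product
lemma prodXpow (m : Fin n →₀ ℕ) :
    (∏ i, (X i : MvPolynomial (Fin n) K) ^ m i) = monomial m 1 := by
  rw [← prod_X_pow_eq_monomial]
  refine (Finset.prod_subset (Finset.subset_univ _) ?_).symm
  intro i _ hi
  simp [Finsupp.notMem_support_iff.mp hi]

lemma prodXpow' (a : Fin n → ℕ) :
    (∏ i, (X i : MvPolynomial (Fin n) K) ^ a i)
      = monomial (Finsupp.equivFunOnFinite.symm a) 1 := by
  rw [← prodXpow]; rfl

-- Lemma A : binomial from difference in lattice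
lemma binom_mem_span (L : Submodule ℤ (Fin n → ℤ)) (a b : Fin n → ℕ)
    (hab : (fun i => (a i : ℤ) - b i) ∈ L) :
    (∏ i, (X i : MvPolynomial (Fin n) K) ^ a i) - ∏ i, X i ^ b i ∈
      Ideal.span {f : MvPolynomial (Fin n) K | ∃ c ∈ L,
        f = (∏ i, X i ^ (c i).toNat) - ∏ i, X i ^ (-(c i)).toNat} := by
  set c : Fin n → ℤ := fun i => (a i : ℤ) - b i with hc
  have ha : ∀ i, a i = (c i).toNat + min (a i) (b i) := by intro i; simp only [hc]; omega
  have hb : ∀ i, b i = (-c i).toNat + min (a i) (b i) := by intro i; simp only [hc]; omega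
  have key : (∏ i, (X i : MvPolynomial (Fin n) K) ^ a i) - ∏ i, X i ^ b i
      = (∏ i, X i ^ min (a i) (b i)) *
        ((∏ i, X i ^ (c i).toNat) - ∏ i, X i ^ (-(c i)).toNat) := by
    rw [mul_sub]
    congr 1
    · rw [← Finset.prod_mul_distrib]
      exact Finset.prod_congr rfl fun i _ => by rw [← pow_add, add_comm, ← ha i] -- check
    · rw [← Finset.prod_mul_distrib]
      exact Finset.prod_congr rfl fun i _ => by rw [← pow_add, add_comm, ← hb i]
  rw [key]
  exact Ideal.mul_mem_left _ _ (Ideal.subset_span ⟨c, hab, rfl⟩)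

-- unit power equality from divisibility
lemma upow_eq {G : Type*} [Group G] (u : G) {dd : ℕ} (hu : u ^ dd = 1) {a b : ℕ}
    (h : (dd : ℤ) ∣ (a : ℤ) - b) : u ^ a = u ^ b := by
  have h1 : (orderOf u : ℤ) ∣ (a : ℤ) - b :=
    dvd_trans (Int.natCast_dvd_natCast.mpr (orderOf_dvd_of_pow_eq_one hu)) h
  have h2 : u ^ ((a : ℤ) - b) = 1 := orderOf_dvd_iff_zpow_eq_one.mp h1
  rw [zpow_sub, mul_inv_eq_one] at h2
  exact_mod_cast (zpow_natCast u a) ▸ (zpow_natCast u b) ▸ congrArg id h2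

section field
variable [Fintype K] [DecidableEq K] {β : Kˣ} (hβ : ∀ x : Kˣ, x ∈ Subgroup.zpowers β)
  {v dd : ℕ} (hd : dd = orderOf (β ^ v))

include hβ hd in
lemma xv_pow_d (x : Kˣ) : (x ^ v) ^ dd = 1 := by
  obtain ⟨k, hk⟩ := hβ x
  have hk' : β ^ k = x := hk
  have h1 : (β ^ v) ^ dd = 1 := by rw [hd]; exact pow_orderOf_eq_one _
  calc (x ^ v) ^ dd = x ^ (v * dd) := by rw [pow_mul]
    _ = (β ^ k) ^ (((v * dd : ℕ)) : ℤ) := by rw [hk', zpow_natCast]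
    _ = (β ^ (((v * dd : ℕ)) : ℤ)) ^ k := by rw [← zpow_mul, ← zpow_mul, mul_comm]
    _ = (β ^ (v * dd)) ^ k := by rw [zpow_natCast]
    _ = ((β ^ v) ^ dd) ^ k := by rw [pow_mul]
    _ = 1 := by rw [h1, one_zpow]

include hβ hd in
lemma dvd_iff_card (c : ℕ) : Fintype.card K - 1 ∣ v * c ↔ dd ∣ c := by
  have hord : orderOf β = Fintype.card K - 1 := by
    rw [orderOf_eq_card_of_forall_mem_zpowers hβ, Nat.card_eq_fintype_card,
      Fintype.card_units]
  rw [← hord, orderOf_dvd_iff_pow_eq_one, pow_mul, hd, orderOf_dvd_iff_pow_eq_one]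

include hβ hd in
lemma sum_units_pow (c : ℕ) :
    (∑ y : Kˣ, ((y : K)) ^ (v * c)) = if dd ∣ c then (-1 : K) else 0 := by
  rw [FiniteField.sum_pow_units K (v * c)]
  simp [dvd_iff_card hβ hd c]

end field

-- degree of a monomial in support of homogeneous polynomial
lemma deg_of_mem_support {f : MvPolynomial (Fin n) K} {e : ℕ} (hf : f.IsHomogeneous e)
    {m : Fin n →₀ ℕ} (hm : m ∈ f.support) : ∑ i, m i = e := by
  have h1 := hf (MvPolynomial.mem_support_iff.mp hm)
  change (Finsupp.weight (fun _ => 1)) m = e at h1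
  rw [← Finsupp.degree_eq_weight_one] at h1
  rw [← h1]
  unfold Finsupp.degree
  exact (Finset.sum_subset (Finset.subset_univ _)
    (fun i _ hi => Finsupp.notMem_support_iff.mp hi)).symm

lemma prod_pow_pow (d : Fin n → ℕ) (m : Fin n →₀ ℕ) :
    (Finsupp.prod m fun i k => ((Polynomial.X : Polynomial K) ^ d i) ^ k)
      = Polynomial.X ^ (∑ i, d i * m i) := by
  rw [Finsupp.prod]
  calc ∏ a ∈ m.support, ((Polynomial.X : Polynomial K) ^ d a) ^ m a
      = ∏ a ∈ m.support, (Polynomial.X : Polynomial K) ^ (d a * m a) := by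
        exact Finset.prod_congr rfl fun i _ => by rw [← pow_mul]
    _ = ∏ a : Fin n, (Polynomial.X : Polynomial K) ^ (d a * m a) :=
        Finset.prod_subset (Finset.subset_univ _)
          (fun i _ hi => by simp [Finsupp.notMem_support_iff.mp hi])
    _ = Polynomial.X ^ (∑ i, d i * m i) := Finset.prod_pow_eq_pow_sum ..

lemma aeval_monomial_one (d : Fin n → ℕ) (m : Fin n →₀ ℕ) :
    aeval (fun i : Fin n => (Polynomial.X : Polynomial K) ^ d i) (monomial m (1 : K))
      = Polynomial.X ^ (∑ i, d i * m i) := by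
  rw [aeval_monomial, prod_pow_pow, map_one, one_mul]

-- coefficient of aeval image
lemma aeval_coeff (d : Fin n → ℕ) (f : MvPolynomial (Fin n) K) (s : ℕ) :
    (aeval (fun i : Fin n => (Polynomial.X : Polynomial K) ^ d i) f).coeff s
      = ∑ m ∈ f.support, if (∑ i, d i * m i) = s then f.coeff m else 0 := by
  conv_lhs => rw [f.as_sum]
  rw [map_sum, Polynomial.finset_sum_coeff]
  refine Finset.sum_congr rfl fun m hm => ?_
  rw [aeval_monomial, prod_pow_pow]
  rw [Polynomial.algebraMap_eq, Polynomial.coeff_C_mul, Polynomial.coeff_X_pow]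
  by_cases h : (∑ i, d i * m i) = s
  · simp [h]
  · simp [h, Ne.symm h]

lemma support_sub_binom {f : MvPolynomial (Fin n) K} {m m' : Fin n →₀ ℕ}
    (hm : m ∈ f.support) (hm' : m' ∈ f.support) (hne : m' ≠ m) :
    (f - C (coeff m f) * (monomial m 1 - monomial m' 1)).support ⊆ f.support.erase m := by
  intro a ha
  rw [MvPolynomial.mem_support_iff] at ha
  rw [Finset.mem_erase]
  constructor
  · rintro rfl
    apply ha
    simp [MvPolynomial.coeff_sub, MvPolynomial.coeff_monomial, hne]
  · rw [MvPolynomial.mem_support_iff]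
    intro h0
    apply ha
    have ham' : a ≠ m' := by rintro rfl; exact (MvPolynomial.mem_support_iff.mp hm') h0
    have ham : a ≠ m := by rintro rfl; exact (MvPolynomial.mem_support_iff.mp hm) h0
    simp [MvPolynomial.coeff_sub, MvPolynomial.coeff_monomial, h0, Ne.symm ham, Ne.symm ham']

lemma ker_sub_span (d : Fin n → ℕ) (L : Submodule ℤ (Fin n → ℤ))
    (hL : ∀ c : Fin n → ℤ, (∑ i, c i * d i) = 0 → c ∈ L) :
    ∀ N (f : MvPolynomial (Fin n) K), f.support.card ≤ N →
      aeval (fun i : Fin n => (Polynomial.X : Polynomial K) ^ d i) f = 0 →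
      f ∈ Ideal.span {f : MvPolynomial (Fin n) K | ∃ c ∈ L,
        f = (∏ i, X i ^ (c i).toNat) - ∏ i, X i ^ (-(c i)).toNat} := by
  intro N
  induction N with
  | zero =>
    intro f hcard _
    have : f = 0 := by
      rwa [Nat.le_zero, Finset.card_eq_zero, MvPolynomial.support_eq_empty] at hcard
    simp [this]
  | succ N ih =>
    intro f hcard hker
    by_cases hf0 : f = 0
    · simp [hf0]
    obtain ⟨m, hm⟩ := (MvPolynomial.support_nonempty.mpr hf0).exists_mem
    -- find another monomial with same weight
    have hco : (∑ m' ∈ f.support, if (∑ i, d i * m' i) = (∑ i, d i * m i)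
        then f.coeff m' else 0) = 0 := by
      rw [← aeval_coeff, hker, Polynomial.coeff_zero]
    rw [← Finset.sum_filter] at hco
    set F := f.support.filter (fun m' => (∑ i, d i * m' i) = (∑ i, d i * m i)) with hF
    have hmF : m ∈ F := by
      rw [hF, Finset.mem_filter]; exact ⟨hm, rfl⟩
    have hex : ∃ m' ∈ F, m' ≠ m := by
      by_contra hcon
      push_neg at hcon
      have : F = {m} := Finset.eq_singleton_iff_unique_mem.mpr ⟨hmF, hcon⟩
      rw [this, Finset.sum_singleton] at hco
      exact (MvPolynomial.mem_support_iff.mp hm) hco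
    obtain ⟨m', hm'F, hne⟩ := hex
    have hm' : m' ∈ f.support := (Finset.mem_filter.mp hm'F).1
    have hw : (∑ i, d i * m' i) = (∑ i, d i * m i) := (Finset.mem_filter.mp hm'F).2
    set b : MvPolynomial (Fin n) K := C (f.coeff m) * (monomial m 1 - monomial m' 1) with hb
    -- b is in the kernel
    have hbker : aeval (fun i : Fin n => (Polynomial.X : Polynomial K) ^ d i) b = 0 := by
      rw [hb, map_mul, map_sub, aeval_monomial_one, aeval_monomial_one, hw, sub_self, mul_zero]
    -- b is in the span
    have hbspan : b ∈ Ideal.span {f : MvPolynomial (Fin n) K | ∃ c ∈ L,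
        f = (∏ i, X i ^ (c i).toNat) - ∏ i, X i ^ (-(c i)).toNat} := by
      rw [hb]
      apply Ideal.mul_mem_left
      have := binom_mem_span (K := K) L (fun i => m i) (fun i => m' i) ?_
      · rwa [prodXpow' (fun i => m i), prodXpow' (fun i => m' i),
          Finsupp.equivFunOnFinite_symm_coe, Finsupp.equivFunOnFinite_symm_coe] at this
      · apply hL
        have : ((∑ i, d i * m i : ℕ) : ℤ) = ((∑ i, d i * m' i : ℕ) : ℤ) := by rw [hw]
        push_cast at this ⊢
        simp only [sub_mul]
        rw [Finset.sum_sub_distrib, sub_eq_zero]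
        calc ∑ x, ((m x : ℤ)) * d x = ∑ x, ((d x : ℤ)) * m x := by
              exact Finset.sum_congr rfl fun i _ => mul_comm _ _
          _ = ∑ x, ((d x : ℤ)) * m' x := this
          _ = ∑ x, ((m' x : ℤ)) * d x := by
              exact Finset.sum_congr rfl fun i _ => mul_comm _ _
    have hg : f - b ∈ Ideal.span {f : MvPolynomial (Fin n) K | ∃ c ∈ L,
        f = (∏ i, X i ^ (c i).toNat) - ∏ i, X i ^ (-(c i)).toNat} := by
      apply ih
      · have : (f - b).support.card < f.support.card :=
          lt_of_le_of_lt (Finset.card_le_card (hb ▸ support_sub_binom hm hm' hne))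
            (Finset.card_erase_lt_of_mem hm)
        omega
      · rw [map_sub, hker, hbker, sub_zero]
    have : f = (f - b) + b := by ring
    rw [this]
    exact Ideal.add_mem _ hg hbspan

section field2
variable [Fintype K] [DecidableEq K] {β : Kˣ} (hβ : ∀ x : Kˣ, x ∈ Subgroup.zpowers β)
  {v d : Fin n → ℕ} (hd : ∀ i, d i = orderOf (β ^ v i))

include hβ hd in
lemma binom_vanish {a b : Fin n → ℕ} (hcong : ∀ i, (d i : ℤ) ∣ (a i : ℤ) - b i)
    (x : Fin n → Kˣ) :
    (∏ i, ((x i : K) ^ v i) ^ a i) = ∏ i, ((x i : K) ^ v i) ^ b i := by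
  refine Finset.prod_congr rfl fun i _ => ?_
  have h := upow_eq (x i ^ v i) (xv_pow_d hβ (hd i) (x i)) (hcong i)
  have := congrArg (Units.val) h
  push_cast at this
  exact this

include hβ hd in
lemma congr_sum_zero (f : MvPolynomial (Fin n) K)
    (hvan : ∀ x : Fin n → Kˣ, eval (fun i => (x i : K) ^ v i) f = 0) (m : Fin n →₀ ℕ) :
    (∑ m' ∈ f.support.filter
        (fun m' => ∀ i, (d i : ℤ) ∣ (m' i : ℤ) - (m i : ℤ)), f.coeff m') = 0 := by
  have hd1 : ∀ i, 1 ≤ d i := fun i => (hd i) ▸ (orderOf_pos _)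
  have hle : ∀ i, m i ≤ d i * m i := fun i => Nat.le_mul_of_pos_left _ (hd1 i)
  -- the big character sum
  have hT : (∑ x : Fin n → Kˣ, (eval (fun i => (x i : K) ^ v i) f)
      * ∏ i, (x i : K) ^ (v i * (d i * m i - m i))) = 0 := by
    refine Finset.sum_eq_zero fun x _ => ?_
    rw [hvan x, zero_mul]
  -- rewrite the character sum monomial-wise
  have hT2 : (∑ x : Fin n → Kˣ, (eval (fun i => (x i : K) ^ v i) f)
      * ∏ i, (x i : K) ^ (v i * (d i * m i - m i)))
      = ∑ m' ∈ f.support, f.coeff m' *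
          ∏ i, ∑ y : Kˣ, ((y : K)) ^ (v i * (m' i + d i * m i - m i)) := by
    have step1 : ∀ x : Fin n → Kˣ, (eval (fun i => (x i : K) ^ v i) f)
        * ∏ i, (x i : K) ^ (v i * (d i * m i - m i))
        = ∑ m' ∈ f.support, f.coeff m' *
            ∏ i, ((x i : K)) ^ (v i * (m' i + d i * m i - m i)) := by
      intro x
      rw [eval_eq', Finset.sum_mul]
      refine Finset.sum_congr rfl fun m' _ => ?_
      rw [mul_assoc]
      congr 1
      rw [← Finset.prod_mul_distrib]
      refine Finset.prod_congr rfl fun i _ => ?_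
      rw [← pow_mul, ← pow_add]
      congr 1
      have h1 := hle i
      generalize d i * m i = P at *
      have : m' i + P - m i = m' i + (P - m i) := by omega
      rw [this, Nat.mul_add]
    rw [Finset.sum_congr rfl (fun x _ => step1 x), Finset.sum_comm]
    refine Finset.sum_congr rfl fun m' _ => ?_
    rw [← Finset.mul_sum]
    congr 1
    rw [← Fintype.piFinset_univ, Finset.prod_univ_sum]
  -- evaluate the inner sums
  have hT3 : ∀ m' : Fin n →₀ ℕ,
      (∏ i, ∑ y : Kˣ, ((y : K)) ^ (v i * (m' i + d i * m i - m i)))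
      = if (∀ i, (d i : ℤ) ∣ (m' i : ℤ) - (m i : ℤ)) then ((-1 : K)) ^ n else 0 := by
    intro m'
    have hcond : ∀ i, (d i ∣ m' i + d i * m i - m i) ↔ ((d i : ℤ) ∣ (m' i : ℤ) - m i) := by
      intro i
      rw [← Int.natCast_dvd_natCast]
      have h1 : m i ≤ m' i + d i * m i := le_trans (hle i) (Nat.le_add_left _ _)
      push_cast [h1]
      have : (m' i : ℤ) + d i * m i - m i = ((d i : ℤ)) * m i + ((m' i : ℤ) - m i) := by ring
      rw [this, dvd_add_right ⟨(m i : ℤ), rfl⟩]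
    by_cases hall : ∀ i, (d i : ℤ) ∣ (m' i : ℤ) - (m i : ℤ)
    · rw [if_pos hall]
      have : ∀ i : Fin n, (∑ y : Kˣ, ((y : K)) ^ (v i * (m' i + d i * m i - m i))) = -1 := by
        intro i
        rw [sum_units_pow hβ (hd i), if_pos ((hcond i).mpr (hall i))]
      rw [Finset.prod_congr rfl (fun i _ => this i), Finset.prod_const, Finset.card_univ,
        Fintype.card_fin]
    · rw [if_neg hall]
      push_neg at hall
      obtain ⟨i, hi⟩ := hall
      refine Finset.prod_eq_zero (Finset.mem_univ i) ?_
      rw [sum_units_pow hβ (hd i), if_neg (fun hc => hi ((hcond i).mp hc))]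
  rw [hT2] at hT
  rw [Finset.sum_congr rfl (fun m' _ => by rw [hT3 m'])] at hT
  simp only [mul_ite, mul_zero] at hT
  rw [← Finset.sum_filter, ← Finset.sum_mul] at hT
  have hne : ((-1 : K)) ^ n ≠ 0 := pow_ne_zero _ (neg_ne_zero.mpr one_ne_zero)
  exact (mul_eq_zero.mp hT).resolve_right hne

include hβ hd in
lemma van_sub_span (L : Submodule ℤ (Fin n → ℤ))
    (hL : ∀ c : Fin n → ℤ, (∀ i, (d i : ℤ) ∣ c i) → (∑ i, c i) = 0 → c ∈ L) :
    ∀ N (f : MvPolynomial (Fin n) K), f.support.card ≤ N →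
      (∃ e, f.IsHomogeneous e) →
      (∀ x : Fin n → Kˣ, eval (fun i => (x i : K) ^ v i) f = 0) →
      f ∈ Ideal.span {f : MvPolynomial (Fin n) K | ∃ c ∈ L,
        f = (∏ i, X i ^ (c i).toNat) - ∏ i, X i ^ (-(c i)).toNat} := by
  intro N
  induction N with
  | zero =>
    intro f hcard _ _
    have : f = 0 := by
      rwa [Nat.le_zero, Finset.card_eq_zero, MvPolynomial.support_eq_empty] at hcard
    simp [this]
  | succ N ih =>
    intro f hcard hhom hvan
    by_cases hf0 : f = 0
    · simp [hf0]
    obtain ⟨e, hf⟩ := hhom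
    obtain ⟨m, hm⟩ := (MvPolynomial.support_nonempty.mpr hf0).exists_mem
    have hco := congr_sum_zero hβ hd f hvan m
    set F := f.support.filter
      (fun m' => ∀ i, (d i : ℤ) ∣ (m' i : ℤ) - (m i : ℤ)) with hF
    have hmF : m ∈ F := by
      rw [hF, Finset.mem_filter]
      exact ⟨hm, fun i => by simp⟩
    have hex : ∃ m' ∈ F, m' ≠ m := by
      by_contra hcon
      push_neg at hcon
      have : F = {m} := Finset.eq_singleton_iff_unique_mem.mpr ⟨hmF, hcon⟩
      rw [this, Finset.sum_singleton] at hco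
      exact (MvPolynomial.mem_support_iff.mp hm) hco
    obtain ⟨m', hm'F, hne⟩ := hex
    have hm' : m' ∈ f.support := (Finset.mem_filter.mp hm'F).1
    have hdvd : ∀ i, (d i : ℤ) ∣ (m' i : ℤ) - (m i : ℤ) := (Finset.mem_filter.mp hm'F).2
    have hdegm : ∑ i, m i = e := deg_of_mem_support hf hm
    have hdegm' : ∑ i, m' i = e := deg_of_mem_support hf hm'
    set b : MvPolynomial (Fin n) K := C (f.coeff m) * (monomial m 1 - monomial m' 1) with hb
    -- b is homogeneous of degree e
    have hmono : ∀ m'' : Fin n →₀ ℕ, (∑ i, m'' i = e) →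
        (monomial m'' (1 : K)).IsHomogeneous e := by
      intro m'' h
      refine isHomogeneous_monomial _ ?_
      unfold Finsupp.degree
      rw [← h]
      exact Finset.sum_subset (Finset.subset_univ _)
        (fun i _ hi => Finsupp.notMem_support_iff.mp hi)
    have hbhom : b.IsHomogeneous e := ((hmono m hdegm).sub (hmono m' hdegm')).C_mul _
    -- b vanishes on the torus
    have hbvan : ∀ x : Fin n → Kˣ, eval (fun i => (x i : K) ^ v i) b = 0 := by
      intro x
      rw [hb, map_mul, map_sub]
      have h1 : ∀ m'' : Fin n →₀ ℕ, eval (fun i => (x i : K) ^ v i) (monomial m'' (1 : K))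
          = ∏ i, ((x i : K) ^ v i) ^ m'' i := by
        intro m''
        rw [eval_monomial, one_mul, Finsupp.prod]
        exact Finset.prod_subset (Finset.subset_univ _)
          (fun i _ hi => by simp [Finsupp.notMem_support_iff.mp hi])
      rw [h1, h1, binom_vanish hβ hd (fun i => hdvd i) x, sub_self, mul_zero]
    -- b is in the span
    have hbspan : b ∈ Ideal.span {f : MvPolynomial (Fin n) K | ∃ c ∈ L,
        f = (∏ i, X i ^ (c i).toNat) - ∏ i, X i ^ (-(c i)).toNat} := by
      rw [hb]
      apply Ideal.mul_mem_left
      have := binom_mem_span (K := K) L (fun i => m i) (fun i => m' i) ?_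
      · rwa [prodXpow' (fun i => m i), prodXpow' (fun i => m' i),
          Finsupp.equivFunOnFinite_symm_coe, Finsupp.equivFunOnFinite_symm_coe] at this
      · refine hL _ (fun i => dvd_sub_comm.mp (hdvd i)) ?_
        rw [Finset.sum_sub_distrib]
        have h1 : ((∑ i, m i : ℕ) : ℤ) = ((∑ i, m' i : ℕ) : ℤ) := by rw [hdegm, hdegm']
        push_cast at h1
        exact sub_eq_zero.mpr h1
    have hg : f - b ∈ Ideal.span {f : MvPolynomial (Fin n) K | ∃ c ∈ L,
        f = (∏ i, X i ^ (c i).toNat) - ∏ i, X i ^ (-(c i)).toNat} := by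
      apply ih
      · have : (f - b).support.card < f.support.card :=
          lt_of_le_of_lt (Finset.card_le_card (hb ▸ support_sub_binom hm hm' hne))
            (Finset.card_erase_lt_of_mem hm)
        omega
      · exact ⟨e, hf.sub hbhom⟩
      · intro x
        rw [map_sub, hvan x, hbvan x, sub_zero]
    have : f = (f - b) + b := by ring
    rw [this]
    exact Ideal.add_mem _ hg hbspan
end field2

lemma eval_prodXpow (g : Fin n → K) (a : Fin n → ℕ) :
    eval g (∏ i, (X i : MvPolynomial (Fin n) K) ^ a i) = ∏ i, (g i) ^ a i := by
  simp

lemma prodXpow_isHomogeneous (a : Fin n → ℕ) {e : ℕ} (h : ∑ i, a i = e) :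
    (∏ i, (X i : MvPolynomial (Fin n) K) ^ a i).IsHomogeneous e := by
  rw [prodXpow' a]
  refine isHomogeneous_monomial _ ?_
  unfold Finsupp.degree
  rw [← h]
  exact Finset.sum_subset (Finset.subset_univ _) (fun i _ hi => by
    simpa using Finsupp.notMem_support_iff.mp hi)

/-- **Proposition.** Let `K = 𝔽_q`, `β` a generator of `Kˣ`, `d i = orderOf (β ^ v i)`.
Let `ψ : ℤⁿ → ℤ` be the map `e i ↦ d i` and `D : ℤⁿ → ℤⁿ` the map `e i ↦ d i • e i`.
Then the toric ideal `P` (kernel of `t_i ↦ y ^ d i`) is the lattice ideal of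
`L₁ = ker ψ`, and the vanishing ideal `IX` of the degenerate projective torus
parameterized by `x_i ^ v_i` is the lattice ideal of `L = D (ker ψ)`; here the lattice
ideal of a lattice `L ⊆ ℤⁿ` is generated by the binomials `t^{c⁺} - t^{c⁻}` for `c ∈ L`. -/
theorem toric_and_vanishing_are_lattice_ideals
    (K : Type) [Field K] [Fintype K] (n : ℕ) (hn : 2 ≤ n)
    (v : Fin n → ℕ) (hv : ∀ i, 0 < v i)
    (β : Kˣ) (hβ : ∀ x : Kˣ, x ∈ Subgroup.zpowers β)
    (d : Fin n → ℕ) (hd : ∀ i, d i = orderOf (β ^ v i))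
    (IX : Ideal (MvPolynomial (Fin n) K))
    (hIX : IX = Ideal.span {f : MvPolynomial (Fin n) K |
      (∃ e, f.IsHomogeneous e) ∧
      ∀ x : Fin n → Kˣ, eval (fun i => (x i : K) ^ v i) f = 0})
    (P : Ideal (MvPolynomial (Fin n) K))
    (hP : P = RingHom.ker (aeval (fun i : Fin n => (Polynomial.X : Polynomial K) ^ d i) :
      MvPolynomial (Fin n) K →ₐ[K] Polynomial K))
    (ψ : (Fin n → ℤ) →ₗ[ℤ] ℤ) (hψ : ∀ c, ψ c = ∑ i, c i * (d i : ℤ))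
    (D : (Fin n → ℤ) →ₗ[ℤ] (Fin n → ℤ)) (hD : ∀ c i, D c i = (d i : ℤ) * c i) :
    P = Ideal.span {f : MvPolynomial (Fin n) K | ∃ c ∈ LinearMap.ker ψ,
        f = (∏ i, X i ^ (c i).toNat) - ∏ i, X i ^ (-(c i)).toNat} ∧
    IX = Ideal.span {f : MvPolynomial (Fin n) K |
        ∃ c ∈ Submodule.map D (LinearMap.ker ψ),
        f = (∏ i, X i ^ (c i).toNat) - ∏ i, X i ^ (-(c i)).toNat} := by
  classical
  have key : ∀ c : Fin n → ℤ, c ∈ LinearMap.ker ψ →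
      ((∑ i, d i * (c i).toNat : ℕ) : ℤ) = ((∑ i, d i * (-(c i)).toNat : ℕ) : ℤ) := by
    intro c hc
    have hc0 : (∑ i, c i * (d i : ℤ)) = 0 := by rw [← hψ c]; exact hc
    push_cast
    rw [← sub_eq_zero, ← Finset.sum_sub_distrib, ← hc0]
    refine Finset.sum_congr rfl fun i _ => ?_
    have h1 : (((c i).toNat : ℤ)) - ((-(c i)).toNat : ℤ) = c i := by omega
    rw [← mul_sub, h1, mul_comm]
  constructor
  · -- toric ideal
    rw [hP]
    apply le_antisymm
    · intro f hf
      exact ker_sub_span d (LinearMap.ker ψ)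
        (fun c h => LinearMap.mem_ker.mpr (by rw [hψ c, ← h]))
        f.support.card f le_rfl (RingHom.mem_ker.mp hf)
    · rw [Ideal.span_le]
      rintro f ⟨c, hc, rfl⟩
      rw [SetLike.mem_coe, RingHom.mem_ker, map_sub,
        prodXpow' (fun i => (c i).toNat), prodXpow' (fun i => (-(c i)).toNat),
        aeval_monomial_one, aeval_monomial_one]
      rw [sub_eq_zero]
      congr 1
      exact_mod_cast key c hc
  · -- vanishing ideal
    rw [hIX]
    apply le_antisymm
    · rw [Ideal.span_le]
      rintro f ⟨⟨e, hfh⟩, hfv⟩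
      refine van_sub_span hβ hd (Submodule.map D (LinearMap.ker ψ)) ?_
        f.support.card f le_rfl ⟨e, hfh⟩ hfv
      intro c hdvd hsum
      refine ⟨fun i => c i / d i, LinearMap.mem_ker.mpr ?_, ?_⟩
      · rw [hψ]
        rw [← hsum]
        exact Finset.sum_congr rfl fun i _ => Int.ediv_mul_cancel (hdvd i)
      · funext i
        rw [hD]
        exact Int.mul_ediv_cancel' (hdvd i)
    · rw [Ideal.span_le]
      rintro f ⟨c, hcL, rfl⟩
      obtain ⟨c', hc', hcc⟩ := hcL
      have hdvd : ∀ i, (d i : ℤ) ∣ c i := by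
        intro i; rw [← hcc]; rw [hD]; exact Dvd.intro _ rfl
      have hsum : (∑ i, c i) = 0 := by
        rw [← hcc]
        have h0 : (∑ i, c' i * (d i : ℤ)) = 0 := by rw [← hψ c']; exact hc'
        rw [← h0]
        exact Finset.sum_congr rfl fun i _ => by rw [hD, mul_comm]
      have hdeg : (∑ i, (c i).toNat) = ∑ i, (-(c i)).toNat := by
        have : ((∑ i, (c i).toNat : ℕ) : ℤ) = ((∑ i, (-(c i)).toNat : ℕ) : ℤ) := by
          push_cast
          rw [← sub_eq_zero, ← Finset.sum_sub_distrib, ← hsum]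
          exact Finset.sum_congr rfl fun i _ => by omega
        exact_mod_cast this
      apply Ideal.subset_span
      refine ⟨⟨∑ i, (c i).toNat, ?_⟩, ?_⟩
      · exact (prodXpow_isHomogeneous _ rfl).sub (prodXpow_isHomogeneous _ hdeg.symm)
      · intro x
        rw [map_sub, eval_prodXpow, eval_prodXpow, sub_eq_zero]
        refine binom_vanish hβ hd (fun i => ?_) x
        have h1 : (((c i).toNat : ℤ)) - ((-(c i)).toNat : ℤ) = c i := by omega
        rw [h1]
        exact hdvd i
end

section
/- If the toric ideal P is generated by the binomials t^{a_1} − t^{b_1}, …, t^{a_m} − t^{b_m} (with a_i, b_i ∈ ℕ^n), then the vanishing ideal I(X) is generated by the binomials t^{D(a_1)} − t^{D(b_1)}, …, t^{D(a_m)} − t^{D(b_m)}, where D: ℤ^n → ℤ^n is the ℤ-linear map with D(e_i) = d_i e_i. -/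
open MvPolynomial

/-- **Proposition.** Let `K = 𝔽_q`, `β` a generator of `Kˣ`, `d i = orderOf (β ^ v i)`.
If the toric ideal `P` (kernel of `t_i ↦ y ^ d i`) is generated by the binomials
`t^{a k} - t^{b k}`, `k = 1, …, m`, then the vanishing ideal `IX` of the degenerate
projective torus parameterized by `x_i ^ v_i` is generated by the binomials
`t^{D (a k)} - t^{D (b k)}`, where `D e_i = d i • e_i`, i.e. `(D a) i = d i * a i`. -/
theorem vanishing_ideal_generators_from_toric_generators
    (K : Type) [Field K] [Fintype K] (n : ℕ) (hn : 2 ≤ n)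
    (v : Fin n → ℕ) (hv : ∀ i, 0 < v i)
    (β : Kˣ) (hβ : ∀ x : Kˣ, x ∈ Subgroup.zpowers β)
    (d : Fin n → ℕ) (hd : ∀ i, d i = orderOf (β ^ v i))
    (IX : Ideal (MvPolynomial (Fin n) K))
    (hIX : IX = Ideal.span {f : MvPolynomial (Fin n) K |
      (∃ e, f.IsHomogeneous e) ∧
      ∀ x : Fin n → Kˣ, eval (fun i => (x i : K) ^ v i) f = 0})
    (P : Ideal (MvPolynomial (Fin n) K))
    (hP : P = RingHom.ker (aeval (fun i : Fin n => (Polynomial.X : Polynomial K) ^ d i) :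
      MvPolynomial (Fin n) K →ₐ[K] Polynomial K))
    (m : ℕ) (a b : Fin m → Fin n → ℕ)
    (hgen : P = Ideal.span (Set.range fun k =>
      (∏ i, X i ^ a k i) - ∏ i, (X i : MvPolynomial (Fin n) K) ^ b k i)) :
    IX = Ideal.span (Set.range fun k =>
      (∏ i, X i ^ (d i * a k i)) - ∏ i, (X i : MvPolynomial (Fin n) K) ^ (d i * b k i)) := by
  classical
  set G : Fin m → MvPolynomial (Fin n) K := fun k =>
    (∏ i, X i ^ (d i * a k i)) - ∏ i, (X i : MvPolynomial (Fin n) K) ^ (d i * b k i) with hG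
  set L : Ideal (MvPolynomial (Fin n) K) := Ideal.span (Set.range G) with hLdef
  set g : Fin m → MvPolynomial (Fin n) K := fun k =>
    (∏ i, X i ^ a k i) - ∏ i, (X i : MvPolynomial (Fin n) K) ^ b k i with hg
  -- monomial as product
  have hmon : ∀ s : Fin n →₀ ℕ,
      (monomial s (1 : K) : MvPolynomial (Fin n) K) = ∏ i, X i ^ s i := by
    intro s
    rw [monomial_eq, C_1, one_mul, Finsupp.prod_pow]
  -- key power fact
  have hxvd : ∀ (x : Kˣ) (i : Fin n), ((x : K) ^ v i) ^ d i = 1 := by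
    intro x i
    have h1 : orderOf x ∣ orderOf β := orderOf_dvd_of_mem_zpowers (hβ x)
    have h2 : (β : Kˣ) ^ (v i * d i) = 1 := by
      rw [pow_mul, hd i]; exact pow_orderOf_eq_one _
    have h4 : x ^ (v i * d i) = 1 :=
      orderOf_dvd_iff_pow_eq_one.mp (h1.trans (orderOf_dvd_of_pow_eq_one h2))
    rw [← pow_mul, ← Units.val_pow_eq_pow_val, h4, Units.val_one]
  -- the substitution map
  set σm : MvPolynomial (Fin n) K →ₐ[K] MvPolynomial (Fin n) K :=
    aeval (fun i => (X i : MvPolynomial (Fin n) K) ^ d i) with hσm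
  have hσprod : ∀ c : Fin n → ℕ, σm (∏ i, X i ^ c i) = ∏ i, X i ^ (d i * c i) := by
    intro c
    rw [map_prod]
    refine Finset.prod_congr rfl fun i _ => ?_
    rw [map_pow, hσm, aeval_X, ← pow_mul]
  have hσg : ∀ k, σm (g k) = G k := by
    intro k
    rw [hg, hG, map_sub, hσprod, hσprod]
  have hσP : ∀ p ∈ P, σm p ∈ L := by
    intro p hp
    rw [hgen] at hp
    have h1 : σm p ∈ Ideal.map σm.toRingHom (Ideal.span (Set.range g)) :=
      Ideal.mem_map_of_mem _ hp
    rw [Ideal.map_span] at h1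
    have h2 : (⇑σm.toRingHom) '' Set.range g = Set.range G := by
      rw [← Set.range_comp]
      refine congrArg Set.range (funext fun k => ?_)
      rw [Function.comp_apply, AlgHom.toRingHom_eq_coe, RingHom.coe_coe]
      exact hσg k
    rwa [h2] at h1
  -- membership in P for equal weighted degrees
  have hker : ∀ s t : Fin n → ℕ, (∑ i, d i * s i) = (∑ i, d i * t i) →
      ((∏ i, X i ^ s i) - ∏ i, (X i : MvPolynomial (Fin n) K) ^ t i) ∈ P := by
    intro s t hsum
    rw [hP, RingHom.mem_ker, map_sub]
    have hh : ∀ c : Fin n → ℕ,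
        aeval (fun i : Fin n => (Polynomial.X : Polynomial K) ^ d i)
          (∏ i, (X i : MvPolynomial (Fin n) K) ^ c i)
        = Polynomial.X ^ (∑ i, d i * c i) := by
      intro c
      rw [map_prod, ← Finset.prod_pow_eq_pow_sum]
      refine Finset.prod_congr rfl fun i _ => ?_
      rw [map_pow, aeval_X, ← pow_mul]
    rw [hh, hh, hsum, sub_self]
  -- the generators of P have balanced weighted degree
  have hdeg : ∀ k, (∑ i, d i * a k i) = (∑ i, d i * b k i) := by
    intro k
    have hk : g k ∈ P := hgen ▸ Ideal.subset_span ⟨k, rfl⟩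
    rw [hP, RingHom.mem_ker, hg, map_sub, sub_eq_zero] at hk
    have hh : ∀ c : Fin n → ℕ,
        aeval (fun i : Fin n => (Polynomial.X : Polynomial K) ^ d i)
          (∏ i, (X i : MvPolynomial (Fin n) K) ^ c i)
        = Polynomial.X ^ (∑ i, d i * c i) := by
      intro c
      rw [map_prod, ← Finset.prod_pow_eq_pow_sum]
      refine Finset.prod_congr rfl fun i _ => ?_
      rw [map_pow, aeval_X, ← pow_mul]
    rw [hh, hh] at hk
    have := congrArg Polynomial.natDegree hk
    simpa [Polynomial.natDegree_X_pow] using this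
  -- binomial lemma
  have hbin : ∀ s t : Fin n →₀ ℕ, (∀ i, s i ≡ t i [MOD d i]) → (∑ i, s i) = (∑ i, t i) →
      (monomial s 1 - monomial t 1 : MvPolynomial (Fin n) K) ∈ L := by
    intro s t hmod hsum
    set qa : Fin n → ℕ := fun i => s i / d i with hqa
    set qb : Fin n → ℕ := fun i => t i / d i with hqb
    set r : Fin n → ℕ := fun i => s i % d i with hr
    have hαi : ∀ i, s i = d i * qa i + r i := fun i => (Nat.div_add_mod (s i) (d i)).symm
    have hβi : ∀ i, t i = d i * qb i + r i := by
      intro i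
      have h1 : d i * (t i / d i) + t i % d i = t i := Nat.div_add_mod (t i) (d i)
      rw [hqb, hr]
      rw [← h1]
      congr 1
      exact (hmod i).symm
    have hsum2 : (∑ i, d i * qa i) = ∑ i, d i * qb i := by
      have h1 : (∑ i, (d i * qa i + r i)) = ∑ i, (d i * qb i + r i) := by
        simp_rw [← hαi, ← hβi]; exact hsum
      rw [Finset.sum_add_distrib, Finset.sum_add_distrib] at h1
      exact Nat.add_right_cancel h1
    have hp : ((∏ i, X i ^ qa i) - ∏ i, (X i : MvPolynomial (Fin n) K) ^ qb i) ∈ P :=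
      hker _ _ hsum2
    have hσ : σm ((∏ i, X i ^ qa i) - ∏ i, (X i : MvPolynomial (Fin n) K) ^ qb i) ∈ L :=
      hσP _ hp
    rw [map_sub, hσprod, hσprod] at hσ
    have key : (monomial s 1 - monomial t 1 : MvPolynomial (Fin n) K)
        = (∏ i, X i ^ r i) *
          ((∏ i, X i ^ (d i * qa i)) - ∏ i, (X i : MvPolynomial (Fin n) K) ^ (d i * qb i)) := by
      rw [hmon, hmon, mul_sub, ← Finset.prod_mul_distrib, ← Finset.prod_mul_distrib]
      congr 1 <;>
      · refine Finset.prod_congr rfl fun i _ => ?_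
        rw [← pow_add]
        congr 1
        first
          | (rw [hαi i]; ring)
          | (rw [hβi i]; ring)
    rw [key]
    exact Ideal.mul_mem_left _ _ hσ
  -- characters
  set χ : (Fin n →₀ ℕ) → ((Fin n → Kˣ) →* K) := fun s =>
    (Units.coeHom K).comp (MonoidHom.mk' (fun z => ∏ i, (z i) ^ (v i * s i))
      (by intro z w; simp [mul_pow, Finset.prod_mul_distrib])) with hχ
  have χval : ∀ s z, χ s z = ∏ i, ((z i : K)) ^ (v i * s i) := by
    intro s z
    simp [hχ]
  have hcong : ∀ s t : Fin n →₀ ℕ, χ s = χ t → ∀ i, s i ≡ t i [MOD d i] := by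
    intro s t h i
    have hz : χ s (Function.update (fun _ => (1 : Kˣ)) i β)
        = χ t (Function.update (fun _ => (1 : Kˣ)) i β) := by rw [h]
    rw [χval, χval] at hz
    have hcalc : ∀ c : Fin n →₀ ℕ,
        (∏ j, ((Function.update (fun _ => (1 : Kˣ)) i β j : K)) ^ (v j * c j))
          = (β : K) ^ (v i * c i) := by
      intro c
      rw [Finset.prod_eq_single i]
      · rw [Function.update_self]
      · intro j _ hji
        rw [Function.update_of_ne hji]
        simp
      · simp
    rw [hcalc, hcalc] at hz
    rw [← Units.val_pow_eq_pow_val, ← Units.val_pow_eq_pow_val] at hz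
    have hu : β ^ (v i * s i) = β ^ (v i * t i) := Units.ext hz
    rw [pow_mul, pow_mul] at hu
    have := pow_eq_pow_iff_modEq.mp hu
    rwa [hd i]
  -- evaluation formula
  have heval : ∀ (f0 : MvPolynomial (Fin n) K) (x : Fin n → Kˣ),
      eval (fun i => ((x i : K)) ^ v i) f0 = ∑ s ∈ f0.support, coeff s f0 * χ s x := by
    intro f0 x
    rw [eval_eq']
    refine Finset.sum_congr rfl fun s _ => ?_
    rw [χval]
    congr 1
    refine Finset.prod_congr rfl fun i _ => ?_
    rw [pow_mul]
  rw [hIX]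
  apply le_antisymm
  · -- hard direction
    rw [Ideal.span_le]
    rintro f ⟨⟨e, hfe⟩, hvan⟩
    show f ∈ L
    have hdegf : ∀ s ∈ f.support, (∑ i, s i) = e := by
      intro s hs
      have h1 := hfe (mem_support_iff.mp hs)
      rw [← h1, Finsupp.weight_apply, Finsupp.sum_fintype]
      · simp
      · simp
    set l : ((Fin n → Kˣ) →* K) →₀ K := ∑ s ∈ f.support, Finsupp.single (χ s) (coeff s f)
      with hl
    have hl0 : l = 0 := by
      apply linearIndependent_iff.mp (linearIndependent_monoidHom (Fin n → Kˣ) K)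
      rw [hl, map_sum]
      funext x
      simp only [Finsupp.linearCombination_single, Finset.sum_apply, Pi.smul_apply,
        smul_eq_mul, Pi.zero_apply]
      rw [← heval f x, hvan x]
    have hfiber : ∀ γ : (Fin n → Kˣ) →* K,
        (∑ s ∈ f.support.filter (fun s => χ s = γ), coeff s f) = 0 := by
      intro γ
      have h := DFunLike.congr_fun hl0 γ
      rw [hl, Finsupp.finset_sum_apply] at h
      simp only [Finsupp.single_apply, Finsupp.coe_zero, Pi.zero_apply] at h
      rw [Finset.sum_filter]
      exact h
    set rep : ((Fin n → Kˣ) →* K) → (Fin n →₀ ℕ) := fun γ =>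
      if h : (f.support.filter (fun s => χ s = γ)).Nonempty then h.choose else 0 with hrepdef
    have hrep : ∀ s ∈ f.support, rep (χ s) ∈ f.support ∧ χ (rep (χ s)) = χ s := by
      intro s hs
      have hne : (f.support.filter (fun t => χ t = χ s)).Nonempty :=
        ⟨s, Finset.mem_filter.mpr ⟨hs, rfl⟩⟩
      have hmem := hne.choose_spec
      have hre : rep (χ s) = hne.choose := dif_pos hne
      rw [hre]
      exact ⟨(Finset.mem_filter.mp hmem).1, (Finset.mem_filter.mp hmem).2⟩
    have hdecomp : f = (∑ s ∈ f.support, coeff s f • (monomial s 1 - monomial (rep (χ s)) 1))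
        + ∑ s ∈ f.support, coeff s f • (monomial (rep (χ s)) (1 : K)) := by
      rw [← Finset.sum_add_distrib]
      conv_lhs => rw [as_sum f]
      refine Finset.sum_congr rfl fun s _ => ?_
      rw [smul_sub, sub_add_cancel, smul_monomial, smul_eq_mul, mul_one]
    have hz : (∑ s ∈ f.support, coeff s f • (monomial (rep (χ s)) (1 : K))) = 0 := by
      rw [← Finset.sum_fiberwise_of_maps_to (fun s hs => Finset.mem_image_of_mem χ hs)
        (fun s => coeff s f • (monomial (rep (χ s)) (1 : K)))]
      refine Finset.sum_eq_zero fun γ _ => ?_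
      have hcg : ∀ s ∈ f.support.filter (fun s => χ s = γ),
          coeff s f • (monomial (rep (χ s)) (1 : K)) = coeff s f • (monomial (rep γ) (1 : K)) := by
        intro s hs
        rw [(Finset.mem_filter.mp hs).2]
      rw [Finset.sum_congr rfl hcg, ← Finset.sum_smul, hfiber γ, zero_smul]
    rw [hdecomp, hz, add_zero]
    refine Ideal.sum_mem _ fun s hs => ?_
    rw [smul_eq_C_mul]
    refine Ideal.mul_mem_left _ _ ?_
    refine hbin s (rep (χ s)) (fun i => ((hcong _ _ (hrep s hs).2 i)).symm) ?_
    rw [hdegf s hs, hdegf _ (hrep s hs).1]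
  · -- easy direction
    rw [Ideal.span_le]
    rintro _ ⟨k, rfl⟩
    apply Ideal.subset_span
    constructor
    · refine ⟨∑ i, d i * a k i, ?_⟩
      have h1 : ∀ c : Fin n → ℕ,
          ((∏ i, X i ^ (d i * c i)) : MvPolynomial (Fin n) K).IsHomogeneous (∑ i, d i * c i) := by
        intro c
        refine IsHomogeneous.prod _ _ _ fun i _ => ?_
        simpa using (isHomogeneous_X K i).pow (d i * c i)
      exact (h1 (a k)).sub (by rw [hdeg k]; exact h1 (b k))
    · intro x
      have h1 : ∀ c : Fin n → ℕ,
          eval (fun i => ((x i : K)) ^ v i) (∏ i, (X i : MvPolynomial (Fin n) K) ^ (d i * c i))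
            = 1 := by
        intro c
        rw [map_prod]
        refine Finset.prod_eq_one fun i _ => ?_
        rw [map_pow, eval_X, pow_mul, hxvd, one_pow]
      rw [map_sub, h1, h1, sub_self]
end
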